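/- arXiv:1602.03366 — 8 statements merged into one kernel-verified Lean document; each statement's English description precedes it below -/
import Mathlib

section
/- Let {a₁, a₂, …, a_k} ⊂ ℝ be a finite set of real numbers. Then there exist infinitely many n ∈ ℕ such that H_{4n}(a_j) > 0 for every 1 ≤ j ≤ k. -/
open Real

/-- The physicists' Hermite polynomial `H_n`, given by
`H_n(x) = 2^{n/2} He_n(√2 x)` where `He_n` is the probabilists' Hermite polynomial. -/
noncomputable def physHermite (n : ℕ) (x : ℝ) : ℝ :=
  (2 : ℝ) ^ ((n : ℝ) / 2) * Polynomial.aeval (Real.sqrt 2 * x) (Polynomial.hermite n)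

open Polynomial Real

theorem hermite_ode' : ∀ n : ℕ, derivative (derivative (hermite n)) =
    X * derivative (hermite n) - C (n : ℤ) * hermite n := by
  intro n
  induction n with
  | zero => simp [hermite_zero]
  | succ n ih =>
    have hd : derivative (hermite (n+1)) = C ((n:ℤ)+1) * hermite n := by
      rw [hermite_succ, derivative_sub, derivative_mul, derivative_X, ih]
      simp [C_add, C_1]; ring
    rw [hd, derivative_mul, derivative_C, hermite_succ]
    push_cast
    simp [C_add, C_1]; ring

noncomputable section

def Pf (m : ℕ) (t : ℝ) : ℝ := aeval t (hermite m)
def P1f (m : ℕ) (t : ℝ) : ℝ := aeval t (derivative (hermite m))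
def P2f (m : ℕ) (t : ℝ) : ℝ := aeval t (derivative (derivative (hermite m)))
def ωf (m : ℕ) : ℝ := Real.sqrt ((m : ℝ) + 1/2)
def cf (m : ℕ) : ℝ := Pf m 0
def Gf (m : ℕ) (t : ℝ) : ℝ := Real.exp (-(t^2)/4) * Pf m t
def G1f (m : ℕ) (t : ℝ) : ℝ := Real.exp (-(t^2)/4) * (-(t/2) * Pf m t + P1f m t)
def vf (m : ℕ) (t : ℝ) : ℝ := Gf m t - cf m * Real.cos (ωf m * t)
def v1f (m : ℕ) (t : ℝ) : ℝ := G1f m t + cf m * ωf m * Real.sin (ωf m * t)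
def zf (m : ℕ) (t : ℝ) : ℂ :=
  ((v1f m t : ℂ) + ((ωf m : ℂ) * Complex.I) * (vf m t : ℂ)) *
    Complex.exp ((-(ωf m : ℂ) * Complex.I) * (t : ℂ))
def z'f (m : ℕ) (t : ℝ) : ℂ :=
  ((t^2/4 * Gf m t : ℝ) : ℂ) * Complex.exp ((-(ωf m : ℂ) * Complex.I) * (t : ℂ))

variable {m : ℕ}

theorem omega_pos : 0 < ωf m := Real.sqrt_pos.2 (by positivity)

theorem omega_sq : (ωf m)^2 = (m : ℝ) + 1/2 := Real.sq_sqrt (by positivity)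

theorem Pf_hasDeriv (t : ℝ) : HasDerivAt (Pf m) (P1f m t) t :=
  Polynomial.hasDerivAt_aeval _ t

theorem P1f_hasDeriv (t : ℝ) : HasDerivAt (P1f m) (P2f m t) t :=
  Polynomial.hasDerivAt_aeval _ t

theorem Pf_ode (t : ℝ) : P2f m t = t * P1f m t - (m : ℝ) * Pf m t := by
  unfold P2f P1f Pf
  rw [hermite_ode' m]
  simp

theorem exp_hasDeriv (t : ℝ) :
    HasDerivAt (fun s : ℝ => Real.exp (-(s^2)/4)) (-(t/2) * Real.exp (-(t^2)/4)) t := by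
  have h1 : HasDerivAt (fun s : ℝ => -(s^2)/4) (-(t/2)) t := by
    have := ((hasDerivAt_pow 2 t).neg).div_const 4
    refine this.congr_deriv ?_
    push_cast; ring
  have := h1.exp
  convert this using 1
  ring

theorem Gf_hasDeriv (t : ℝ) : HasDerivAt (Gf m) (G1f m t) t := by
  have := (exp_hasDeriv t).mul (Pf_hasDeriv (m := m) t)
  refine this.congr_deriv ?_
  unfold G1f; ring

theorem G1f_hasDeriv (t : ℝ) :
    HasDerivAt (G1f m) ((t^2/4 - ((m:ℝ) + 1/2)) * Gf m t) t := by
  have hq : HasDerivAt (fun s : ℝ => -(s/2) * Pf m s + P1f m s)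
      (-(1/2) * Pf m t + -(t/2) * P1f m t + P2f m t) t := by
    have h1 : HasDerivAt (fun s : ℝ => -(s/2)) (-(1/2) : ℝ) t := by
      exact ((hasDerivAt_id t).div_const 2).neg
    exact (h1.mul (Pf_hasDeriv t)).add (P1f_hasDeriv t)
  have := (exp_hasDeriv t).mul hq
  refine this.congr_deriv ?_
  unfold Gf
  rw [Pf_ode t]
  ring

theorem vf_hasDeriv (t : ℝ) : HasDerivAt (vf m) (v1f m t) t := by
  have hcosd : HasDerivAt (fun s : ℝ => Real.cos (ωf m * s)) (-Real.sin (ωf m * t) * ωf m) t := by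
    have h1 : HasDerivAt (fun s : ℝ => ωf m * s) (ωf m) t := by
      simpa using (hasDerivAt_id t).const_mul (ωf m)
    exact h1.cos
  have := (Gf_hasDeriv (m := m) t).sub (hcosd.const_mul (cf m))
  refine this.congr_deriv ?_
  unfold v1f; ring

theorem v1f_hasDeriv (t : ℝ) :
    HasDerivAt (v1f m) (-((m:ℝ) + 1/2) * vf m t + t^2/4 * Gf m t) t := by
  have hsind : HasDerivAt (fun s : ℝ => Real.sin (ωf m * s)) (Real.cos (ωf m * t) * ωf m) t := by
    have h1 : HasDerivAt (fun s : ℝ => ωf m * s) (ωf m) t := by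
      simpa using (hasDerivAt_id t).const_mul (ωf m)
    exact h1.sin
  have := (G1f_hasDeriv (m := m) t).add (hsind.const_mul (cf m * ωf m))
  refine this.congr_deriv ?_
  unfold vf
  have h2 : cf m * ωf m * (Real.cos (ωf m * t) * ωf m)
      = ((m:ℝ) + 1/2) * (cf m * Real.cos (ωf m * t)) := by
    rw [← omega_sq (m := m)]; ring
  rw [h2]; ring

theorem zf_hasDeriv (t : ℝ) : HasDerivAt (zf m) (z'f m t) t := by
  have hf : HasDerivAt (fun s : ℝ => ((v1f m s : ℂ) + ((ωf m : ℂ) * Complex.I) * (vf m s : ℂ)))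
      (((-((m:ℝ) + 1/2) * vf m t + t^2/4 * Gf m t : ℝ) : ℂ)
        + ((ωf m : ℂ) * Complex.I) * ((v1f m t : ℝ) : ℂ)) t :=
    (v1f_hasDeriv (m := m) t).ofReal_comp.add (((vf_hasDeriv t).ofReal_comp).const_mul _)
  have hc0 : HasDerivAt (fun s : ℝ => Complex.exp ((-(ωf m : ℂ) * Complex.I) * (s : ℂ)))
      ((-(ωf m : ℂ) * Complex.I) * Complex.exp ((-(ωf m : ℂ) * Complex.I) * (t : ℂ))) t := by
    have h1 : HasDerivAt (fun s : ℝ => ((-(ωf m : ℂ) * Complex.I) * (s : ℂ)))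
        (-(ωf m : ℂ) * Complex.I) t := by
      simpa using ((hasDerivAt_id t).ofReal_comp).const_mul (-(ωf m : ℂ) * Complex.I)
    have := h1.cexp
    convert this using 1
    ring
  have := hf.mul hc0
  refine this.congr_deriv ?_
  unfold z'f
  symm
  have hωc : ((ωf m : ℂ))^2 = (((m:ℝ) + 1/2 : ℝ) : ℂ) := by
    rw [← Complex.ofReal_pow, omega_sq]
  have hI : (Complex.I : ℂ) * Complex.I = -1 := Complex.I_mul_I
  linear_combination (norm := (push_cast; ring1))
    (-((vf m t : ℂ) * Complex.exp ((-(ωf m : ℂ) * Complex.I) * (t : ℂ)))) * hωc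
    + ((vf m t : ℂ) * Complex.exp ((-(ωf m : ℂ) * Complex.I) * (t : ℂ))) * ((ωf m : ℂ))^2 * hI


theorem aeval_zero_int (p : Polynomial ℤ) : (aeval (0:ℝ) p) = ((p.coeff 0 : ℤ) : ℝ) := by
  rw [aeval_def, eval₂_eq_eval_map, ← Polynomial.coeff_zero_eq_eval_zero, Polynomial.coeff_map]
  simp

theorem cf_pos {n : ℕ} : 0 < cf (4*n) := by
  unfold cf Pf
  rw [aeval_zero_int]
  have h4 : 4*n = 2*(2*n) + 0 := by ring
  rw [h4, Polynomial.coeff_hermite_explicit (2*n) 0]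
  push_cast
  simp [pow_mul]
  positivity

theorem P1f_zero {n : ℕ} : P1f (4*n) 0 = 0 := by
  unfold P1f
  rw [aeval_zero_int, Polynomial.coeff_derivative]
  have : (hermite (4*n)).coeff 1 = 0 :=
    Polynomial.coeff_hermite_of_odd_add ⟨2*n, by ring⟩
  simp [this]

theorem Gf_zero : Gf m 0 = cf m := by simp [Gf, cf]

theorem vf_zero : vf m 0 = 0 := by simp [vf, Gf_zero]

theorem v1f_zero {n : ℕ} : v1f (4*n) 0 = 0 := by simp [v1f, G1f, P1f_zero]

theorem zf_zero {n : ℕ} : zf (4*n) 0 = 0 := by simp [zf, vf_zero, v1f_zero]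

theorem norm_exp_unit (t : ℝ) : ‖Complex.exp ((-(ωf m : ℂ) * Complex.I) * (t : ℂ))‖ = 1 := by
  rw [Complex.norm_exp]
  simp

theorem vf_le_norm_zf (t : ℝ) : ωf m * |vf m t| ≤ ‖zf m t‖ := by
  have h1 : ‖zf m t‖ = ‖(v1f m t : ℂ) + ((ωf m : ℂ) * Complex.I) * (vf m t : ℂ)‖ := by
    rw [zf, norm_mul, norm_exp_unit, mul_one]
  have h2 : |((v1f m t : ℂ) + ((ωf m : ℂ) * Complex.I) * (vf m t : ℂ)).im|
      ≤ ‖(v1f m t : ℂ) + ((ωf m : ℂ) * Complex.I) * (vf m t : ℂ)‖ :=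
    Complex.abs_im_le_norm _
  have h3 : ((v1f m t : ℂ) + ((ωf m : ℂ) * Complex.I) * (vf m t : ℂ)).im
      = ωf m * vf m t := by simp
  rw [h1]
  calc ωf m * |vf m t| = |ωf m * vf m t| := by
        rw [abs_mul, abs_of_pos (show (0:ℝ) < ωf m from Real.sqrt_pos.2 (by positivity))]
      _ ≤ _ := by rw [← h3]; exact h2

set_option maxHeartbeats 1000000 in
theorem hermite_core (n : ℕ) (Y y : ℝ) (hY : 1 ≤ Y) (hy0 : 0 ≤ y) (hyY : y ≤ Y)
    (hsmall : Y^3 ≤ 4 * ωf (4*n) * Real.log (9/8))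
    (hcos : 1/2 ≤ Real.cos (ωf (4*n) * y)) :
    0 < Pf (4*n) y := by
  set m := 4*n with hm
  have hω : 0 < ωf m := omega_pos
  have hc : 0 < cf m := cf_pos (n := n)
  set K : ℝ := Y^2/(4*ωf m) with hK
  have hKpos : 0 < K := by positivity
  set eps : ℝ := Y^2 * cf m / 4 with heps
  have hgron : ∀ t ∈ Set.Icc (0:ℝ) Y, ‖zf m t‖ ≤ gronwallBound 0 K eps (t - 0) := by
    apply norm_le_gronwallBound_of_norm_deriv_right_le
    · exact fun t _ => (zf_hasDeriv t).continuousAt.continuousWithinAt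
    · exact fun t _ => (zf_hasDeriv t).hasDerivWithinAt
    · rw [zf_zero]; simp
    · intro t ht
      have ht0 : 0 ≤ t := ht.1
      have htY : t ≤ Y := ht.2.le
      have h1 : ‖z'f m t‖ = |t^2/4 * Gf m t| := by
        rw [z'f, norm_mul, norm_exp_unit, mul_one, Complex.norm_real, Real.norm_eq_abs]
      have h2 : |Gf m t| ≤ |vf m t| + cf m := by
        have : Gf m t = vf m t + cf m * Real.cos (ωf m * t) := by rw [vf]; ring
        rw [this]
        calc |vf m t + cf m * Real.cos (ωf m * t)|
            ≤ |vf m t| + |cf m * Real.cos (ωf m * t)| := abs_add_le _ _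
          _ ≤ |vf m t| + cf m := by
              have := abs_cos_le_one (ωf m * t)
              rw [abs_mul, abs_of_pos hc]
              nlinarith [abs_nonneg (vf m t)]
      have h3 : ωf m * |vf m t| ≤ ‖zf m t‖ := vf_le_norm_zf t
      have ht2 : t^2 ≤ Y^2 := by nlinarith
      rw [h1, abs_mul]
      have h4 : |t^2/4| = t^2/4 := abs_of_nonneg (by positivity)
      rw [h4]
      have h5 : |vf m t| ≤ ‖zf m t‖ / ωf m := by
        rw [le_div_iff₀ hω]; nlinarith
      calc t^2/4 * |Gf m t| ≤ t^2/4 * (|vf m t| + cf m) := by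
            apply mul_le_mul_of_nonneg_left h2 (by positivity)
        _ ≤ Y^2/4 * (‖zf m t‖ / ωf m + cf m) := by
            apply mul_le_mul (by nlinarith) (by nlinarith) (by positivity) (by positivity)
        _ = K * ‖zf m t‖ + eps := by
            rw [hK, heps]; field_simp
  have hzy : ‖zf m y‖ ≤ cf m * ωf m / 8 := by
    have := hgron y ⟨hy0, hyY⟩
    rw [sub_zero, gronwallBound_of_K_ne_0 hKpos.ne'] at this
    have hek : Real.exp (K * y) ≤ 9/8 := by
      have hky : K * y ≤ Real.log (9/8) := by
        have h6 : K * y ≤ K * Y := by nlinarith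
        have h7 : K * Y ≤ Real.log (9/8) := by
          rw [hK]
          rw [div_mul_eq_mul_div, div_le_iff₀ (by positivity)]
          calc Y^2 * Y = Y^3 := by ring
            _ ≤ 4 * ωf m * Real.log (9/8) := hsmall
            _ = Real.log (9/8) * (4 * ωf m) := by ring
        linarith
      calc Real.exp (K * y) ≤ Real.exp (Real.log (9/8)) := Real.exp_le_exp.2 hky
        _ = 9/8 := Real.exp_log (by norm_num)
    have hepsK : eps / K = cf m * ωf m := by
      rw [heps, hK]; field_simp
    rw [hepsK] at this
    calc ‖zf m y‖ ≤ 0 * Real.exp (K * y) + cf m * ωf m * (Real.exp (K * y) - 1) := this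
      _ ≤ cf m * ωf m / 8 := by nlinarith [mul_pos hc hω]
  have hvy : |vf m y| ≤ cf m / 8 := by
    have h3 := vf_le_norm_zf (m := m) y
    have h4 : ωf m * |vf m y| ≤ ωf m * (cf m / 8) := by nlinarith
    exact le_of_mul_le_mul_left h4 hω
  have hGy : 0 < Gf m y := by
    have : Gf m y = vf m y + cf m * Real.cos (ωf m * y) := by rw [vf]; ring
    rw [this]
    have habs := abs_le.1 hvy
    nlinarith
  have hE := Real.exp_pos (-(y^2)/4)
  rw [Gf] at hGy
  nlinarith


theorem hermite_comp_neg : ∀ n : ℕ, (hermite n).comp (-X) = (-1)^n * hermite n := by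
  intro n
  induction n with
  | zero => simp [hermite_zero]
  | succ n ih =>
    have hdc : (derivative (hermite n)).comp (-X) = - derivative ((hermite n).comp (-X)) := by
      rw [derivative_comp]; simp
    rw [hermite_succ, sub_comp, mul_comp, X_comp, ih, hdc, ih, derivative_mul]
    have h1 : ((-1 : ℤ[X])^n) = C ((-1)^n) := by rw [map_pow, map_neg, map_one]
    rw [h1, derivative_C, ← h1]
    simp [pow_succ]
    ring

theorem aeval_hermite_neg (n : ℕ) (t : ℝ) :
    (aeval (-t) (hermite (4*n)) : ℝ) = aeval t (hermite (4*n)) := by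
  have h1 : (aeval (-t) (hermite (4*n)) : ℝ) = aeval t ((hermite (4*n)).comp (-X)) := by
    rw [aeval_comp]; simp
  rw [h1, hermite_comp_neg]
  have h2 : ((-1 : ℤ[X])^(4*n)) = 1 := by
    rw [show (4*n) = 2*(2*n) by ring, pow_mul]; simp
  rw [h2, one_mul]


theorem cos_ge_half {x : ℝ} (p : ℤ) (h : |x - 2*π*p| ≤ π/3) : 1/2 ≤ Real.cos x := by
  have hper := Real.cos_add_int_mul_two_pi (x - 2*π*p) p
  have hxe : x - 2*π*p + p*(2*π) = x := by push_cast; ring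
  rw [hxe] at hper
  rw [hper, ← Real.cos_abs]
  have h1 : cos (π/3) ≤ cos |x - 2*π*p| := by
    apply Real.cos_le_cos_of_nonneg_of_le_pi (abs_nonneg _)
    · linarith [Real.pi_pos]
    · exact h
  rw [Real.cos_pi_div_three] at h1
  exact h1

theorem simul_approx (k : ℕ) (b : Fin k → ℝ) {ε : ℝ} (hε : 0 < ε) (Q : ℕ) :
    ∃ q : ℕ, Q ≤ q ∧ 1 ≤ q ∧ ∀ j, ∃ p : ℤ, |(q : ℝ) * b j - 2*π*p| ≤ ε := by
  set N : ℕ := ⌈(2*π)/ε⌉₊ + 1 with hN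
  have hNpos : 0 < N := Nat.succ_pos _
  have hNR : (0:ℝ) < (N:ℝ) := by exact_mod_cast hNpos
  have hNε : (2*π)/(N:ℝ) ≤ ε := by
    rw [div_le_iff₀ hNR]
    have h1 : (2*π)/ε ≤ (N:ℝ) := by
      calc (2*π)/ε ≤ (⌈(2*π)/ε⌉₊ : ℝ) := Nat.le_ceil _
        _ ≤ (N:ℝ) := by rw [hN]; push_cast; linarith
    calc 2*π = ((2*π)/ε) * ε := by field_simp
      _ ≤ (N:ℝ) * ε := mul_le_mul_of_nonneg_right h1 hε.le
      _ = ε * N := by ring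
  set θ : Fin k → ℝ := fun j => b j / (2*π) with hθ
  have hfb : ∀ (q : ℕ) (j : Fin k), (⌊Int.fract ((q:ℝ) * θ j) * N⌋).toNat < N := by
    intro q j
    have h0 : (0:ℝ) ≤ Int.fract ((q:ℝ) * θ j) := Int.fract_nonneg _
    have h1 : Int.fract ((q:ℝ) * θ j) < 1 := Int.fract_lt_one _
    have h2 : ⌊Int.fract ((q:ℝ) * θ j) * N⌋ < (N:ℤ) := by
      apply Int.floor_lt.2
      push_cast
      nlinarith
    omega
  obtain ⟨val, hval⟩ := Finite.exists_infinite_fiber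
    (fun (q : ℕ) (j : Fin k) => (⟨(⌊Int.fract ((q:ℝ) * θ j) * N⌋).toNat, hfb q j⟩ : Fin N))
  have hS := Set.infinite_coe_iff.1 hval
  obtain ⟨q1, hq1S⟩ := hS.nonempty
  obtain ⟨q2, hq2S, hq2gt⟩ := hS.exists_gt (q1 + Q + 1)
  refine ⟨q2 - q1, by omega, by omega, ?_⟩
  intro j
  have e1 := hq1S; have e2 := hq2S
  simp only [Set.mem_preimage, Set.mem_singleton_iff] at e1 e2
  have h1 : ((⌊Int.fract ((q1:ℝ) * θ j) * N⌋).toNat) = ((⌊Int.fract ((q2:ℝ) * θ j) * N⌋).toNat) :=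
    congrArg Fin.val (congrFun (e1.trans e2.symm) j)
  have hnn1 : (0:ℤ) ≤ ⌊Int.fract ((q1:ℝ) * θ j) * N⌋ :=
    Int.floor_nonneg.2 (mul_nonneg (Int.fract_nonneg _) hNR.le)
  have hnn2 : (0:ℤ) ≤ ⌊Int.fract ((q2:ℝ) * θ j) * N⌋ :=
    Int.floor_nonneg.2 (mul_nonneg (Int.fract_nonneg _) hNR.le)
  have hfe : ⌊Int.fract ((q1:ℝ) * θ j) * N⌋ = ⌊Int.fract ((q2:ℝ) * θ j) * N⌋ := by omega
  have f1 : (⌊Int.fract ((q1:ℝ) * θ j) * N⌋ : ℝ) ≤ Int.fract ((q1:ℝ) * θ j) * N := Int.floor_le _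
  have f2 : Int.fract ((q1:ℝ) * θ j) * N < ⌊Int.fract ((q1:ℝ) * θ j) * N⌋ + 1 :=
    Int.lt_floor_add_one _
  have f3 : (⌊Int.fract ((q2:ℝ) * θ j) * N⌋ : ℝ) ≤ Int.fract ((q2:ℝ) * θ j) * N := Int.floor_le _
  have f4 : Int.fract ((q2:ℝ) * θ j) * N < ⌊Int.fract ((q2:ℝ) * θ j) * N⌋ + 1 :=
    Int.lt_floor_add_one _
  rw [hfe] at f1 f2
  have key : |Int.fract ((q2:ℝ) * θ j) - Int.fract ((q1:ℝ) * θ j)| < 1/(N:ℝ) := by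
    rw [abs_lt]
    constructor
    · rw [neg_lt, neg_sub, lt_div_iff₀ hNR]; nlinarith
    · rw [lt_div_iff₀ hNR]; nlinarith
  -- assemble p
  refine ⟨⌊(q2:ℝ) * θ j⌋ - ⌊(q1:ℝ) * θ j⌋, ?_⟩
  have hcast : ((q2 - q1 : ℕ) : ℝ) = (q2:ℝ) - (q1:ℝ) := by
    have : q1 ≤ q2 := by omega
    push_cast [this]; ring
  have hsplit : ((q2 - q1 : ℕ) : ℝ) * θ j - ((⌊(q2:ℝ) * θ j⌋ - ⌊(q1:ℝ) * θ j⌋ : ℤ) : ℝ)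
      = Int.fract ((q2:ℝ) * θ j) - Int.fract ((q1:ℝ) * θ j) := by
    rw [hcast]
    unfold Int.fract
    push_cast
    ring
  have hbθ : b j = θ j * (2*π) := by
    rw [hθ]
    field_simp
  have h2π : (0:ℝ) < 2*π := by positivity
  rw [hbθ]
  have : (((q2 - q1:ℕ)):ℝ) * (θ j * (2*π)) - 2*π*((⌊(q2:ℝ) * θ j⌋ - ⌊(q1:ℝ) * θ j⌋ : ℤ) : ℝ)
      = (((q2 - q1:ℕ):ℝ) * θ j - ((⌊(q2:ℝ) * θ j⌋ - ⌊(q1:ℝ) * θ j⌋ : ℤ) : ℝ)) * (2*π) := by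
    ring
  rw [this, abs_mul, abs_of_pos h2π, hsplit]
  calc |Int.fract ((q2:ℝ) * θ j) - Int.fract ((q1:ℝ) * θ j)| * (2*π)
      ≤ (1/(N:ℝ)) * (2*π) := mul_le_mul_of_nonneg_right key.le h2π.le
    _ = (2*π)/(N:ℝ) := by ring
    _ ≤ ε := hNε

end

open Real

set_option maxHeartbeats 1000000 in
theorem stmt4 (k : ℕ) (a : Fin k → ℝ) :
    {n : ℕ | ∀ j : Fin k, 0 < physHermite (4 * n) (a j)}.Infinite := by
  apply Set.infinite_of_forall_exists_gt
  intro M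
  set b : Fin k → ℝ := fun j => Real.sqrt 2 * |a j| with hb
  have hbnn : ∀ j, 0 ≤ b j := fun j => by rw [hb]; positivity
  set B : ℝ := 1 + ∑ j, b j with hB
  have hB1 : 1 ≤ B := by
    have : 0 ≤ ∑ j, b j := Finset.sum_nonneg fun j _ => hbnn j
    linarith
  have hbB : ∀ j, b j ≤ B := by
    intro j
    have := Finset.single_le_sum (f := b) (fun i _ => hbnn i) (Finset.mem_univ j)
    linarith
  have hL : 0 < Real.log (9/8) := Real.log_pos (by norm_num)
  set ρ : ℝ := π/(6*B) with hρdef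
  have hπ : 0 < π := Real.pi_pos
  have hρ : 0 < ρ := by rw [hρdef]; positivity
  have hρ1 : ρ ≤ 1 := by
    rw [hρdef, div_le_one (by positivity)]
    nlinarith [Real.pi_le_four]
  set W : ℝ := B^3/(4*Real.log (9/8)) with hW
  have hW0 : 0 ≤ W := by rw [hW]; positivity
  obtain ⟨q, hqQ, hq1, hq⟩ := simul_approx k b (ε := π/6) (by positivity)
    (⌈(9:ℝ)/ρ⌉₊ + ⌈W⌉₊ + 4*M + 13)
  have hq9 : (9:ℝ)/ρ ≤ q := by
    have h1 : ⌈(9:ℝ)/ρ⌉₊ ≤ q := by omega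
    calc (9:ℝ)/ρ ≤ (⌈(9:ℝ)/ρ⌉₊:ℝ) := Nat.le_ceil _
      _ ≤ q := by exact_mod_cast h1
  have hqW : W + 13 ≤ q := by
    have h1 : ⌈W⌉₊ + 13 ≤ q := by omega
    have h2 : ((⌈W⌉₊:ℕ):ℝ) + 13 ≤ (q:ℝ) := by exact_mod_cast h1
    linarith [Nat.le_ceil W]
  have hqM : 4*M + 13 ≤ q := by omega
  set s : ℕ := q^2 with hs
  have hqs : q ≤ s := by rw [hs]; exact Nat.le_self_pow (by norm_num) q
  have hs1 : 1 ≤ s := le_trans hq1 hqs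
  set n : ℕ := (s - 1)/4 with hn
  have hd1 : 4*n ≤ s - 1 := by omega
  have hd2 : s ≤ 4*n + 4 := by omega
  have hd3 : M + 2 ≤ n := by omega
  have hsr : (s:ℝ) = (q:ℝ)^2 := by rw [hs]; push_cast; ring
  have hcast1 : ((4*n:ℕ):ℝ) ≤ (q:ℝ)^2 - 1 := by
    have h1 : (4*n) + 1 ≤ s := by omega
    have h2 : ((4*n:ℕ):ℝ) + 1 ≤ (s:ℝ) := by exact_mod_cast h1
    linarith [hsr ▸ h2]
  have hcast2 : (q:ℝ)^2 - 4 ≤ ((4*n:ℕ):ℝ) := by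
    have h2 : (s:ℝ) ≤ ((4*n:ℕ):ℝ) + 4 := by exact_mod_cast hd2
    linarith [hsr ▸ h2]
  have hωsq : (ωf (4*n))^2 = ((4*n:ℕ):ℝ) + 1/2 := omega_sq
  have hω0 : 0 < ωf (4*n) := omega_pos
  have hqr1 : (1:ℝ) ≤ (q:ℝ) := by exact_mod_cast hq1
  have hqge9 : (9:ℝ) ≤ q := by nlinarith
  have hup : ωf (4*n) ≤ (q:ℝ) := by
    have h1 : ((4*n:ℕ):ℝ) + 1/2 ≤ (q:ℝ)^2 := by linarith
    calc ωf (4*n) = Real.sqrt (((4*n:ℕ):ℝ) + 1/2) := rfl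
      _ ≤ Real.sqrt ((q:ℝ)^2) := Real.sqrt_le_sqrt h1
      _ = (q:ℝ) := Real.sqrt_sq (by positivity)
  have hρq : ρ ≤ (q:ℝ) := by linarith
  have hqρ9 : (9:ℝ) ≤ (q:ℝ) * ρ := by
    rw [div_le_iff₀ hρ] at hq9; linarith
  have hlow : (q:ℝ) - ρ ≤ ωf (4*n) := by
    have h2 : ((q:ℝ) - ρ)^2 ≤ ((4*n:ℕ):ℝ) + 1/2 := by nlinarith
    calc (q:ℝ) - ρ = Real.sqrt (((q:ℝ) - ρ)^2) := (Real.sqrt_sq (by linarith)).symm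
      _ ≤ Real.sqrt (((4*n:ℕ):ℝ) + 1/2) := Real.sqrt_le_sqrt h2
      _ = ωf (4*n) := rfl
  have hWω : W ≤ ωf (4*n) := by
    have h3 : W^2 ≤ ((4*n:ℕ):ℝ) + 1/2 := by nlinarith
    calc W = Real.sqrt (W^2) := (Real.sqrt_sq hW0).symm
      _ ≤ Real.sqrt (((4*n:ℕ):ℝ) + 1/2) := Real.sqrt_le_sqrt h3
      _ = ωf (4*n) := rfl
  have hsmall : B^3 ≤ 4 * ωf (4*n) * Real.log (9/8) := by
    have h4 : B^3 = W * (4*Real.log (9/8)) := by rw [hW]; field_simp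
    rw [h4]
    calc W * (4*Real.log (9/8)) ≤ ωf (4*n) * (4*Real.log (9/8)) := by nlinarith
      _ = 4 * ωf (4*n) * Real.log (9/8) := by ring
  refine ⟨n, ?_, by omega⟩
  intro j
  obtain ⟨p, hp⟩ := hq j
  have hcosj : 1/2 ≤ Real.cos (ωf (4*n) * b j) := by
    apply cos_ge_half p
    have hd : |ωf (4*n) * b j - (q:ℝ) * b j| ≤ ρ * B := by
      rw [show ωf (4*n) * b j - (q:ℝ)*b j = (ωf (4*n) - q) * b j by ring, abs_mul]
      apply mul_le_mul ?_ ?_ (abs_nonneg _) hρ.le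
      · rw [abs_le]; constructor <;> linarith
      · rw [abs_of_nonneg (hbnn j)]; exact hbB j
    have hρB : ρ * B = π/6 := by
      rw [hρdef]; field_simp
    calc |ωf (4*n) * b j - 2*π*p|
        ≤ |ωf (4*n) * b j - (q:ℝ)*b j| + |(q:ℝ)*b j - 2*π*p| := abs_sub_le _ _ _
      _ ≤ ρ*B + π/6 := add_le_add hd hp
      _ = π/3 := by rw [hρB]; ring
  have hpos : 0 < Pf (4*n) (b j) := hermite_core n B (b j) hB1 (hbnn j) (hbB j) hsmall hcosj
  have hPa : 0 < (Polynomial.aeval (Real.sqrt 2 * a j) (Polynomial.hermite (4*n)) : ℝ) := by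
    rcases le_or_gt 0 (a j) with h | h
    · have he : Real.sqrt 2 * a j = b j := by rw [hb]; simp [abs_of_nonneg h]
      rw [he]; exact hpos
    · have he : Real.sqrt 2 * a j = -(b j) := by rw [hb]; simp [abs_of_neg h]
      rw [he, aeval_hermite_neg]; exact hpos
  show 0 < physHermite (4 * n) (a j)
  unfold physHermite
  exact mul_pos (Real.rpow_pos_of_pos (by norm_num) _) hPa
end

section
/- Let d ≥ 1, set ν = d/2 − 1, and let n ∈ ℕ. Define the radial function f: ℝ^d → ℝ by f(x) = L_n^ν(2π|x|²)·e^{−π|x|²}. Then its Fourier transform satisfies f̂(y) = (−1)^n · L_n^ν(2π|y|²)·e^{−π|y|²} for all y ∈ ℝ^d. -/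
set_option maxHeartbeats 1000000

open MeasureTheory Real Finset
open scoped FourierTransform

/-- The Laguerre polynomial `L_n^ν(t) = Σ_{k=0}^n (-1)^k (Γ(n+ν+1)/(Γ(k+ν+1)(n-k)!)) t^k/k!`. -/
noncomputable def laguerreL (ν : ℝ) (n : ℕ) (t : ℝ) : ℝ :=
  ∑ k ∈ Finset.range (n + 1),
    (-1 : ℝ) ^ k *
      (Real.Gamma ((n : ℝ) + ν + 1) /
        (Real.Gamma ((k : ℝ) + ν + 1) * ((n - k).factorial : ℝ))) *
      t ^ k / (k.factorial : ℝ)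

namespace LagAux

/-- coefficient of `t^j` in `laguerreL ν m`. -/
noncomputable def lagC (ν : ℝ) (m j : ℕ) : ℝ :=
  (-1 : ℝ) ^ j * (Real.Gamma ((m : ℝ) + ν + 1) /
      (Real.Gamma ((j : ℝ) + ν + 1) * ((m - j).factorial : ℝ))) / (j.factorial : ℝ)

lemma laguerreL_eq (ν : ℝ) (m : ℕ) (t : ℝ) :
    laguerreL ν m t = ∑ j ∈ range (m + 1), lagC ν m j * t ^ j := by
  unfold laguerreL lagC
  refine Finset.sum_congr rfl fun j _ => by ring

/-- formal derivative of `laguerreL ν m`. -/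
noncomputable def dlag (ν : ℝ) (m : ℕ) (t : ℝ) : ℝ :=
  ∑ j ∈ range (m + 1), lagC ν m j * ((j : ℝ) * t ^ (j - 1))

lemma hasDerivAt_laguerreL (ν : ℝ) (m : ℕ) (t : ℝ) :
    HasDerivAt (laguerreL ν m) (dlag ν m t) t := by
  have h : HasDerivAt (fun t : ℝ => ∑ j ∈ range (m + 1), lagC ν m j * t ^ j)
      (dlag ν m t) t := by
    apply HasDerivAt.fun_sum
    intro j _
    exact (hasDerivAt_pow j t).const_mul _
  have e : (fun t : ℝ => ∑ j ∈ range (m + 1), lagC ν m j * t ^ j) = laguerreL ν m := by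
    funext s; exact (laguerreL_eq ν m s).symm
  rwa [e] at h


private lemma field_id (a b ν Gk Gm F M g : ℝ) (hGm : Gm ≠ 0) (hF : F ≠ 0) (hM : M ≠ 0)
    (hr : a - b - 1 + 1 ≠ 0) (hb1 : b + 1 ≠ 0) (hnum : b + ν + 1 ≠ 0) :
    (a + 1) * (g * -1 * ((a + ν + 1) * Gk / ((b + ν + 1) * Gm * ((a - b - 1 + 1) * F))) / ((b + 1) * M)) =
      (a + ν + 1 + (b + 1)) * (g * -1 * (Gk / ((b + ν + 1) * Gm * F)) / ((b + 1) * M)) -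
        g * (Gk / (Gm * ((a - b - 1 + 1) * F))) / M := by
  have hR : a - b - 1 + 1 = a - b := by ring
  rw [hR]
  have hr' : a - b ≠ 0 := by rwa [hR] at hr
  field_simp
  ring

variable {ν : ℝ} (hν : 0 < ν + 1)

include hν

lemma gamma_pos (j : ℕ) : 0 < Real.Gamma ((j : ℝ) + ν + 1) := by
  apply Real.Gamma_pos_of_pos
  have : (0:ℝ) ≤ j := Nat.cast_nonneg j
  linarith

lemma gamma_succ (j : ℕ) :
    Real.Gamma (((j : ℝ) + 1) + ν + 1) = ((j : ℝ) + ν + 1) * Real.Gamma ((j : ℝ) + ν + 1) := by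
  have h : ((j : ℝ) + 1) + ν + 1 = ((j : ℝ) + ν + 1) + 1 := by ring
  have hpos : (0:ℝ) < (j : ℝ) + ν + 1 := by
    have : (0:ℝ) ≤ j := Nat.cast_nonneg j
    linarith
  rw [h, Real.Gamma_add_one (ne_of_gt hpos)]

lemma laguerreL_zero (t : ℝ) : laguerreL ν 0 t = 1 := by
  unfold laguerreL
  rw [Finset.sum_range_one]
  norm_num
  exact (Real.Gamma_pos_of_pos hν).ne'

/-- the key coefficient recurrence. -/
lemma coeff_rec (k j : ℕ) (hj : j ≤ k) :
    ((k:ℝ)+1) * lagC ν (k+1) j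
      = ((k:ℝ)+ν+1+(j:ℝ)) * lagC ν k j - (if j = 0 then 0 else lagC ν k (j-1)) := by
  have hΓk := gamma_succ hν k
  have hΓkpos := gamma_pos hν k
  have hne : ∀ m : ℕ, Real.Gamma ((m:ℝ) + ν + 1) ≠ 0 := fun m => (gamma_pos hν m).ne'
  cases j with
  | zero =>
      simp only [if_pos rfl, Nat.cast_zero, sub_zero]
      unfold lagC
      have h1 : (k+1) - 0 = k+1 := rfl
      have h2 : k - 0 = k := rfl
      rw [h1, h2]
      push_cast [Nat.factorial_succ, hΓk]
      have h0 := hne 0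
      have hk := hne k
      have hfk : ((k.factorial : ℝ)) ≠ 0 := Nat.cast_ne_zero.mpr k.factorial_ne_zero
      field_simp
      ring
  | succ m =>
      have hm : m + 1 ≤ k := hj
      simp only [if_neg (Nat.succ_ne_zero m), Nat.add_sub_cancel]
      unfold lagC
      have e1 : (k+1) - (m+1) = (k - (m+1)) + 1 := by omega
      have e2 : k - m = (k - (m+1)) + 1 := by omega
      rw [e1, e2]
      have hΓm := gamma_succ hν m
      push_cast [Nat.factorial_succ, pow_succ]
      rw [hΓk, hΓm]
      have h0 := hne 0
      have hk := hne k
      have hm' := hne m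
      have hfm : ((m.factorial : ℝ)) ≠ 0 := Nat.cast_ne_zero.mpr m.factorial_ne_zero
      have hfkm : (((k - (m+1)).factorial : ℝ)) ≠ 0 :=
        Nat.cast_ne_zero.mpr (k - (m+1)).factorial_ne_zero
      have hsub : ((k - (m+1) : ℕ) : ℝ) = (k:ℝ) - (m:ℝ) - 1 := by
        rw [Nat.cast_sub hm]; push_cast; ring
      rw [hsub]
      have hkm : (k:ℝ) - (m:ℝ) - 1 + 1 ≠ 0 := by
        have : (m:ℝ) + 1 ≤ (k:ℝ) := by exact_mod_cast hm
        intro h; nlinarith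
      have hm1 : ((m:ℝ) + 1) ≠ 0 := by positivity
      generalize Real.Gamma ((k:ℝ) + ν + 1) = Gk at *
      generalize hGm : Real.Gamma ((m:ℝ) + ν + 1) = Gm at *
      generalize hF : (((k - (m+1)).factorial : ℕ) : ℝ) = F at *
      generalize hM : ((m.factorial : ℕ) : ℝ) = M at *
      have hnum : ((m:ℝ) + ν + 1) ≠ 0 := by
        have : (0:ℝ) ≤ m := Nat.cast_nonneg m
        intro h; nlinarith
      set_option maxHeartbeats 400000 in
      exact field_id (k:ℝ) (m:ℝ) ν Gk Gm F M ((-1:ℝ)^m) hm' hfkm hfm hkm hm1 hnum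


lemma coeff_top (k : ℕ) : ((k:ℝ)+1) * lagC ν (k+1) (k+1) = - lagC ν k k := by
  unfold lagC
  have h1 : (k+1) - (k+1) = 0 := by omega
  have h2 : k - k = 0 := by omega
  rw [h1, h2]
  have hk1 := (gamma_pos hν (k+1)).ne'
  have hk1' : Real.Gamma (((k:ℝ)+1) + ν + 1) ≠ 0 := by
    have : ((k+1:ℕ):ℝ) = (k:ℝ) + 1 := by push_cast; ring
    rwa [this] at hk1
  have hkk := (gamma_pos hν k).ne'
  push_cast [Nat.factorial_succ, pow_succ]
  have hfk : ((k.factorial : ℕ) : ℝ) ≠ 0 := Nat.cast_ne_zero.mpr k.factorial_ne_zero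
  have hks : ((k:ℝ) + 1) ≠ 0 := by positivity
  field_simp

lemma lag_rec (k : ℕ) (u : ℝ) :
    ((k:ℝ)+1) * laguerreL ν (k+1) u
      = ((k:ℝ)+ν+1-u) * laguerreL ν k u + u * dlag ν k u := by
  rw [laguerreL_eq, laguerreL_eq]
  unfold dlag
  have hstep : ∀ j : ℕ,
      ((k:ℝ)+ν+1-u) * (lagC ν k j * u^j) + u * (lagC ν k j * ((j:ℝ) * u^(j-1)))
        = ((k:ℝ)+ν+1+(j:ℝ)) * lagC ν k j * u^j - lagC ν k j * u^(j+1) := by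
    intro j
    have hj : u * ((j:ℝ) * u^(j-1)) = (j:ℝ) * u^j := by
      cases j with
      | zero => simp
      | succ i =>
          have : (i + 1) - 1 = i := rfl
          rw [this, pow_succ]
          push_cast
          ring
    have h2 : u * (lagC ν k j * ((j:ℝ) * u^(j-1)))
        = lagC ν k j * (u * ((j:ℝ) * u^(j-1))) := by ring
    rw [h2, hj, pow_succ]
    ring
  calc ((k:ℝ)+1) * ∑ j ∈ range (k+1+1), lagC ν (k+1) j * u ^ j
      = ∑ j ∈ range (k+2), ((k:ℝ)+1) * (lagC ν (k+1) j * u ^ j) := by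
        rw [Finset.mul_sum]
    _ = ∑ j ∈ range (k+1), ((k:ℝ)+1) * (lagC ν (k+1) j * u ^ j)
          + ((k:ℝ)+1) * (lagC ν (k+1) (k+1) * u ^ (k+1)) := by
        rw [Finset.sum_range_succ]
    _ = ∑ j ∈ range (k+1),
          (((k:ℝ)+ν+1+(j:ℝ)) * lagC ν k j * u ^ j
            - (if j = 0 then 0 else lagC ν k (j-1)) * u ^ j)
          - lagC ν k k * u ^ (k+1) := by
        congr 1
        · refine Finset.sum_congr rfl fun j hj => ?_
          have hjk : j ≤ k := by
            have := Finset.mem_range.mp hj; omega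
          have := coeff_rec hν k j hjk
          calc ((k:ℝ)+1) * (lagC ν (k+1) j * u ^ j)
              = (((k:ℝ)+1) * lagC ν (k+1) j) * u ^ j := by ring
            _ = (((k:ℝ)+ν+1+(j:ℝ)) * lagC ν k j
                  - (if j = 0 then 0 else lagC ν k (j-1))) * u ^ j := by rw [this]
            _ = _ := by ring
        · have := coeff_top hν k
          calc ((k:ℝ)+1) * (lagC ν (k+1) (k+1) * u ^ (k+1))
              = (((k:ℝ)+1) * lagC ν (k+1) (k+1)) * u ^ (k+1) := by ring
            _ = - (lagC ν k k * u ^ (k+1)) := by rw [this]; ring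
            _ = _ := by ring
    _ = ∑ j ∈ range (k+1), ((k:ℝ)+ν+1+(j:ℝ)) * lagC ν k j * u ^ j
          - (∑ j ∈ range (k+1), (if j = 0 then 0 else lagC ν k (j-1)) * u ^ j
              + lagC ν k k * u ^ (k+1)) := by
        rw [Finset.sum_sub_distrib]; ring
    _ = ∑ j ∈ range (k+1), ((k:ℝ)+ν+1+(j:ℝ)) * lagC ν k j * u ^ j
          - ∑ j ∈ range (k+1), lagC ν k j * u ^ (j+1) := by
        congr 1
        have hshift : ∑ j ∈ range (k+1), (if j = 0 then 0 else lagC ν k (j-1)) * u ^ j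
            = ∑ j ∈ range k, lagC ν k j * u ^ (j+1) := by
          rw [Finset.sum_range_succ' (fun j => (if j = 0 then 0 else lagC ν k (j-1)) * u ^ j) k]
          simp
        rw [hshift, Finset.sum_range_succ]
    _ = ((k:ℝ)+ν+1-u) * ∑ j ∈ range (k+1), lagC ν k j * u ^ j
          + u * ∑ j ∈ range (k+1), lagC ν k j * ((j:ℝ) * u ^ (j-1)) := by
        rw [Finset.mul_sum, Finset.mul_sum, ← Finset.sum_add_distrib,
          ← Finset.sum_sub_distrib]
        refine Finset.sum_congr rfl fun j _ => ?_
        rw [← hstep j]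

omit hν in
lemma binom_sum (N : ℕ) :
    ∑ i ∈ range (N+1), (-2:ℝ)^i / (((N-i).factorial : ℝ) * ((i.factorial : ℕ) : ℝ))
      = (-1:ℝ)^N / ((N.factorial : ℕ) : ℝ) := by
  have hbin := add_pow (-2 : ℝ) 1 N
  have hNf : ((N.factorial : ℕ) : ℝ) ≠ 0 := Nat.cast_ne_zero.mpr N.factorial_ne_zero
  have key : ∑ i ∈ range (N+1), (-2:ℝ)^i / (((N-i).factorial : ℝ) * ((i.factorial : ℕ) : ℝ))
      = (∑ i ∈ range (N+1), (-2:ℝ)^i * 1^(N-i) * (N.choose i : ℝ)) / ((N.factorial : ℕ) : ℝ) := by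
    rw [Finset.sum_div]
    refine Finset.sum_congr rfl fun i hi => ?_
    have hiN : i ≤ N := by have := Finset.mem_range.mp hi; omega
    have hch := Nat.choose_mul_factorial_mul_factorial hiN
    have hch' : ((N.choose i : ℕ) : ℝ) * ((i.factorial : ℕ) : ℝ) * (((N-i).factorial : ℕ) : ℝ)
        = ((N.factorial : ℕ) : ℝ) := by exact_mod_cast congrArg (fun x : ℕ => (x : ℝ)) hch
    have hif : ((i.factorial : ℕ) : ℝ) ≠ 0 := Nat.cast_ne_zero.mpr i.factorial_ne_zero
    have hNif : (((N-i).factorial : ℕ) : ℝ) ≠ 0 := Nat.cast_ne_zero.mpr (N-i).factorial_ne_zero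
    rw [one_pow]
    field_simp
    linear_combination (-1:ℝ) * hch'
  rw [key, ← hbin]
  norm_num

omit hν in
lemma ico_sum (n j : ℕ) (hj : j ≤ n) :
    ∑ k ∈ Ico j (n+1), (-2:ℝ)^k / ((((n-k).factorial : ℕ) : ℝ) * (((k-j).factorial : ℕ) : ℝ))
      = (-2:ℝ)^j * ((-1:ℝ)^(n-j) / (((n-j).factorial : ℕ) : ℝ)) := by
  rw [Finset.sum_Ico_eq_sum_range]
  have h1 : n + 1 - j = (n - j) + 1 := by omega
  rw [h1]
  have h2 : ∀ i ∈ range ((n-j)+1),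
      (-2:ℝ)^(j+i) / ((((n-(j+i)).factorial : ℕ) : ℝ) * ((((j+i)-j).factorial : ℕ) : ℝ))
        = (-2:ℝ)^j * ((-2:ℝ)^i / (((((n-j)-i).factorial : ℕ) : ℝ) * ((i.factorial : ℕ) : ℝ))) := by
    intro i hi
    have e1 : n - (j+i) = (n-j) - i := by omega
    have e2 : (j+i) - j = i := by omega
    rw [e1, e2, pow_add]
    ring
  rw [Finset.sum_congr rfl h2, ← Finset.mul_sum, binom_sum]

lemma lag_scale (n : ℕ) (t : ℝ) :
    ∑ k ∈ range (n+1), (-2:ℝ)^k * (Real.Gamma ((n:ℝ)+ν+1)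
        / (Real.Gamma ((k:ℝ)+ν+1) * (((n-k).factorial : ℕ) : ℝ))) * laguerreL ν k t
      = (-1:ℝ)^n * laguerreL ν n (2*t) := by
  have hne : ∀ m : ℕ, Real.Gamma ((m:ℝ) + ν + 1) ≠ 0 := fun m => (gamma_pos hν m).ne'
  calc ∑ k ∈ range (n+1), (-2:ℝ)^k * (Real.Gamma ((n:ℝ)+ν+1)
        / (Real.Gamma ((k:ℝ)+ν+1) * (((n-k).factorial : ℕ) : ℝ))) * laguerreL ν k t
      = ∑ k ∈ range (n+1), ∑ j ∈ range (k+1),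
          ((-1:ℝ)^j * (Real.Gamma ((n:ℝ)+ν+1)
              / (Real.Gamma ((j:ℝ)+ν+1) * ((j.factorial : ℕ) : ℝ))) * t^j)
            * ((-2:ℝ)^k / ((((n-k).factorial : ℕ) : ℝ) * (((k-j).factorial : ℕ) : ℝ))) := by
        refine Finset.sum_congr rfl fun k _ => ?_
        rw [laguerreL_eq, Finset.mul_sum]
        refine Finset.sum_congr rfl fun j _ => ?_
        unfold lagC
        have hk := hne k
        have hj' := hne j
        have hjf : ((j.factorial : ℕ) : ℝ) ≠ 0 := Nat.cast_ne_zero.mpr j.factorial_ne_zero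
        have hnkf : (((n-k).factorial : ℕ) : ℝ) ≠ 0 := Nat.cast_ne_zero.mpr (n-k).factorial_ne_zero
        have hkjf : (((k-j).factorial : ℕ) : ℝ) ≠ 0 := Nat.cast_ne_zero.mpr (k-j).factorial_ne_zero
        field_simp
    _ = ∑ j ∈ range (n+1), ∑ k ∈ Ico j (n+1),
          ((-1:ℝ)^j * (Real.Gamma ((n:ℝ)+ν+1)
              / (Real.Gamma ((j:ℝ)+ν+1) * ((j.factorial : ℕ) : ℝ))) * t^j)
            * ((-2:ℝ)^k / ((((n-k).factorial : ℕ) : ℝ) * (((k-j).factorial : ℕ) : ℝ))) := by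
        refine Finset.sum_comm' ?_
        intro k j
        simp only [Finset.mem_range, Finset.mem_Ico]
        omega
    _ = ∑ j ∈ range (n+1), (-1:ℝ)^n * (lagC ν n j * (2*t)^j) := by
        refine Finset.sum_congr rfl fun j hj => ?_
        have hjn : j ≤ n := by have := Finset.mem_range.mp hj; omega
        rw [← Finset.mul_sum, ico_sum n j hjn]
        unfold lagC
        have hsgn : (-1:ℝ)^j * ((-2:ℝ)^j * (-1:ℝ)^(n-j)) = (-1:ℝ)^n * ((-1:ℝ)^j * 2^j) := by
          have : (-2:ℝ)^j = (-1:ℝ)^j * 2^j := by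
            rw [neg_pow]
          rw [this]
          have h4 : (-1:ℝ)^j * ((-1:ℝ)^j * 2^j * (-1:ℝ)^(n-j)) = ((-1:ℝ)^j * (-1:ℝ)^j) * (-1:ℝ)^(n-j) * 2^j := by ring
          rw [h4, ← pow_add, ← pow_add]
          have e : j + j + (n - j) = n + j := by omega
          rw [e, pow_add]
          ring
        rw [mul_pow]
        calc (-1:ℝ)^j * (Real.Gamma ((n:ℝ)+ν+1)
              / (Real.Gamma ((j:ℝ)+ν+1) * ((j.factorial : ℕ) : ℝ))) * t^j
            * ((-2:ℝ)^j * ((-1:ℝ)^(n-j) / (((n-j).factorial : ℕ) : ℝ)))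
            = ((-1:ℝ)^j * ((-2:ℝ)^j * (-1:ℝ)^(n-j))) * (Real.Gamma ((n:ℝ)+ν+1)
              / (Real.Gamma ((j:ℝ)+ν+1) * ((j.factorial : ℕ) : ℝ))) * t^j / (((n-j).factorial : ℕ) : ℝ) := by
              ring
          _ = _ := by
              rw [hsgn]
              have hj' := hne j
              have hjf : ((j.factorial : ℕ) : ℝ) ≠ 0 := Nat.cast_ne_zero.mpr j.factorial_ne_zero
              have hnjf : (((n-j).factorial : ℕ) : ℝ) ≠ 0 := Nat.cast_ne_zero.mpr (n-j).factorial_ne_zero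
              field_simp
    _ = (-1:ℝ)^n * laguerreL ν n (2*t) := by
        rw [laguerreL_eq ν n (2*t), Finset.mul_sum]


end LagAux

namespace StmtAux

open LagAux Complex
open scoped RealInnerProductSpace

variable {d : ℕ}

local notation "V" => EuclideanSpace ℝ (Fin d)

noncomputable def ker (w v : V) : ℂ :=
  Complex.exp (((-2 : ℝ) * π * ⟪v, w⟫ : ℝ) * Complex.I)

lemma norm_ker (w v : V) : ‖ker w v‖ = 1 := by
  unfold ker
  rw [Complex.norm_exp]
  simp

/-- the integrand family -/
noncomputable def Fk (w : V) (k : ℕ) (b : ℝ) (v : V) : ℂ :=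
  ker w v * ((‖v‖ : ℂ)^2)^k * Complex.exp (-(b : ℂ) * (‖v‖ : ℂ)^2)

lemma norm_Fk (w : V) (k : ℕ) (b : ℝ) (v : V) :
    ‖Fk w k b v‖ = ‖v‖^(2*k) * Real.exp (-b * ‖v‖^2) := by
  unfold Fk
  rw [norm_mul, norm_mul, norm_ker, one_mul]
  have e1 : ((‖v‖ : ℂ)^2)^k = ((‖v‖^(2*k) : ℝ) : ℂ) := by push_cast; ring
  have e2 : -(b:ℂ)*(‖v‖:ℂ)^2 = ((-b*‖v‖^2 : ℝ) : ℂ) := by push_cast; ring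
  rw [e1, e2, Complex.norm_real, Complex.norm_exp_ofReal,
    Real.norm_eq_abs, _root_.abs_of_nonneg (by positivity : (0:ℝ) ≤ ‖v‖^(2*k))]

lemma integrable_rexp_gauss {c : ℝ} (hc : 0 < c) :
    Integrable (fun v : V => Real.exp (-c * ‖v‖^2)) := by
  have h := GaussianFourier.integrable_cexp_neg_mul_sq_norm_add
    (b := (c : ℂ)) (by simpa using hc) 0 (0 : EuclideanSpace ℝ (Fin d))
  simp only [zero_mul, add_zero] at h
  have h2 := h.norm
  refine h2.congr (Filter.Eventually.of_forall fun v => ?_)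
  have e : -(c:ℂ) * (‖v‖:ℂ)^2 = ((-c * ‖v‖^2 : ℝ) : ℂ) := by push_cast; ring
  simp only [e, Complex.norm_exp_ofReal]

lemma integrable_pow_gauss (k : ℕ) {c : ℝ} (hc : 0 < c) :
    Integrable (fun v : V => ‖v‖^(2*k) * Real.exp (-c * ‖v‖^2)) := by
  have hmono : ∀ v : V, ‖v‖^(2*k) * Real.exp (-c * ‖v‖^2)
      ≤ ((2/c)^k * k.factorial) * Real.exp (-(c/2) * ‖v‖^2) := by
    intro v
    have h1 : ((c/2) * ‖v‖^2)^k / (k.factorial : ℝ) ≤ Real.exp ((c/2) * ‖v‖^2) := by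
      have := Real.sum_le_exp_of_nonneg (x := (c/2) * ‖v‖^2) (by positivity) (k+1)
      refine le_trans ?_ this
      exact Finset.single_le_sum (f := fun i => ((c/2) * ‖v‖^2)^i / (i.factorial : ℝ))
        (fun i _ => by positivity) (Finset.self_mem_range_succ k)
    have h2 : ‖v‖^(2*k) ≤ (2/c)^k * (k.factorial : ℝ) * Real.exp ((c/2) * ‖v‖^2) := by
      have hv : ‖v‖^(2*k) = (‖v‖^2)^k := by rw [← pow_mul, mul_comm]
      have he : (‖v‖^2)^k = (2/c)^k * ((c/2) * ‖v‖^2)^k := by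
        rw [← mul_pow]
        congr 1
        field_simp
      rw [hv, he]
      have := mul_le_mul_of_nonneg_left
        ((div_le_iff₀ (by positivity : (0:ℝ) < (k.factorial : ℝ))).mp h1)
        (by positivity : (0:ℝ) ≤ (2/c)^k)
      calc (2/c)^k * ((c/2) * ‖v‖^2)^k
          ≤ (2/c)^k * (Real.exp ((c/2) * ‖v‖^2) * (k.factorial : ℝ)) := this
        _ = (2/c)^k * (k.factorial : ℝ) * Real.exp ((c/2) * ‖v‖^2) := by ring
    calc ‖v‖^(2*k) * Real.exp (-c * ‖v‖^2)
        ≤ ((2/c)^k * (k.factorial : ℝ) * Real.exp ((c/2) * ‖v‖^2)) * Real.exp (-c * ‖v‖^2) := by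
          exact mul_le_mul_of_nonneg_right h2 (Real.exp_nonneg _)
      _ = ((2/c)^k * k.factorial) * Real.exp (-(c/2) * ‖v‖^2) := by
          rw [mul_assoc, ← Real.exp_add]
          ring_nf
  refine Integrable.mono' (((integrable_rexp_gauss (by positivity : (0:ℝ) < c/2))).const_mul
    ((2/c)^k * k.factorial)) ?_ (Filter.Eventually.of_forall fun v => ?_)
  · apply Continuous.aestronglyMeasurable
    continuity
  · rw [Real.norm_eq_abs, _root_.abs_of_nonneg (by positivity : (0:ℝ) ≤ ‖v‖^(2*k) * Real.exp (-c * ‖v‖^2))]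
    exact hmono v

lemma continuous_Fk (w : V) (k : ℕ) (b : ℝ) : Continuous (Fk w k b) := by
  unfold Fk ker
  have h1 : Continuous fun v : V => ((((-2 : ℝ) * π * ⟪v, w⟫ : ℝ) : ℂ) * Complex.I) := by
    apply Continuous.mul _ continuous_const
    exact Complex.continuous_ofReal.comp
      ((continuous_const.mul (continuous_id.inner continuous_const)))
  have h2 : Continuous fun v : V => ((‖v‖ : ℂ)^2)^k :=
    ((Complex.continuous_ofReal.comp continuous_norm).pow 2).pow k
  have h3 : Continuous fun v : V => Complex.exp (-(b : ℂ) * (‖v‖ : ℂ)^2) :=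
    Complex.continuous_exp.comp
      (continuous_const.mul ((Complex.continuous_ofReal.comp continuous_norm).pow 2))
  exact ((Complex.continuous_exp.comp h1).mul h2).mul h3

lemma Fk_integrable (w : V) (k : ℕ) {b : ℝ} (hb : 0 < b) : Integrable (Fk w k b) := by
  refine (integrable_pow_gauss k hb).mono'
    (continuous_Fk w k b).aestronglyMeasurable
    (Filter.Eventually.of_forall fun v => ?_)
  rw [norm_Fk]

noncomputable def Ik (w : V) (k : ℕ) (b : ℝ) : ℂ := ∫ v : V, Fk w k b v

lemma hasDerivAt_Ik (w : V) (k : ℕ) {b : ℝ} (hb : 0 < b) :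
    HasDerivAt (Ik w k) (-(Ik w (k+1) b)) b := by
  have hb2 : 0 < b/2 := by positivity
  have key := hasDerivAt_integral_of_dominated_loc_of_deriv_le (μ := volume)
    (F := fun x (v : V) => Fk w k x v) (F' := fun x (v : V) => -Fk w (k+1) x v)
    (x₀ := b) (s := Metric.ball b (b/2))
    (bound := fun v : V => ‖v‖^(2*(k+1)) * Real.exp (-(b/2) * ‖v‖^2))
    (Metric.ball_mem_nhds b hb2)
    (Filter.Eventually.of_forall fun x => (continuous_Fk w k x).aestronglyMeasurable)
    (Fk_integrable w k hb)
    ((continuous_Fk w (k+1) b).neg.aestronglyMeasurable)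
    (Filter.Eventually.of_forall fun v => ?_)
    (integrable_pow_gauss (k+1) hb2)
    (Filter.Eventually.of_forall fun v => ?_)
  · have : HasDerivAt (fun x => ∫ v : V, Fk w k x v) (∫ v : V, -Fk w (k+1) b v) b := key.2
    rw [integral_neg] at this
    exact this
  · -- bound
    intro x hx
    rw [norm_neg, norm_Fk]
    have hxb : b/2 ≤ x := by
      have := Metric.mem_ball.mp hx
      rw [Real.dist_eq, abs_lt] at this
      linarith [this.1]
    have : Real.exp (-x * ‖v‖^2) ≤ Real.exp (-(b/2) * ‖v‖^2) := by
      apply Real.exp_le_exp.mpr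
      nlinarith [sq_nonneg ‖v‖]
    exact mul_le_mul_of_nonneg_left this (by positivity)
  · -- differentiability
    intro x hx
    set c : ℂ := (‖v‖ : ℂ)^2 with hc
    have h1 : HasDerivAt (fun z : ℂ => Complex.exp (-z*c))
        (Complex.exp (-(x:ℂ)*c) * (-c)) (x:ℂ) := by
      simpa using (((hasDerivAt_id (x:ℂ)).neg.mul_const c).cexp)
    have h2 : HasDerivAt (fun y : ℝ => Complex.exp (-(y:ℂ)*c))
        (Complex.exp (-(x:ℂ)*c) * (-c)) x := h1.comp_ofReal
    have h3 := h2.const_mul (ker w v * ((‖v‖ : ℂ)^2)^k)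
    have e : ker w v * ((‖v‖ : ℂ)^2)^k * (Complex.exp (-(x:ℂ)*c) * (-c))
        = -Fk w (k+1) x v := by
      unfold Fk
      rw [hc, pow_succ]
      ring
    rw [e] at h3
    exact h3

/-- the closed-form candidate. -/
noncomputable def G (w : V) (k : ℕ) (b : ℝ) : ℝ :=
  ((k.factorial : ℕ) : ℝ) * π ^ ((d:ℝ)/2) * b ^ (-(d:ℝ)/2 - (k:ℝ)) *
    (Real.exp (-(π^2 * ‖w‖^2 / b)) * laguerreL ((d:ℝ)/2 - 1) k (π^2 * ‖w‖^2 / b))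

lemma hasDerivAt_G (hd : 1 ≤ d) (w : V) (k : ℕ) {b : ℝ} (hb : 0 < b) :
    HasDerivAt (G w k) (-(G w (k+1) b)) b := by
  set ν : ℝ := (d:ℝ)/2 - 1 with hνdef
  have hν : 0 < ν + 1 := by
    have : (1:ℝ) ≤ d := by exact_mod_cast hd
    simp only [hνdef]
    linarith
  set cc : ℝ := π^2 * ‖w‖^2 with hccdef
  have hcc : 0 ≤ cc := by positivity
  set β : ℝ := -(d:ℝ)/2 - (k:ℝ) with hβdef
  have hg : HasDerivAt (fun x : ℝ => cc/x) (-(cc/b^2)) b := by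
    have := (hasDerivAt_inv hb.ne').const_mul cc
    simp only [← div_eq_mul_inv] at this
    exact this.congr_deriv (by ring)
  have h1 : HasDerivAt (fun x : ℝ => x ^ β) (β * b ^ (β - 1)) b :=
    Real.hasDerivAt_rpow_const (Or.inl hb.ne')
  have hP : HasDerivAt (fun x : ℝ => ((k.factorial : ℕ) : ℝ) * π ^ ((d:ℝ)/2) * x ^ β)
      (((k.factorial : ℕ) : ℝ) * π ^ ((d:ℝ)/2) * (β * b ^ (β - 1))) b := by
    have := h1.const_mul (((k.factorial : ℕ) : ℝ) * π ^ ((d:ℝ)/2))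
    convert this using 1 <;> ring
  have hE : HasDerivAt (fun x : ℝ => Real.exp (-(cc/x)))
      (Real.exp (-(cc/b)) * (cc/b^2)) b := by
    have := hg.fun_neg.exp
    convert this using 1
    ring
  have hL : HasDerivAt (fun x : ℝ => laguerreL ν k (cc/x))
      (dlag ν k (cc/b) * -(cc/b^2)) b := by
    have := (hasDerivAt_laguerreL ν k (cc/b)).comp b hg
    exact this
  have hEL := hE.fun_mul hL
  have hTotal := hP.fun_mul hEL
  have hfun : (fun x : ℝ => ((k.factorial : ℕ) : ℝ) * π ^ ((d:ℝ)/2) * x ^ β *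
      (Real.exp (-(cc/x)) * laguerreL ν k (cc/x))) = G w k := by
    funext x
    unfold G
    rw [← hνdef, ← hccdef, ← hβdef]
  rw [hfun] at hTotal
  refine hTotal.congr_deriv ?_
  -- now the algebraic identity
  have hrec := lag_rec hν k (cc/b)
  have hPP : b ^ (-(d:ℝ)/2 - ((k:ℕ)+1:ℝ)) = b ^ β / b := by
    rw [hβdef, show -(d:ℝ)/2 - ((k:ℕ)+1:ℝ) = (-(d:ℝ)/2 - (k:ℝ)) - 1 by ring,
      Real.rpow_sub hb, Real.rpow_one]
  unfold G
  push_cast [Nat.factorial_succ]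
  rw [← hνdef, ← hccdef, hPP]
  have hP1 : b ^ (β - 1) = b ^ β / b := by
    rw [Real.rpow_sub hb, Real.rpow_one]
  rw [hP1]
  have hb' : b ≠ 0 := hb.ne'
  rw [hνdef] at hrec
  rw [hβdef, hνdef]
  linear_combination ((((k.factorial : ℕ) : ℝ) * π ^ ((d:ℝ)/2) *
      b ^ (-(d:ℝ)/2 - (k:ℝ)) / b * Real.exp (-(cc/b)))) * hrec


lemma Ik_zero (hd : 1 ≤ d) (w : V) {b : ℝ} (hb : 0 < b) :
    Ik w 0 b = ((G w 0 b : ℝ) : ℂ) := by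
  have hν : 0 < ((d:ℝ)/2 - 1) + 1 := by
    have : (1:ℝ) ≤ d := by exact_mod_cast hd
    linarith
  have hmain := fourier_gaussian_innerProductSpace (b := (b:ℂ))
    (by simpa using hb) w
  rw [Real.fourier_eq'] at hmain
  have hL : Ik w 0 b
      = ∫ v : V, Complex.exp ((↑(-2 * π * ⟪v, w⟫) * Complex.I))
          • (fun v : V => Complex.exp (-(b:ℂ) * (‖v‖:ℂ)^2)) v := by
    unfold Ik Fk ker
    congr 1
    funext v
    rw [smul_eq_mul]
    norm_num
  rw [hL, hmain, finrank_euclideanSpace_fin]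
  have e1 : ((d:ℂ)/2) = (((d:ℝ)/2 : ℝ) : ℂ) := by push_cast; ring
  have e2 : (π/(b:ℂ)) = ((π/b : ℝ) : ℂ) := by push_cast; ring
  have e3 : (-(π:ℂ)^2 * (‖w‖:ℂ)^2 / (b:ℂ)) = ((-(π^2 * ‖w‖^2 / b) : ℝ) : ℂ) := by
    push_cast; ring
  rw [e1, e2, e3, ← Complex.ofReal_cpow (by positivity), ← Complex.ofReal_exp,
    ← Complex.ofReal_mul]
  congr 1
  unfold G
  rw [laguerreL_zero hν]
  rw [Real.div_rpow pi_pos.le hb.le]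
  rw [show (-(d:ℝ)/2 - ((0:ℕ):ℝ)) = -((d:ℝ)/2) by push_cast; ring, Real.rpow_neg hb.le]
  simp [div_eq_mul_inv]

lemma Ik_eq_G (hd : 1 ≤ d) (w : V) (k : ℕ) {b : ℝ} (hb : 0 < b) :
    Ik w k b = ((G w k b : ℝ) : ℂ) := by
  induction k generalizing b with
  | zero => exact Ik_zero hd w hb
  | succ k ih =>
      have hEq : (fun x => Ik w k x) =ᶠ[nhds b] fun x => ((G w k x : ℝ) : ℂ) := by
        filter_upwards [isOpen_Ioi.mem_nhds hb] with x hx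
        exact ih hx
      have h1 := hasDerivAt_Ik w k hb
      have h2 := ((hasDerivAt_G hd w k hb).ofReal_comp).congr_of_eventuallyEq hEq
      have h3 := h1.unique h2
      rw [Complex.ofReal_neg] at h3
      exact neg_injective h3

lemma G_at_pi (hd : 1 ≤ d) (w : V) (k : ℕ) :
    G w k π = ((k.factorial : ℕ) : ℝ) * (π^k)⁻¹ *
      (Real.exp (-(π * ‖w‖^2)) * laguerreL ((d:ℝ)/2 - 1) k (π * ‖w‖^2)) := by
  unfold G
  have harg : π^2 * ‖w‖^2 / π = π * ‖w‖^2 := by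
    field_simp
  have hpow : π ^ ((d:ℝ)/2) * π ^ (-(d:ℝ)/2 - (k:ℝ)) = (π ^ k)⁻¹ := by
    rw [← Real.rpow_add pi_pos, show (d:ℝ)/2 + (-(d:ℝ)/2 - (k:ℝ)) = -(k:ℝ) by ring,
      Real.rpow_neg pi_pos.le, Real.rpow_natCast]
  rw [harg]
  rw [mul_assoc (((k.factorial : ℕ) : ℝ)) (π ^ ((d:ℝ)/2)) (π ^ (-(d:ℝ)/2 - (k:ℝ))), hpow]

end StmtAux

open LagAux StmtAux Complex
open scoped RealInnerProductSpace

theorem stmt10 (d : ℕ) (hd : 1 ≤ d) (n : ℕ) :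
    ∀ y : EuclideanSpace ℝ (Fin d),
      𝓕 (fun x : EuclideanSpace ℝ (Fin d) =>
          ((laguerreL ((d : ℝ) / 2 - 1) n (2 * π * ‖x‖ ^ 2) * Real.exp (-π * ‖x‖ ^ 2) : ℝ) : ℂ))
        y =
      (((-1 : ℝ) ^ n *
          (laguerreL ((d : ℝ) / 2 - 1) n (2 * π * ‖y‖ ^ 2) * Real.exp (-π * ‖y‖ ^ 2)) : ℝ) : ℂ) := by
  intro y
  have hν : 0 < ((d:ℝ)/2 - 1) + 1 := by
    have : (1:ℝ) ≤ d := by exact_mod_cast hd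
    linarith
  set ν : ℝ := (d:ℝ)/2 - 1 with hνdef
  rw [Real.fourier_eq']
  have hint : ∀ v : EuclideanSpace ℝ (Fin d),
      Complex.exp ((↑(-2 * π * ⟪v, y⟫) * Complex.I))
          • ((laguerreL ν n (2 * π * ‖v‖ ^ 2) * Real.exp (-π * ‖v‖ ^ 2) : ℝ) : ℂ)
        = ∑ k ∈ Finset.range (n+1),
            ((lagC ν n k * (2*π)^k : ℝ) : ℂ) * Fk y k π v := by
    intro v
    rw [smul_eq_mul, laguerreL_eq]
    unfold Fk ker
    push_cast
    rw [Finset.sum_mul, Finset.mul_sum]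
    refine Finset.sum_congr rfl fun k _ => ?_
    rw [show (-(π:ℂ) * (‖v‖:ℂ)^2) = ((-π * ‖v‖^2 : ℝ) : ℂ) by push_cast; ring,
      ← Complex.ofReal_exp]
    push_cast
    ring
  rw [MeasureTheory.integral_congr_ae (Filter.Eventually.of_forall hint)]
  rw [MeasureTheory.integral_finset_sum _ (fun k _ =>
    (Fk_integrable y k pi_pos).const_mul _)]
  simp_rw [MeasureTheory.integral_const_mul]
  have hIk : ∀ k ∈ Finset.range (n+1),
      ((lagC ν n k * (2*π)^k : ℝ) : ℂ) * ∫ v, Fk y k π v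
        = ((lagC ν n k * (2*π)^k * G y k π : ℝ) : ℂ) := by
    intro k _
    rw [show (∫ v, Fk y k π v) = Ik y k π from rfl, Ik_eq_G hd y k pi_pos]
    push_cast
    ring
  rw [Finset.sum_congr rfl hIk]
  rw [← Complex.ofReal_sum]
  congr 1
  have hterm : ∀ k ∈ Finset.range (n+1),
      lagC ν n k * (2*π)^k * G y k π
        = ((-2:ℝ)^k * (Real.Gamma ((n:ℝ)+ν+1)
            / (Real.Gamma ((k:ℝ)+ν+1) * (((n-k).factorial : ℕ) : ℝ)))
              * laguerreL ν k (π * ‖y‖^2)) * Real.exp (-(π * ‖y‖^2)) := by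
    intro k _
    rw [G_at_pi hd y k]
    unfold lagC
    have hπk : (π:ℝ)^k ≠ 0 := by positivity
    have hkf : ((k.factorial : ℕ) : ℝ) ≠ 0 := Nat.cast_ne_zero.mpr k.factorial_ne_zero
    have hneg2 : (-2:ℝ)^k = (-1:ℝ)^k * 2^k := by rw [neg_pow]
    rw [hneg2, mul_pow]
    have h1 : π^k * (π^k)⁻¹ = 1 := mul_inv_cancel₀ hπk
    have h2 : ((k.factorial:ℕ):ℝ) * (((k.factorial:ℕ):ℝ))⁻¹ = 1 := mul_inv_cancel₀ hkf
    set E := Real.exp (-(π*‖y‖^2)) with hE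
    set L := laguerreL ν k (π*‖y‖^2) with hL
    set A := Real.Gamma ((n:ℝ)+ν+1)
        / (Real.Gamma ((k:ℝ)+ν+1) * (((n-k).factorial:ℕ):ℝ)) with hA
    linear_combination ((-1:ℝ)^k * 2^k * A * L * E * (((k.factorial:ℕ):ℝ)
        * (((k.factorial:ℕ):ℝ))⁻¹)) * h1 + ((-1:ℝ)^k * 2^k * A * L * E) * h2
  rw [Finset.sum_congr rfl hterm, ← Finset.sum_mul, lag_scale hν n (π * ‖y‖^2)]
  rw [show 2 * (π * ‖y‖^2) = 2 * π * ‖y‖^2 by ring,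
      show -(π * ‖y‖^2) = -π * ‖y‖^2 by ring]
  ring
end

section
/- Let a < b and let f, g: [a, b] → ℝ be nonnegative, measurable, bounded functions with ‖f‖_{L∞} ≤ 1. If g is nonincreasing on [a, b], then ∫_{b−‖f‖_{L¹}}^{b} g(x) dx ≤ ∫_a^b f(x)g(x) dx ≤ ∫_a^{a+‖f‖_{L¹}} g(x) dx, whereas the reverse inequalities hold if g is nondecreasing on [a, b]. -/
open MeasureTheory

lemma intInt_of_bound {a b a' b' C : ℝ} (h' : Set.Ioc a' b' ⊆ Set.Icc a b)
    (hab' : a' ≤ b') (h : ℝ → ℝ)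
    (hm : AEMeasurable h (volume.restrict (Set.Icc a b)))
    (hb : ∀ᵐ x ∂volume.restrict (Set.Icc a b), |h x| ≤ C) :
    IntervalIntegrable h volume a' b' := by
  rw [intervalIntegrable_iff_integrableOn_Ioc_of_le hab']
  have le : volume.restrict (Set.Ioc a' b') ≤ volume.restrict (Set.Icc a b) :=
    Measure.restrict_mono h' le_rfl
  exact Integrable.mono' ((integrableOn_const_iff (C := C)).mpr (Or.inr measure_Ioc_lt_top))
    ((hm.mono_measure le).aestronglyMeasurable) (hb.filter_mono (ae_mono le))

lemma key (a b M : ℝ) (hab : a ≤ b) (f g : ℝ → ℝ)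
    (hf_meas : AEMeasurable f (volume.restrict (Set.Icc a b)))
    (hg_meas : AEMeasurable g (volume.restrict (Set.Icc a b)))
    (hf0 : ∀ᵐ x ∂volume.restrict (Set.Icc a b), 0 ≤ f x)
    (hf1 : ∀ᵐ x ∂volume.restrict (Set.Icc a b), f x ≤ 1)
    (hgM : ∀ x ∈ Set.Icc a b, |g x| ≤ M)
    (hg_anti : AntitoneOn g (Set.Icc a b)) :
    (∫ x in a..b, f x * g x) ≤ ∫ x in a..(a + ∫ x in a..b, f x), g x := by
  -- basic a.e. bounds
  have hfb : ∀ᵐ x ∂volume.restrict (Set.Icc a b), |f x| ≤ 1 := by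
    filter_upwards [hf0, hf1] with x h0 h1
    rw [abs_le]; constructor <;> linarith
  have hgb : ∀ᵐ x ∂volume.restrict (Set.Icc a b), |g x| ≤ M := by
    filter_upwards [ae_restrict_mem measurableSet_Icc] with x hx
    exact hgM x hx
  have hfgb : ∀ᵐ x ∂volume.restrict (Set.Icc a b), |f x * g x| ≤ M := by
    filter_upwards [hfb, hgb] with x h1 h2
    rw [abs_mul]
    calc |f x| * |g x| ≤ 1 * M := by
          apply mul_le_mul h1 h2 (abs_nonneg _)
          exact zero_le_one
      _ = M := one_mul M
  have hIf : IntervalIntegrable f volume a b :=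
    intInt_of_bound Set.Ioc_subset_Icc_self hab f hf_meas hfb
  set c := ∫ x in a..b, f x with hc_def
  have hc0 : 0 ≤ c := by
    rw [hc_def]
    calc (0:ℝ) = ∫ _x in a..b, (0:ℝ) := by simp
      _ ≤ ∫ x in a..b, f x :=
        intervalIntegral.integral_mono_ae_restrict hab (by simp) hIf hf0
  have hcb : c ≤ b - a := by
    have : c ≤ ∫ _x in a..b, (1:ℝ) :=
      intervalIntegral.integral_mono_ae_restrict hab hIf (by simp) hf1
    simpa using this
  set p := a + c with hp_def
  have hap : a ≤ p := by linarith
  have hpb : p ≤ b := by linarith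
  have hpmem : p ∈ Set.Icc a b := ⟨hap, hpb⟩
  have hsub1 : Set.Ioc a p ⊆ Set.Icc a b := fun x hx => ⟨hx.1.le, hx.2.trans hpb⟩
  have hsub2 : Set.Ioc p b ⊆ Set.Icc a b := fun x hx => ⟨hap.trans hx.1.le, hx.2⟩
  have hIf1 : IntervalIntegrable f volume a p := intInt_of_bound hsub1 hap f hf_meas hfb
  have hIf2 : IntervalIntegrable f volume p b := intInt_of_bound hsub2 hpb f hf_meas hfb
  have hIg1 : IntervalIntegrable g volume a p := intInt_of_bound hsub1 hap g hg_meas hgb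
  have hfg_meas : AEMeasurable (fun x => f x * g x) (volume.restrict (Set.Icc a b)) :=
    hf_meas.mul hg_meas
  have hIfg1 : IntervalIntegrable (fun x => f x * g x) volume a p :=
    intInt_of_bound hsub1 hap _ hfg_meas hfgb
  have hIfg2 : IntervalIntegrable (fun x => f x * g x) volume p b :=
    intInt_of_bound hsub2 hpb _ hfg_meas hfgb
  -- split the integral
  have hsplit : (∫ x in a..b, f x * g x)
      = (∫ x in a..p, f x * g x) + ∫ x in p..b, f x * g x :=
    (intervalIntegral.integral_add_adjacent_intervals hIfg1 hIfg2).symm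
  -- a.e. restrictions to subintervals
  have le1 : volume.restrict (Set.Icc a p) ≤ volume.restrict (Set.Icc a b) :=
    Measure.restrict_mono (Set.Icc_subset_Icc le_rfl hpb) le_rfl
  have le2 : volume.restrict (Set.Icc p b) ≤ volume.restrict (Set.Icc a b) :=
    Measure.restrict_mono (Set.Icc_subset_Icc hap le_rfl) le_rfl
  -- first inequality on [a,p]
  have h1 : (∫ x in a..p, f x * g x) ≤ ∫ x in a..p, (g x + (f x - 1) * g p) := by
    apply intervalIntegral.integral_mono_ae_restrict hap hIfg1
    · exact hIg1.add ((hIf1.sub (intervalIntegrable_const)).mul_const _)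
    · filter_upwards [hf0.filter_mono (ae_mono le1), hf1.filter_mono (ae_mono le1),
        ae_restrict_mem measurableSet_Icc] with x h0 h1 hx
      have hgx : g p ≤ g x := hg_anti ⟨hx.1, hx.2.trans hpb⟩ hpmem hx.2
      nlinarith
  -- second inequality on [p,b]
  have h2 : (∫ x in p..b, f x * g x) ≤ ∫ x in p..b, f x * g p := by
    apply intervalIntegral.integral_mono_ae_restrict hpb hIfg2 (hIf2.mul_const _)
    filter_upwards [hf0.filter_mono (ae_mono le2),
      ae_restrict_mem measurableSet_Icc] with x h0 hx
    have hgx : g x ≤ g p := hg_anti hpmem ⟨hap.trans hx.1, hx.2⟩ hx.1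
    nlinarith
  -- compute the right-hand sides
  have e1 : (∫ x in a..p, (g x + (f x - 1) * g p))
      = (∫ x in a..p, g x) + ((∫ x in a..p, f x) - (p - a)) * g p := by
    rw [intervalIntegral.integral_add hIg1 ((hIf1.sub intervalIntegrable_const).mul_const _),
      intervalIntegral.integral_mul_const,
      intervalIntegral.integral_sub hIf1 intervalIntegrable_const]
    simp
  have e2 : (∫ x in p..b, f x * g p) = (∫ x in p..b, f x) * g p :=
    intervalIntegral.integral_mul_const _ _
  have esum : (∫ x in a..p, f x) + (∫ x in p..b, f x) = c := by
    rw [hc_def]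
    exact intervalIntegral.integral_add_adjacent_intervals hIf1 hIf2
  have hzero : ((∫ x in a..p, f x) - (p - a)) * g p + (∫ x in p..b, f x) * g p = 0 := by
    have hpa : p - a = c := by rw [hp_def]; ring
    linear_combination (g p) * esum - (g p) * hpa
  linarith [hsplit, h1, h2, e1 ▸ h1, e2 ▸ h2]

lemma key2 (a b M : ℝ) (hab : a ≤ b) (f g : ℝ → ℝ)
    (hf_meas : AEMeasurable f (volume.restrict (Set.Icc a b)))
    (hg_meas : AEMeasurable g (volume.restrict (Set.Icc a b)))
    (hf0 : ∀ᵐ x ∂volume.restrict (Set.Icc a b), 0 ≤ f x)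
    (hf1 : ∀ᵐ x ∂volume.restrict (Set.Icc a b), f x ≤ 1)
    (hgM : ∀ x ∈ Set.Icc a b, |g x| ≤ M)
    (hg_anti : AntitoneOn g (Set.Icc a b)) :
    (∫ x in (b - ∫ x in a..b, f x)..b, g x) ≤ ∫ x in a..b, f x * g x := by
  have hfb : ∀ᵐ x ∂volume.restrict (Set.Icc a b), |f x| ≤ 1 := by
    filter_upwards [hf0, hf1] with x h0 h1
    rw [abs_le]; constructor <;> linarith
  have hgb : ∀ᵐ x ∂volume.restrict (Set.Icc a b), |g x| ≤ M := by
    filter_upwards [ae_restrict_mem measurableSet_Icc] with x hx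
    exact hgM x hx
  have hfgb : ∀ᵐ x ∂volume.restrict (Set.Icc a b), |f x * g x| ≤ M := by
    filter_upwards [hfb, hgb] with x h1 h2
    rw [abs_mul]
    calc |f x| * |g x| ≤ 1 * M := by
          apply mul_le_mul h1 h2 (abs_nonneg _)
          exact zero_le_one
      _ = M := one_mul M
  have hIf : IntervalIntegrable f volume a b :=
    intInt_of_bound Set.Ioc_subset_Icc_self hab f hf_meas hfb
  set c := ∫ x in a..b, f x with hc_def
  have hc0 : 0 ≤ c := by
    rw [hc_def]
    calc (0:ℝ) = ∫ _x in a..b, (0:ℝ) := by simp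
      _ ≤ ∫ x in a..b, f x :=
        intervalIntegral.integral_mono_ae_restrict hab (by simp) hIf hf0
  have hcb : c ≤ b - a := by
    have : c ≤ ∫ _x in a..b, (1:ℝ) :=
      intervalIntegral.integral_mono_ae_restrict hab hIf (by simp) hf1
    simpa using this
  set p := b - c with hp_def
  have hap : a ≤ p := by rw [hp_def]; linarith
  have hpb : p ≤ b := by rw [hp_def]; linarith
  have hpmem : p ∈ Set.Icc a b := ⟨hap, hpb⟩
  have hsub1 : Set.Ioc a p ⊆ Set.Icc a b := fun x hx => ⟨hx.1.le, hx.2.trans hpb⟩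
  have hsub2 : Set.Ioc p b ⊆ Set.Icc a b := fun x hx => ⟨hap.trans hx.1.le, hx.2⟩
  have hIf1 : IntervalIntegrable f volume a p := intInt_of_bound hsub1 hap f hf_meas hfb
  have hIf2 : IntervalIntegrable f volume p b := intInt_of_bound hsub2 hpb f hf_meas hfb
  have hIg2 : IntervalIntegrable g volume p b := intInt_of_bound hsub2 hpb g hg_meas hgb
  have hfg_meas : AEMeasurable (fun x => f x * g x) (volume.restrict (Set.Icc a b)) :=
    hf_meas.mul hg_meas
  have hIfg1 : IntervalIntegrable (fun x => f x * g x) volume a p :=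
    intInt_of_bound hsub1 hap _ hfg_meas hfgb
  have hIfg2 : IntervalIntegrable (fun x => f x * g x) volume p b :=
    intInt_of_bound hsub2 hpb _ hfg_meas hfgb
  have hsplit : (∫ x in a..b, f x * g x)
      = (∫ x in a..p, f x * g x) + ∫ x in p..b, f x * g x :=
    (intervalIntegral.integral_add_adjacent_intervals hIfg1 hIfg2).symm
  have le1 : volume.restrict (Set.Icc a p) ≤ volume.restrict (Set.Icc a b) :=
    Measure.restrict_mono (Set.Icc_subset_Icc le_rfl hpb) le_rfl
  have le2 : volume.restrict (Set.Icc p b) ≤ volume.restrict (Set.Icc a b) :=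
    Measure.restrict_mono (Set.Icc_subset_Icc hap le_rfl) le_rfl
  -- on [a,p] : f x * g p ≤ f x * g x
  have h1 : (∫ x in a..p, f x * g p) ≤ ∫ x in a..p, f x * g x := by
    apply intervalIntegral.integral_mono_ae_restrict hap (hIf1.mul_const _) hIfg1
    filter_upwards [hf0.filter_mono (ae_mono le1),
      ae_restrict_mem measurableSet_Icc] with x h0 hx
    have hgx : g p ≤ g x := hg_anti ⟨hx.1, hx.2.trans hpb⟩ hpmem hx.2
    nlinarith
  -- on [p,b] : g x + (f x - 1) * g p ≤ f x * g x
  have h2 : (∫ x in p..b, (g x + (f x - 1) * g p)) ≤ ∫ x in p..b, f x * g x := by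
    apply intervalIntegral.integral_mono_ae_restrict hpb
      (hIg2.add ((hIf2.sub intervalIntegrable_const).mul_const _)) hIfg2
    filter_upwards [hf1.filter_mono (ae_mono le2),
      ae_restrict_mem measurableSet_Icc] with x h1 hx
    have hgx : g x ≤ g p := hg_anti hpmem ⟨hap.trans hx.1, hx.2⟩ hx.1
    nlinarith
  have e1 : (∫ x in a..p, f x * g p) = (∫ x in a..p, f x) * g p :=
    intervalIntegral.integral_mul_const _ _
  have e2 : (∫ x in p..b, (g x + (f x - 1) * g p))
      = (∫ x in p..b, g x) + ((∫ x in p..b, f x) - (b - p)) * g p := by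
    rw [intervalIntegral.integral_add hIg2 ((hIf2.sub intervalIntegrable_const).mul_const _),
      intervalIntegral.integral_mul_const,
      intervalIntegral.integral_sub hIf2 intervalIntegrable_const]
    simp
  have esum : (∫ x in a..p, f x) + (∫ x in p..b, f x) = c := by
    rw [hc_def]
    exact intervalIntegral.integral_add_adjacent_intervals hIf1 hIf2
  have hzero : (∫ x in a..p, f x) * g p + ((∫ x in p..b, f x) - (b - p)) * g p = 0 := by
    have hpa : b - p = c := by rw [hp_def]; ring
    linear_combination (g p) * esum - (g p) * hpa
  linarith [hsplit, e1 ▸ h1, e2 ▸ h2]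

theorem stmt11 (a b : ℝ) (hab : a < b) (f g : ℝ → ℝ)
    (hf_meas : AEMeasurable f (volume.restrict (Set.Icc a b)))
    (hg_meas : AEMeasurable g (volume.restrict (Set.Icc a b)))
    (hf_nonneg : ∀ x ∈ Set.Icc a b, 0 ≤ f x)
    (hg_nonneg : ∀ x ∈ Set.Icc a b, 0 ≤ g x)
    (hg_bdd : ∃ M : ℝ, ∀ x ∈ Set.Icc a b, g x ≤ M)
    (hf_le_one : ∀ᵐ x ∂volume.restrict (Set.Icc a b), f x ≤ 1) :
    (AntitoneOn g (Set.Icc a b) →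
      (∫ x in (b - ∫ x in a..b, |f x|)..b, g x) ≤ (∫ x in a..b, f x * g x) ∧
      (∫ x in a..b, f x * g x) ≤ ∫ x in a..(a + ∫ x in a..b, |f x|), g x) ∧
    (MonotoneOn g (Set.Icc a b) →
      (∫ x in a..(a + ∫ x in a..b, |f x|), g x) ≤ (∫ x in a..b, f x * g x) ∧
      (∫ x in a..b, f x * g x) ≤ ∫ x in (b - ∫ x in a..b, |f x|)..b, g x) := by
  obtain ⟨M, hM⟩ := hg_bdd
  have hgM : ∀ x ∈ Set.Icc a b, |g x| ≤ M := fun x hx => by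
    rw [abs_of_nonneg (hg_nonneg x hx)]; exact hM x hx
  have hgM' : ∀ x ∈ Set.Icc a b, |(-g x)| ≤ M := fun x hx => by
    rw [abs_neg]; exact hgM x hx
  have hf0 : ∀ᵐ x ∂volume.restrict (Set.Icc a b), 0 ≤ f x := by
    filter_upwards [ae_restrict_mem measurableSet_Icc] with x hx
    exact hf_nonneg x hx
  have habs : (∫ x in a..b, |f x|) = ∫ x in a..b, f x := by
    apply intervalIntegral.integral_congr
    intro x hx
    exact abs_of_nonneg (hf_nonneg x (by rwa [Set.uIcc_of_le hab.le] at hx))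
  rw [habs]
  constructor
  · intro hg_anti
    exact ⟨key2 a b M hab.le f g hf_meas hg_meas hf0 hf_le_one hgM hg_anti,
      key a b M hab.le f g hf_meas hg_meas hf0 hf_le_one hgM hg_anti⟩
  · intro hg_mono
    have hg_anti : AntitoneOn (fun x => -g x) (Set.Icc a b) :=
      fun x hx y hy hxy => neg_le_neg (hg_mono hx hy hxy)
    have h1 := key a b M hab.le f (fun x => -g x) hf_meas hg_meas.neg hf0 hf_le_one
      hgM' hg_anti
    have h2 := key2 a b M hab.le f (fun x => -g x) hf_meas hg_meas.neg hf0 hf_le_one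
      hgM' hg_anti
    simp only [mul_neg, intervalIntegral.integral_neg] at h1 h2
    exact ⟨by linarith, by linarith⟩
end

section
/- Let a < b and let f, g: [a, b] → ℝ be nonnegative, measurable, bounded functions with ‖f‖_{L∞} ≤ 1. Then inf_J ∫_J g ≤ ∫_{[a,b]} f·g ≤ sup_J ∫_J g, where the infimum and supremum are taken over all measurable subsets J ⊆ [a, b] of Lebesgue measure |J| = ‖f‖_{L¹}. -/
open MeasureTheory Set Filter Topology

lemma exists_subset_volume_eq {A : Set ℝ} (hA : MeasurableSet A) (hfin : volume A ≠ ⊤)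
    {r : ENNReal} (hr : r ≤ volume A) : ∃ E, E ⊆ A ∧ MeasurableSet E ∧ volume E = r := by
  rcases eq_or_lt_of_le hr with heq | hlt
  · exact ⟨A, subset_rfl, hA, heq.symm⟩
  rcases eq_or_ne r 0 with rfl | hr0
  · exact ⟨∅, empty_subset _, MeasurableSet.empty, measure_empty⟩
  have hrtop : r ≠ ⊤ := (hlt.trans_le le_top).ne
  have hfin' : ∀ s : ℝ, volume (A ∩ Set.Iic s) ≠ ⊤ := fun s =>
    ne_top_of_le_ne_top hfin (measure_mono inter_subset_left)
  set h : ℝ → ℝ := fun s => (volume (A ∩ Set.Iic s)).toReal with hh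
  have hlip : LipschitzWith 1 h := by
    apply LipschitzWith.of_le_add
    intro x y
    rcases le_total x y with hxy | hxy
    · have : h x ≤ h y :=
        ENNReal.toReal_mono (hfin' y) (measure_mono (inter_subset_inter_right _ (Iic_subset_Iic.2 hxy)))
      linarith [dist_nonneg (x := x) (y := y)]
    · have hsub : A ∩ Set.Iic x ⊆ (A ∩ Set.Iic y) ∪ Set.Ioc y x := by
        intro z hz
        rcases le_or_gt z y with hzy | hzy
        · exact Or.inl ⟨hz.1, hzy⟩
        · exact Or.inr ⟨hzy, hz.2⟩
      have h1 : volume (A ∩ Set.Iic x) ≤ volume (A ∩ Set.Iic y) + ENNReal.ofReal (x - y) := by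
        calc volume (A ∩ Set.Iic x) ≤ volume ((A ∩ Set.Iic y) ∪ Set.Ioc y x) := measure_mono hsub
        _ ≤ volume (A ∩ Set.Iic y) + volume (Set.Ioc y x) := measure_union_le _ _
        _ = volume (A ∩ Set.Iic y) + ENNReal.ofReal (x - y) := by rw [Real.volume_Ioc]
      have h2 : h x ≤ h y + (x - y) := by
        have := ENNReal.toReal_mono (by
          exact ENNReal.add_ne_top.2 ⟨hfin' y, ENNReal.ofReal_ne_top⟩) h1
        rwa [ENNReal.toReal_add (hfin' y) ENNReal.ofReal_ne_top,
          ENNReal.toReal_ofReal (by linarith)] at this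
      have : x - y ≤ dist x y := by
        rw [Real.dist_eq]; exact le_abs_self _
      linarith
  have hcont : Continuous h := hlip.continuous
  -- upper limit
  have hunion : (⋃ n : ℕ, A ∩ Set.Iic (n : ℝ)) = A := by
    ext x
    simp only [Set.mem_iUnion, Set.mem_inter_iff, Set.mem_Iic]
    exact ⟨fun ⟨n, hn⟩ => hn.1, fun hx => by obtain ⟨n, hn⟩ := exists_nat_ge x; exact ⟨n, hx, hn⟩⟩
  have hup : Tendsto (fun n : ℕ => volume (A ∩ Set.Iic (n : ℝ))) atTop (𝓝 (volume A)) := by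
    have := tendsto_measure_iUnion_atTop (μ := volume)
      (s := fun n : ℕ => A ∩ Set.Iic (n : ℝ))
      (fun m n hmn => inter_subset_inter_right _ (Iic_subset_Iic.2 (by exact_mod_cast hmn)))
    rwa [hunion] at this
  have hupR : Tendsto (fun n : ℕ => h (n : ℝ)) atTop (𝓝 (volume A).toReal) :=
    (ENNReal.tendsto_toReal hfin).comp hup
  have hltR : r.toReal < (volume A).toReal :=
    (ENNReal.toReal_lt_toReal hrtop hfin).2 hlt
  have ev1 : ∀ᶠ n : ℕ in atTop, r.toReal < h (n : ℝ) := hupR.eventually (eventually_gt_nhds hltR)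
  -- lower limit
  have hinter : (⋂ n : ℕ, A ∩ Set.Iic (-(n : ℝ))) = ∅ := by
    ext x
    simp only [Set.mem_iInter, Set.mem_inter_iff, Set.mem_Iic, Set.mem_empty_iff_false, iff_false]
    intro hx
    obtain ⟨n, hn⟩ := exists_nat_gt (-x)
    have := (hx n).2
    linarith
  have hdown : Tendsto (fun n : ℕ => volume (A ∩ Set.Iic (-(n : ℝ)))) atTop (𝓝 0) := by
    have := tendsto_measure_iInter_atTop (μ := volume)
      (s := fun n : ℕ => A ∩ Set.Iic (-(n : ℝ)))
      (fun n => ((hA.inter measurableSet_Iic).nullMeasurableSet))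
      (fun m n hmn => inter_subset_inter_right _ (Iic_subset_Iic.2 (neg_le_neg (by exact_mod_cast hmn))))
      ⟨0, hfin' _⟩
    rwa [hinter, measure_empty] at this
  have hdownR : Tendsto (fun n : ℕ => h (-(n : ℝ))) atTop (𝓝 0) := by
    have := (ENNReal.tendsto_toReal (by simp : (0:ENNReal) ≠ ⊤)).comp hdown
    exact this
  have hrpos : 0 < r.toReal := ENNReal.toReal_pos hr0 hrtop
  have ev2 : ∀ᶠ n : ℕ in atTop, h (-(n : ℝ)) < r.toReal := hdownR.eventually (eventually_lt_nhds hrpos)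
  obtain ⟨n, hn1, hn2⟩ := (ev1.and ev2).exists
  have hmem : r.toReal ∈ Set.Icc (h (-(n : ℝ))) (h (n : ℝ)) := ⟨hn2.le, hn1.le⟩
  have hsub := intermediate_value_Icc (by
    have : (0:ℝ) ≤ (n:ℝ) := n.cast_nonneg
    linarith : -(n:ℝ) ≤ (n:ℝ)) hcont.continuousOn
  obtain ⟨s, _, hs⟩ := hsub hmem
  refine ⟨A ∩ Set.Iic s, inter_subset_left, hA.inter measurableSet_Iic, ?_⟩
  exact (ENNReal.toReal_eq_toReal_iff' (hfin' s) hrtop).1 hs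

lemma bathtub_upper (a b : ℝ) (hab : a ≤ b) (f g : ℝ → ℝ) (M : ℝ)
    (hf : AEMeasurable f (volume.restrict (Set.Icc a b)))
    (hg : AEMeasurable g (volume.restrict (Set.Icc a b)))
    (hf0 : ∀ᵐ x ∂volume.restrict (Set.Icc a b), 0 ≤ f x)
    (hf1 : ∀ᵐ x ∂volume.restrict (Set.Icc a b), f x ≤ 1)
    (hgM : ∀ᵐ x ∂volume.restrict (Set.Icc a b), |g x| ≤ M) :
    ∃ J, J ⊆ Set.Icc a b ∧ MeasurableSet J ∧
      volume J = ENNReal.ofReal (∫ x in Set.Icc a b, f x) ∧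
      ∫ x in Set.Icc a b, f x * g x ≤ ∫ x in J, g x := by
  set μ := volume.restrict (Set.Icc a b) with hμ
  haveI : IsFiniteMeasure μ := by
    constructor
    rw [hμ, Measure.restrict_apply_univ, Real.volume_Icc]
    exact ENNReal.ofReal_lt_top
  set g' := hg.mk g with hg'def
  have hg'meas : Measurable g' := hg.measurable_mk
  have hgg' : g =ᵐ[μ] g' := hg.ae_eq_mk
  set K := |M| with hK
  have hg'K : ∀ᵐ x ∂μ, |g' x| ≤ K := by
    filter_upwards [hgg', hgM] with x h1 h2
    rw [← h1]; exact h2.trans (le_abs_self M)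
  -- integrability
  have intf : Integrable f μ := by
    refine (integrable_const (1:ℝ)).mono' hf.aestronglyMeasurable ?_
    filter_upwards [hf0, hf1] with x h0 h1
    rw [Real.norm_eq_abs, abs_of_nonneg h0]; exact h1
  have intg : Integrable g μ := by
    refine (integrable_const K).mono' hg.aestronglyMeasurable ?_
    filter_upwards [hgg', hg'K] with x h1 h2
    rw [Real.norm_eq_abs, h1]; exact h2
  have intg' : Integrable g' μ := intg.congr hgg'
  set m := ∫ x in Set.Icc a b, f x with hm
  have hm0 : 0 ≤ m := integral_nonneg_of_ae hf0
  have hmba : m ≤ b - a := by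
    have h1 : ∫ x, f x ∂μ ≤ ∫ _x, (1:ℝ) ∂μ := integral_mono_ae intf (integrable_const 1) hf1
    have h2 : ∫ _x, (1:ℝ) ∂μ = b - a := by
      rw [integral_const, hμ, measureReal_def, Measure.restrict_apply_univ, Real.volume_Icc, smul_eq_mul, mul_one,
        ENNReal.toReal_ofReal (by linarith)]
    rw [hm]; rw [h2] at h1; exact h1
  set m' := ENNReal.ofReal m with hm'
  have hm'univ : m' ≤ μ Set.univ := by
    rw [hμ, Measure.restrict_apply_univ, Real.volume_Icc]
    exact ENNReal.ofReal_le_ofReal hmba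
  -- the level set threshold
  set S := {t : ℝ | -(K + 1) ≤ t ∧ μ {x | t < g' x} ≤ m'} with hS
  have hKS : K ∈ S := by
    constructor
    · have : (0:ℝ) ≤ K := abs_nonneg M
      linarith
    · have : μ {x | K < g' x} = 0 := by
        rw [measure_eq_zero_iff_ae_notMem]
        filter_upwards [hg'K] with x hx
        simp only [Set.mem_setOf_eq, not_lt]
        exact le_trans (le_abs_self _) hx
      simp [this]
  have hSne : S.Nonempty := ⟨K, hKS⟩
  have hSbd : BddBelow S := ⟨-(K + 1), fun t ht => ht.1⟩
  set t₀ := sInf S with ht₀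
  have ht₀K : t₀ ≤ K := csInf_le hSbd hKS
  -- Claim A
  have claimA : μ {x | t₀ < g' x} ≤ m' := by
    have key : ∀ t : ℝ, t₀ < t → μ {x | t < g' x} ≤ m' := by
      intro t ht
      obtain ⟨u, huS, hut⟩ := exists_lt_of_csInf_lt hSne ht
      exact le_trans (measure_mono fun x hx => lt_trans hut hx) huS.2
    have hun : {x : ℝ | t₀ < g' x} = ⋃ n : ℕ, {x | t₀ + 1/(n+1) < g' x} := by
      ext x
      simp only [Set.mem_setOf_eq, Set.mem_iUnion]
      constructor
      · intro hx
        obtain ⟨n, hn⟩ := exists_nat_one_div_lt (sub_pos.2 hx)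
        exact ⟨n, by push_cast at hn ⊢; linarith⟩
      · rintro ⟨n, hn⟩
        have : (0:ℝ) < 1/((n:ℝ)+1) := by positivity
        linarith
    rw [hun]
    have hmono : Monotone fun n : ℕ => {x : ℝ | t₀ + 1/((n:ℝ)+1) < g' x} := by
      intro p q hpq x hx
      simp only [Set.mem_setOf_eq] at hx ⊢
      have h1 : 1/((q:ℝ)+1) ≤ 1/((p:ℝ)+1) := by
        apply one_div_le_one_div_of_le (by positivity)
        exact_mod_cast add_le_add_left (Nat.cast_le.2 hpq) 1
      linarith
    have htend := tendsto_measure_iUnion_atTop (μ := μ) hmono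
    refine le_of_tendsto' htend fun n => ?_
    refine key _ ?_
    have : (0:ℝ) < 1/((n:ℝ)+1) := by positivity
    linarith
  -- Claim B
  have claimB : m' ≤ μ {x | t₀ ≤ g' x} := by
    have key : ∀ t : ℝ, t < t₀ → m' ≤ μ {x | t < g' x} := by
      intro t ht
      rcases lt_or_ge t (-(K+1)) with htK | htK
      · refine le_trans hm'univ (measure_mono_ae ?_)
        filter_upwards [hg'K] with x hx
        intro _
        show t < g' x
        have : -K ≤ g' x := neg_le_of_abs_le hx
        linarith
      · have hnS : t ∉ S := notMem_of_lt_csInf ht hSbd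
        rw [hS] at hnS
        simp only [Set.mem_setOf_eq, not_and, not_le] at hnS
        exact (hnS htK).le
    have hin : {x : ℝ | t₀ ≤ g' x} = ⋂ n : ℕ, {x | t₀ - 1/((n:ℝ)+1) < g' x} := by
      ext x
      simp only [Set.mem_setOf_eq, Set.mem_iInter]
      constructor
      · intro hx n
        have : (0:ℝ) < 1/((n:ℝ)+1) := by positivity
        linarith
      · intro hx
        by_contra hcon
        push_neg at hcon
        obtain ⟨n, hn⟩ := exists_nat_one_div_lt (sub_pos.2 hcon)
        have := hx n
        push_cast at hn
        linarith
    rw [hin]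
    have hanti : Antitone fun n : ℕ => {x : ℝ | t₀ - 1/((n:ℝ)+1) < g' x} := by
      intro p q hpq x hx
      simp only [Set.mem_setOf_eq] at hx ⊢
      have h1 : 1/((q:ℝ)+1) ≤ 1/((p:ℝ)+1) := by
        apply one_div_le_one_div_of_le (by positivity)
        exact_mod_cast add_le_add_left (Nat.cast_le.2 hpq) 1
      linarith
    have htend := tendsto_measure_iInter_atTop (μ := μ)
      (fun n => (hg'meas measurableSet_Ioi).nullMeasurableSet) hanti
      ⟨0, measure_ne_top μ _⟩
    refine ge_of_tendsto' htend fun n => ?_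
    refine key _ ?_
    have : (0:ℝ) < 1/((n:ℝ)+1) := by positivity
    linarith
  -- construct J
  set Agt := {x | t₀ < g' x} ∩ Set.Icc a b with hAgt
  have hAgtmeas : MeasurableSet Agt := (hg'meas measurableSet_Ioi).inter measurableSet_Icc
  have hmsetA : MeasurableSet {x : ℝ | t₀ < g' x} := measurableSet_lt measurable_const hg'meas
  have hmsetB : MeasurableSet {x : ℝ | t₀ ≤ g' x} := measurableSet_le measurable_const hg'meas
  have hvolAgt : volume Agt ≤ m' := by
    rw [hAgt]
    rw [hμ, Measure.restrict_apply hmsetA] at claimA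
    exact claimA
  set D := {x | g' x = t₀} ∩ Set.Icc a b with hD
  have hDmeas : MeasurableSet D := (hg'meas (measurableSet_singleton t₀)).inter measurableSet_Icc
  have hDfin : volume D ≠ ⊤ := by
    refine ne_top_of_le_ne_top ?_ (measure_mono Set.inter_subset_right)
    rw [Real.volume_Icc]; exact ENNReal.ofReal_ne_top
  have hdisj : Disjoint Agt D := by
    rw [Set.disjoint_left]
    rintro x ⟨hx1, -⟩ ⟨hx2, -⟩
    simp only [Set.mem_setOf_eq] at hx1 hx2
    exact absurd hx2 (ne_of_gt hx1)
  have hsplit : {x | t₀ ≤ g' x} ∩ Set.Icc a b = Agt ∪ D := by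
    rw [hAgt, hD, ← Set.union_inter_distrib_right]
    congr 1
    ext x
    simp only [Set.mem_setOf_eq, Set.mem_union]
    constructor
    · intro hx; rcases lt_or_eq_of_le hx with h | h
      · exact Or.inl h
      · exact Or.inr h.symm
    · rintro (h | h)
      · exact h.le
      · exact h.ge
  have hsum : m' ≤ volume Agt + volume D := by
    rw [hμ, Measure.restrict_apply hmsetB] at claimB
    calc m' ≤ volume ({x | t₀ ≤ g' x} ∩ Set.Icc a b) := claimB
    _ = volume (Agt ∪ D) := by rw [hsplit]
    _ ≤ volume Agt + volume D := measure_union_le _ _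
  have hrD : m' - volume Agt ≤ volume D := tsub_le_iff_left.2 hsum
  obtain ⟨E, hED, hEmeas, hEvol⟩ := exists_subset_volume_eq hDmeas hDfin hrD
  set J := Agt ∪ E with hJ
  have hJsub : J ⊆ Set.Icc a b :=
    Set.union_subset Set.inter_subset_right fun x hx => (hED hx).2
  have hJmeas : MeasurableSet J := hAgtmeas.union hEmeas
  have hvolJ : volume J = m' := by
    rw [hJ, measure_union (hdisj.mono_right hED) hEmeas, hEvol,
      add_tsub_cancel_of_le hvolAgt]
  have hJlow : ∀ x ∈ J, t₀ ≤ g' x := by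
    rintro x (hx | hx)
    · exact (hx.1 : t₀ < g' x).le
    · exact ((hED hx).1 : g' x = t₀).ge
  have hJup : ∀ x ∈ Set.Icc a b, x ∉ J → g' x ≤ t₀ := by
    intro x hxI hxJ
    by_contra hcon
    exact hxJ (Or.inl ⟨lt_of_not_ge hcon, hxI⟩)
  -- indicator function
  set χ := (J.indicator fun _ => (1:ℝ)) with hχ
  have hχmeas : Measurable χ := measurable_const.indicator hJmeas
  have intχ : Integrable χ μ := (integrable_const (1:ℝ)).indicator hJmeas
  have hintχ : ∫ x, χ x ∂μ = m := by
    rw [hχ, integral_indicator_const (1:ℝ) hJmeas, smul_eq_mul, mul_one,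
      hμ, measureReal_def, Measure.restrict_apply hJmeas, Set.inter_eq_self_of_subset_left hJsub,
      hvolJ, hm', ENNReal.toReal_ofReal hm0]
  have hφint : Integrable (fun x => f x - χ x) μ := intf.sub intχ
  have hφint0 : ∫ x, (f x - χ x) ∂μ = 0 := by
    rw [integral_sub intf intχ, hintχ, ← hm, sub_self]
  have hmemI : ∀ᵐ x ∂μ, x ∈ Set.Icc a b := by
    rw [hμ]; exact ae_restrict_mem measurableSet_Icc
  have hχbd : ∀ x, |f x - χ x| ≤ 1 → True := fun _ _ => trivial
  have hkey : ∀ᵐ x ∂μ, (f x - χ x) * g' x ≤ (f x - χ x) * t₀ := by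
    filter_upwards [hf0, hf1, hmemI] with x h0 h1 hxI
    by_cases hxJ : x ∈ J
    · have hg : t₀ ≤ g' x := hJlow x hxJ
      have hχx : χ x = 1 := by rw [hχ, Set.indicator_of_mem hxJ]
      rw [hχx]
      exact mul_le_mul_of_nonpos_left hg (by linarith)
    · have hg : g' x ≤ t₀ := hJup x hxI hxJ
      have hχx : χ x = 0 := by rw [hχ, Set.indicator_of_notMem hxJ]
      rw [hχx]
      exact mul_le_mul_of_nonneg_left hg (by linarith)
  have hφabs : ∀ᵐ x ∂μ, |f x - χ x| ≤ 1 := by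
    filter_upwards [hf0, hf1] with x h0 h1
    have : χ x = 0 ∨ χ x = 1 := by
      by_cases hxJ : x ∈ J
      · exact Or.inr (by rw [hχ, Set.indicator_of_mem hxJ])
      · exact Or.inl (by rw [hχ, Set.indicator_of_notMem hxJ])
    rcases this with h | h <;> rw [h] <;> rw [abs_le] <;> constructor <;> linarith
  have hφaem : AEMeasurable (fun x => f x - χ x) μ := hf.sub hχmeas.aemeasurable
  have intφg' : Integrable (fun x => (f x - χ x) * g' x) μ := by
    refine (integrable_const K).mono' (hφaem.mul hg'meas.aemeasurable).aestronglyMeasurable ?_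
    filter_upwards [hφabs, hg'K] with x h1 h2
    rw [Real.norm_eq_abs, abs_mul]
    calc |f x - χ x| * |g' x| ≤ 1 * K := by
          exact mul_le_mul h1 h2 (abs_nonneg _) zero_le_one
    _ = K := one_mul K
  have intφt : Integrable (fun x => (f x - χ x) * t₀) μ := hφint.mul_const t₀
  have step : ∫ x, (f x - χ x) * g' x ∂μ ≤ 0 := by
    calc ∫ x, (f x - χ x) * g' x ∂μ ≤ ∫ x, (f x - χ x) * t₀ ∂μ :=
          integral_mono_ae intφg' intφt hkey
    _ = (∫ x, (f x - χ x) ∂μ) * t₀ := by rw [integral_mul_const]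
    _ = 0 := by rw [hφint0, zero_mul]
  have hcongr : ∫ x, (f x - χ x) * g x ∂μ = ∫ x, (f x - χ x) * g' x ∂μ := by
    refine integral_congr_ae ?_
    filter_upwards [hgg'] with x hx
    rw [hx]
  have hindg : ∀ x, χ x * g x = J.indicator g x := by
    intro x
    by_cases h : x ∈ J
    · rw [hχ, Set.indicator_of_mem h, Set.indicator_of_mem h, one_mul]
    · rw [hχ, Set.indicator_of_notMem h, Set.indicator_of_notMem h, zero_mul]
  have hrestr : μ.restrict J = volume.restrict J := by
    rw [hμ, Measure.restrict_restrict hJmeas, Set.inter_eq_self_of_subset_left hJsub]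
  have hind : ∫ x, χ x * g x ∂μ = ∫ x in J, g x := by
    rw [integral_congr_ae (ae_of_all _ hindg), integral_indicator hJmeas, hrestr]
  have intχg : Integrable (fun x => χ x * g x) μ :=
    (intg.indicator hJmeas).congr (ae_of_all _ fun x => (hindg x).symm)
  have intfg : Integrable (fun x => f x * g x) μ := by
    refine (integrable_const K).mono' (hf.mul hg).aestronglyMeasurable ?_
    filter_upwards [hf0, hf1, hgg', hg'K] with x h0 h1 h2 h3
    rw [Real.norm_eq_abs, abs_mul, abs_of_nonneg h0, h2]
    calc f x * |g' x| ≤ 1 * K := mul_le_mul h1 h3 (abs_nonneg _) zero_le_one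
    _ = K := one_mul K
  have hfinal : ∫ x, f x * g x ∂μ - ∫ x in J, g x ≤ 0 := by
    rw [← hind, ← integral_sub intfg intχg]
    have : ∫ x, (f x * g x - χ x * g x) ∂μ = ∫ x, (f x - χ x) * g x ∂μ := by
      congr 1
      ext x
      ring
    rw [this, hcongr]
    exact step
  refine ⟨J, hJsub, hJmeas, by rw [hvolJ, hm'], by linarith⟩


theorem stmt12 (a b : ℝ) (hab : a < b) (f g : ℝ → ℝ)
    (hf_meas : AEMeasurable f (volume.restrict (Set.Icc a b)))
    (hg_meas : AEMeasurable g (volume.restrict (Set.Icc a b)))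
    (hf_nonneg : ∀ x ∈ Set.Icc a b, 0 ≤ f x)
    (hg_nonneg : ∀ x ∈ Set.Icc a b, 0 ≤ g x)
    (hg_bdd : ∃ M : ℝ, ∀ x ∈ Set.Icc a b, g x ≤ M)
    (hf_le_one : ∀ᵐ x ∂volume.restrict (Set.Icc a b), f x ≤ 1) :
    sInf {v : ℝ | ∃ J : Set ℝ, J ⊆ Set.Icc a b ∧ MeasurableSet J ∧
        volume J = ENNReal.ofReal (∫ x in a..b, |f x|) ∧ v = ∫ x in J, g x} ≤
      (∫ x in Set.Icc a b, f x * g x) ∧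
    (∫ x in Set.Icc a b, f x * g x) ≤
      sSup {v : ℝ | ∃ J : Set ℝ, J ⊆ Set.Icc a b ∧ MeasurableSet J ∧
        volume J = ENNReal.ofReal (∫ x in a..b, |f x|) ∧ v = ∫ x in J, g x} := by
  obtain ⟨M, hM⟩ := hg_bdd
  have haI : a ∈ Set.Icc a b := ⟨le_refl a, hab.le⟩
  have hM0 : 0 ≤ M := le_trans (hg_nonneg a haI) (hM a haI)
  have hmemI : ∀ᵐ x ∂volume.restrict (Set.Icc a b), x ∈ Set.Icc a b :=
    ae_restrict_mem measurableSet_Icc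
  have hf0ae : ∀ᵐ x ∂volume.restrict (Set.Icc a b), 0 ≤ f x := by
    filter_upwards [hmemI] with x hx
    exact hf_nonneg x hx
  have hgM : ∀ᵐ x ∂volume.restrict (Set.Icc a b), |g x| ≤ M := by
    filter_upwards [hmemI] with x hx
    rw [abs_of_nonneg (hg_nonneg x hx)]
    exact hM x hx
  have hmeq : (∫ x in a..b, |f x|) = ∫ x in Set.Icc a b, f x := by
    rw [intervalIntegral.integral_of_le hab.le, ← integral_Icc_eq_integral_Ioc]
    refine integral_congr_ae ?_
    filter_upwards [hf0ae] with x hx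
    exact abs_of_nonneg hx
  -- upper bound J
  obtain ⟨J₂, hJ₂sub, hJ₂meas, hJ₂vol, hJ₂le⟩ :=
    bathtub_upper a b hab.le f g M hf_meas hg_meas hf0ae hf_le_one hgM
  -- lower bound J via -g
  have hgM' : ∀ᵐ x ∂volume.restrict (Set.Icc a b), |(fun y => -g y) x| ≤ M := by
    filter_upwards [hgM] with x hx
    rw [abs_neg]; exact hx
  obtain ⟨J₁, hJ₁sub, hJ₁meas, hJ₁vol, hJ₁le⟩ :=
    bathtub_upper a b hab.le f (fun y => -g y) M hf_meas hg_meas.neg hf0ae hf_le_one hgM'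
  have hJ₁le' : ∫ x in J₁, g x ≤ ∫ x in Set.Icc a b, f x * g x := by
    have h1 : ∫ x in Set.Icc a b, f x * -g x = -∫ x in Set.Icc a b, f x * g x := by
      simp only [mul_neg]
      exact integral_neg _
    have h2 : ∫ x in J₁, -g x = -∫ x in J₁, g x := integral_neg _
    rw [h1, h2] at hJ₁le
    linarith
  set Sv := {v : ℝ | ∃ J : Set ℝ, J ⊆ Set.Icc a b ∧ MeasurableSet J ∧
      volume J = ENNReal.ofReal (∫ x in a..b, |f x|) ∧ v = ∫ x in J, g x} with hSv
  have hmem₁ : (∫ x in J₁, g x) ∈ Sv := ⟨J₁, hJ₁sub, hJ₁meas, by rw [hmeq]; exact hJ₁vol, rfl⟩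
  have hmem₂ : (∫ x in J₂, g x) ∈ Sv := ⟨J₂, hJ₂sub, hJ₂meas, by rw [hmeq]; exact hJ₂vol, rfl⟩
  have hbound : ∀ v ∈ Sv, |v| ≤ M * (b - a) := by
    rintro v ⟨J, hJsub, hJmeas, hJvol, rfl⟩
    have hvfin : volume J < ⊤ := by rw [hJvol]; exact ENNReal.ofReal_lt_top
    have hb := norm_setIntegral_le_of_norm_le_const_ae' (μ := volume) (f := g) hvfin
      (ae_of_all _ fun x hx => by
        rw [Real.norm_eq_abs, abs_of_nonneg (hg_nonneg x (hJsub hx))]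
        exact hM x (hJsub hx))
    rw [Real.norm_eq_abs] at hb
    refine hb.trans ?_
    have h1 : (volume J).toReal ≤ b - a := by
      rw [hJvol]
      rw [ENNReal.toReal_ofReal (by rw [hmeq]; exact integral_nonneg_of_ae hf0ae)]
      rw [hmeq]
      -- ∫ f ≤ b - a
      have intf : Integrable f (volume.restrict (Set.Icc a b)) := by
        refine (integrable_const (1:ℝ)).mono' hf_meas.aestronglyMeasurable ?_
        filter_upwards [hf0ae, hf_le_one] with x h0 h1
        rw [Real.norm_eq_abs, abs_of_nonneg h0]; exact h1
      have h1 : ∫ x in Set.Icc a b, f x ≤ ∫ _x in Set.Icc a b, (1:ℝ) :=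
        integral_mono_ae intf (integrable_const 1) hf_le_one
      have h2 : ∫ _x in Set.Icc a b, (1:ℝ) = b - a := by
        rw [integral_const, measureReal_def, Measure.restrict_apply_univ, Real.volume_Icc, smul_eq_mul, mul_one,
          ENNReal.toReal_ofReal (by linarith)]
      rw [h2] at h1; exact h1
    exact mul_le_mul_of_nonneg_left h1 hM0
  have hbdd : BddBelow Sv := ⟨-(M * (b - a)), fun v hv => neg_le_of_abs_le (hbound v hv)⟩
  have hbdd' : BddAbove Sv := ⟨M * (b - a), fun v hv => le_of_abs_le (hbound v hv)⟩
  haveI : IsFiniteMeasure (volume.restrict (Set.Icc a b)) := by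
    constructor
    rw [Measure.restrict_apply_univ, Real.volume_Icc]
    exact ENNReal.ofReal_lt_top
  exact ⟨csInf_le_of_le hbdd hmem₁ hJ₁le', le_csSup_of_le hbdd' hmem₂ hJ₂le⟩
end

section
/- Let f: ℝ → ℝ be a function in L¹(ℝ) ∩ L²(ℝ) with ‖f‖_{L¹} = 1, real-valued, satisfying f(0) = 0 and f = f̂ (so in particular f is even and ∫_ℝ f = 0). Then A(f) ≥ 1/4. -/
open MeasureTheory Real
open scoped FourierTransform

/-- `A(g)`: the infimum of all `r > 0` such that `g x ≥ 0` for all `|x| > r`,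
with the convention that the infimum of the empty set is `+∞`. -/
noncomputable def sgnRadius (g : ℝ → ℝ) : ENNReal :=
  sInf (ENNReal.ofReal '' {r : ℝ | 0 < r ∧ ∀ x : ℝ, r < |x| → 0 ≤ g x})

theorem stmt13 (f : ℝ → ℝ) (hint : Integrable f) (hL2 : MemLp f 2 volume)
    (hnorm : ∫ x : ℝ, |f x| = 1) (hf0 : f 0 = 0)
    (hself : ∀ x : ℝ, 𝓕 (fun t : ℝ => (f t : ℂ)) x = (f x : ℂ)) :
    ENNReal.ofReal (1 / 4) ≤ sgnRadius f := by
  -- sup-norm bound : |f x| ≤ 1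
  have hbound : ∀ x : ℝ, |f x| ≤ 1 := by
    intro x
    have h := VectorFourier.norm_fourierIntegral_le_integral_norm 𝐞 volume (innerₗ ℝ)
      (fun t : ℝ => (f t : ℂ)) x
    have h2 : 𝓕 (fun t : ℝ => (f t : ℂ)) x =
        VectorFourier.fourierIntegral 𝐞 volume (innerₗ ℝ) (fun t : ℝ => (f t : ℂ)) x := rfl
    rw [← h2, hself x] at h
    simpa [Complex.norm_real, Real.norm_eq_abs, hnorm] using h
  -- integral of f is 0
  have hfint0 : ∫ x : ℝ, f x = 0 := by
    have h := hself 0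
    rw [hf0, Complex.ofReal_zero, Real.fourier_real_eq] at h
    simp only [mul_zero, inner_zero_right, neg_zero, AddChar.map_zero_eq_one, one_smul] at h
    have h' : ((∫ x : ℝ, f x : ℝ) : ℂ) = 0 := (integral_ofReal.symm).trans h
    exact_mod_cast h'
  -- negative part
  set g : ℝ → ℝ := fun x => max (-f x) 0 with hg
  have hgint : Integrable g := hint.neg.pos_part
  have hgeq : ∀ x, g x = (|f x| - f x) / 2 := by
    intro x
    rcases le_total (f x) 0 with h | h
    · simp [hg, abs_of_nonpos h, max_eq_left (by linarith : (0:ℝ) ≤ -f x)]; ring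
    · simp [hg, abs_of_nonneg h, max_eq_right (by linarith : -f x ≤ (0:ℝ))]
  have hghalf : ∫ x : ℝ, g x = 1 / 2 := by
    calc ∫ x : ℝ, g x = ∫ x : ℝ, (|f x| - f x) / 2 := by simp_rw [hgeq]
    _ = ((∫ x : ℝ, |f x|) - ∫ x : ℝ, f x) / 2 := by
        rw [integral_div, integral_sub hint.abs hint]
    _ = 1 / 2 := by rw [hnorm, hfint0]; ring
  -- conclude
  refine le_sInf ?_
  rintro b ⟨r, ⟨hr0, hr⟩, rfl⟩
  refine ENNReal.ofReal_le_ofReal ?_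
  -- show 1/4 ≤ r
  have hsupp : ∀ x : ℝ, x ∉ Set.Icc (-r) r → g x = 0 := by
    intro x hx
    have : r < |x| := by
      simp only [Set.mem_Icc, not_and_or, not_le] at hx
      rcases hx with h | h
      · rw [abs_of_neg (by linarith)]; linarith
      · rw [abs_of_pos (by linarith)]; exact h
    have := hr x this
    simp [hg, max_eq_right (by linarith : -f x ≤ (0:ℝ))]
  have h1 : ∫ x : ℝ, g x = ∫ x in Set.Icc (-r) r, g x :=
    (setIntegral_eq_integral_of_forall_compl_eq_zero hsupp).symm
  have h2 : ∫ x in Set.Icc (-r) r, g x ≤ ∫ x in Set.Icc (-r) r, (1:ℝ) := by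
    refine setIntegral_mono_on hgint.integrableOn (integrableOn_const ?_) 
      measurableSet_Icc (fun x _ => ?_)
    · rw [Real.volume_Icc]; exact ENNReal.ofReal_ne_top
    · have h3 := hbound x
      have : g x ≤ |f x| := by
        rw [hgeq x]; have := neg_abs_le (f x); linarith
      linarith
  have h4 : ∫ x in Set.Icc (-r) r, (1:ℝ) = 2 * r := by
    rw [setIntegral_const, Real.volume_real_Icc_of_le (by linarith), smul_eq_mul, mul_one]
    ring
  have : (1:ℝ)/2 ≤ 2 * r := by rw [← h4, ← hghalf, h1]; exact h2
  linarith
end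

section
/- Let f: ℝ → ℝ be admissible, i.e. f ∈ L¹(ℝ) ∩ L²(ℝ), ‖f‖_{L¹} = 1, f is even and real-valued, f(0) = 0, and f = f̂. Set A = A(f) and suppose A ≤ 1/2. Then for every 0 < x ≤ A one has f(x) ≤ 1/2 + ( sin(2π(A − 1/4)x) − sin(2πAx) )/(πx). -/
open MeasureTheory Real
open scoped FourierTransform

set_option maxHeartbeats 2000000 in
theorem stmt14 (f : ℝ → ℝ) (hint : Integrable f) (hL2 : MemLp f 2 volume)
    (hnorm : ∫ x : ℝ, |f x| = 1) (heven : ∀ x, f (-x) = f x) (hf0 : f 0 = 0)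
    (hself : ∀ x : ℝ, 𝓕 (fun t : ℝ => (f t : ℂ)) x = (f x : ℂ))
    (A : ℝ) (hA0 : 0 ≤ A) (hA : sgnRadius f = ENNReal.ofReal A) (hA2 : A ≤ 1 / 2) :
    ∀ x : ℝ, 0 < x → x ≤ A →
      f x ≤ 1 / 2 + (Real.sin (2 * π * (A - 1 / 4) * x) - Real.sin (2 * π * A * x)) / (π * x) := by
  intro x hx hxA
  have hπ : (0:ℝ) < π := Real.pi_pos
  -- f is nonnegative outside [-A, A]
  have hpos : ∀ t : ℝ, A < |t| → 0 ≤ f t := by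
    intro t ht
    have h1 : sInf (ENNReal.ofReal '' {r : ℝ | 0 < r ∧ ∀ x : ℝ, r < |x| → 0 ≤ f x})
        < ENNReal.ofReal |t| := by
      rw [← sgnRadius, hA]
      exact ENNReal.ofReal_lt_ofReal_iff (lt_of_le_of_lt hA0 ht) |>.2 ht
    obtain ⟨s, hs, hst⟩ := sInf_lt_iff.1 h1
    obtain ⟨r, ⟨hr0, hr⟩, rfl⟩ := hs
    exact hr t ((ENNReal.ofReal_lt_ofReal_iff (lt_of_le_of_lt hA0 ht)).1 hst)
  -- representation as cosine transform
  have hC : Integrable (fun t : ℝ => (f t : ℂ)) := hint.ofReal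
  have hrep : ∀ y : ℝ, f y = ∫ t, f t * Real.cos (2 * π * y * t) := by
    intro y
    have hconv : Integrable (fun v : ℝ => Complex.exp (↑(-2 * π * v * y) * Complex.I) • (f v : ℂ)) := by
      refine hC.norm.mono' ?_ ?_
      · exact (Complex.continuous_exp.comp (by continuity)).aestronglyMeasurable.smul
          hC.aestronglyMeasurable
      · filter_upwards with v
        rw [norm_smul, Complex.norm_exp_ofReal_mul_I, one_mul]
    have h := hself y
    rw [Real.fourier_real_eq_integral_exp_smul] at h
    have hre := congrArg Complex.re h
    simp only [Complex.ofReal_re] at hre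
    rw [← hre, RCLike.re_eq_complex_re.symm, ← integral_re hconv]
    congr 1
    ext t
    rw [RCLike.re_eq_complex_re]
    simp [Complex.exp_re, Complex.mul_re, Complex.exp_ofReal_mul_I_re]
    ring_nf
  -- integral of f is zero
  have hzero : ∫ t, f t = 0 := by
    have := hrep 0
    simp at this
    rw [← hf0, this]
  -- |f| ≤ 1 pointwise
  have hbd1 : ∀ t : ℝ, |f t| ≤ 1 := by
    intro t
    have h := VectorFourier.norm_fourierIntegral_le_integral_norm
      (Real.fourierChar) volume (innerₗ ℝ) (fun t : ℝ => (f t : ℂ)) t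
    rw [show VectorFourier.fourierIntegral Real.fourierChar volume (innerₗ ℝ)
        (fun t : ℝ => (f t : ℂ)) t = 𝓕 (fun t : ℝ => (f t : ℂ)) t from rfl, hself t] at h
    simpa [hnorm] using h
  -- the negative part
  set fm : ℝ → ℝ := fun t => max (-f t) 0 with hfm_def
  clear_value fm
  have hfm_int : Integrable fm := by rw [hfm_def]; exact hint.neg.pos_part
  have hfm_nonneg : ∀ t, 0 ≤ fm t := by
    intro t; simp only [hfm_def]; exact le_max_right _ _
  have hfm_ge : ∀ t, -f t ≤ fm t := by
    intro t; simp only [hfm_def]; exact le_max_left _ _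
  have hfm_le1 : ∀ t, fm t ≤ 1 := by
    intro t
    simp only [hfm_def]
    exact max_le (le_trans (neg_le_abs _) (hbd1 t)) zero_le_one
  have hfm_zero : ∀ t, A < |t| → fm t = 0 := by
    intro t ht
    simp only [hfm_def]
    exact max_eq_right (neg_nonpos.2 (hpos t ht))
  have hfm_eq : ∀ t, fm t = (|f t| - f t) / 2 := by
    intro t
    simp only [hfm_def]
    rcases le_or_gt 0 (f t) with h | h
    · rw [max_eq_right (by linarith), abs_of_nonneg h]; ring
    · rw [max_eq_left (by linarith), abs_of_neg h]; ring
  have hfm_half : ∫ t, fm t = 1 / 2 := by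
    have : ∫ t, fm t = ∫ t, (|f t| - f t) / 2 := by
      congr 1; ext t; exact hfm_eq t
    rw [this]
    rw [integral_div, integral_sub hint.abs hint, hnorm, hzero]
    norm_num
  -- A ≥ 1/4
  have hA4 : (1:ℝ)/4 ≤ A := by
    have hind : ∀ t, fm t = (Set.Icc (-A) A).indicator fm t := by
      intro t
      by_cases h : t ∈ Set.Icc (-A) A
      · rw [Set.indicator_of_mem h]
      · rw [Set.indicator_of_notMem h, hfm_zero t]
        simp only [Set.mem_Icc, not_and_or, not_le] at h
        rcases h with h | h
        · rw [abs_of_neg (by linarith)]; linarith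
        · rw [abs_of_pos (by linarith)]; exact h
    have hintIcc : IntegrableOn (fun _ : ℝ => (1:ℝ)) (Set.Icc (-A) A) := by
      refine integrableOn_const (hs := ?_)
      rw [Real.volume_Icc]; exact ENNReal.ofReal_ne_top
    have h2 : ∫ t, fm t ≤ ∫ t in Set.Icc (-A) A, (1:ℝ) := by
      rw [integral_congr_ae (Filter.Eventually.of_forall hind),
        integral_indicator measurableSet_Icc]
      exact setIntegral_mono_on hfm_int.integrableOn hintIcc measurableSet_Icc
        (fun t _ => hfm_le1 t)
    rw [hfm_half, setIntegral_const, measureReal_def, Real.volume_Icc, smul_eq_mul, mul_one] at h2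
    rw [ENNReal.toReal_ofReal (by linarith)] at h2
    linarith
  -- setup
  set B : ℝ := A - 1/4 with hB_def
  clear_value B
  have hB0 : 0 ≤ B := by rw [hB_def]; linarith
  set w : ℝ → ℝ := fun t => 1 - Real.cos (2 * π * x * t) with hw_def
  clear_value w
  set m : ℝ := 1 - Real.cos (2 * π * x * B) with hm_def
  clear_value m
  set E : Set ℝ := Set.Icc (-A) (-B) ∪ Set.Ioc B A with hE_def
  clear_value E
  have hcx : 0 < 2 * π * x := by positivity
  have hcont_cos : Continuous (fun t : ℝ => Real.cos (2 * π * x * t)) := by fun_prop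
  have hE_meas : MeasurableSet E := by
    rw [hE_def]; exact (measurableSet_Icc).union measurableSet_Ioc
  -- cos of even arg
  have hcos_abs : ∀ t : ℝ, Real.cos (2 * π * x * t) = Real.cos (2 * π * x * |t|) := by
    intro t
    rcases abs_cases t with ⟨h, _⟩ | ⟨h, _⟩
    · rw [h]
    · rw [h, mul_neg, Real.cos_neg]
  have hbound : ∀ t : ℝ, |t| ≤ A → 2 * π * x * |t| ≤ π := by
    intro t ht
    calc 2 * π * x * |t| ≤ 2 * π * (1/2) * (1/2) := by
          apply mul_le_mul (by nlinarith) (by linarith) (abs_nonneg t) (by positivity)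
      _ ≤ π := by linarith
  -- w ≥ 0, m ≥ 0
  have hw_nonneg : ∀ t, 0 ≤ w t := fun t => by
    simp only [hw_def]; linarith [Real.cos_le_one (2 * π * x * t)]
  have hm_nonneg : 0 ≤ m := by
    simp only [hm_def]; linarith [Real.cos_le_one (2 * π * x * B)]
  -- on E : m ≤ w t
  have hmw : ∀ t ∈ E, m ≤ w t := by
    intro t ht
    rw [hE_def] at ht
    have habs : B ≤ |t| ∧ |t| ≤ A := by
      rcases ht with h | h
      · rw [abs_of_nonpos (by rcases h with ⟨_, h2⟩; linarith)]
        exact ⟨by linarith [h.2], by linarith [h.1]⟩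
      · rw [abs_of_pos (lt_of_le_of_lt hB0 h.1)]
        exact ⟨le_of_lt h.1, h.2⟩
    simp only [hw_def, hm_def]
    have := Real.cos_le_cos_of_nonneg_of_le_pi (by positivity : (0:ℝ) ≤ 2*π*x*B)
      (hbound t habs.2) (mul_le_mul_of_nonneg_left habs.1 hcx.le)
    rw [hcos_abs t]
    linarith
  -- off E within [-A,A] : w t ≤ m
  have hwm : ∀ t, t ∉ E → |t| ≤ A → w t ≤ m := by
    intro t ht htA
    rw [hE_def] at ht
    have habs : |t| ≤ B := by
      simp only [Set.mem_union, Set.mem_Icc, Set.mem_Ioc, not_or, not_and_or,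
        not_le, not_lt] at ht
      rcases le_or_gt t 0 with h | h
      · rw [abs_of_nonpos h]
        rcases ht.1 with h1 | h1
        · exfalso; rw [abs_of_nonpos h] at htA; linarith
        · linarith
      · rw [abs_of_pos h]
        rcases ht.2 with h1 | h1
        · exact h1
        · exfalso; rw [abs_of_pos h] at htA; linarith
    simp only [hw_def, hm_def]
    have hBpi : 2*π*x*B ≤ π := by
      have h1 : (2*π*x)*B ≤ (2*π*x)*(1/2) :=
        mul_le_mul_of_nonneg_left (by rw [hB_def]; linarith) hcx.le
      have h3 : π*x ≤ π*(1/2) := mul_le_mul_of_nonneg_left (by linarith) hπ.le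
      nlinarith
    have := Real.cos_le_cos_of_nonneg_of_le_pi (by positivity : (0:ℝ) ≤ 2*π*x*|t|)
      hBpi (mul_le_mul_of_nonneg_left habs hcx.le)
    rw [hcos_abs t]
    linarith
  -- the majorant
  set φ : ℝ → ℝ := fun t => E.indicator w t + m * (fm t - E.indicator (fun _ => (1:ℝ)) t)
    with hφ_def
  clear_value φ
  -- pointwise inequality
  have hpt : ∀ t, f t * (Real.cos (2 * π * x * t) - 1) ≤ φ t := by
    intro t
    by_cases htA : |t| ≤ A
    · have h1 : f t * (Real.cos (2 * π * x * t) - 1) ≤ fm t * w t := by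
        have he : f t * (Real.cos (2 * π * x * t) - 1) = (-f t) * w t := by
          simp only [hw_def]; ring
        rw [he]
        exact mul_le_mul_of_nonneg_right (hfm_ge t) (hw_nonneg t)
      refine le_trans h1 ?_
      by_cases htE : t ∈ E
      · simp only [hφ_def, Set.indicator_of_mem htE]
        nlinarith [hmw t htE, hfm_le1 t, hfm_nonneg t]
      · simp only [hφ_def, Set.indicator_of_notMem htE]
        nlinarith [hwm t htE htA, hfm_nonneg t]
    · push_neg at htA
      have htE : t ∉ E := by
        rw [hE_def]
        intro h
        have hle : |t| ≤ A := by
          rcases h with h | h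
          · rw [abs_of_nonpos (le_trans h.2 (neg_nonpos.2 hB0))]; linarith [h.1]
          · rw [abs_of_pos (lt_of_le_of_lt hB0 h.1)]; exact h.2
        linarith
      simp only [hφ_def, Set.indicator_of_notMem htE, hfm_zero t htA]
      have : f t * (Real.cos (2 * π * x * t) - 1) ≤ 0 := by
        apply mul_nonpos_of_nonneg_of_nonpos (hpos t htA)
        linarith [Real.cos_le_one (2 * π * x * t)]
      simpa using this
  -- integrability
  have hvolE : volume E < ⊤ := by
    rw [hE_def]
    apply lt_of_le_of_lt (measure_union_le _ _)
    rw [Real.volume_Icc, Real.volume_Ioc]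
    exact ENNReal.add_lt_top.2 ⟨ENNReal.ofReal_lt_top, ENNReal.ofReal_lt_top⟩
  have hw_cont : Continuous w := by
    rw [hw_def]; exact continuous_const.sub hcont_cos
  have hE_sub : E ⊆ Set.Icc (-A) A := by
    rw [hE_def]
    exact Set.union_subset (Set.Icc_subset_Icc le_rfl (by linarith))
      (Set.Ioc_subset_Icc_self.trans (Set.Icc_subset_Icc (by linarith) le_rfl))
  have hw_int : Integrable (E.indicator w) := by
    rw [integrable_indicator_iff hE_meas]
    exact (hw_cont.integrableOn_Icc (a := -A) (b := A)).mono_set hE_sub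
  have hone_int : Integrable (E.indicator (fun _ : ℝ => (1:ℝ))) := by
    rw [integrable_indicator_iff hE_meas]
    exact integrableOn_const hvolE.ne
  have hφ_int : Integrable φ := by
    rw [hφ_def]
    exact hw_int.add ((hfm_int.sub hone_int).const_mul m)
  have hlhs_int : Integrable (fun t => f t * (Real.cos (2 * π * x * t) - 1)) := by
    have hcont1 : Continuous (fun t : ℝ => Real.cos (2 * π * x * t) - 1) :=
      hcont_cos.sub continuous_const
    have hbdd : ∀ t : ℝ, ‖Real.cos (2 * π * x * t) - 1‖ ≤ 2 := by
      intro t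
      have h1 := Real.neg_one_le_cos (2 * π * x * t)
      have h2 := Real.cos_le_one (2 * π * x * t)
      rw [Real.norm_eq_abs, abs_le]
      constructor <;> linarith
    have h0 : Integrable (fun t => (Real.cos (2 * π * x * t) - 1) * f t) :=
      hint.bdd_mul hcont1.aestronglyMeasurable (Filter.Eventually.of_forall hbdd)
    apply h0.congr
    filter_upwards with t
    show (Real.cos (2 * π * x * t) - 1) * f t = _
    ring
  -- the main inequality
  have hmain : f x ≤ ∫ t, φ t := by
    have h1 : f x = ∫ t, f t * (Real.cos (2 * π * x * t) - 1) := by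
      have h2 : Integrable (fun t => f t * Real.cos (2 * π * x * t)) := by
        have := hlhs_int.add hint
        apply this.congr
        filter_upwards with t
        simp only [Pi.add_apply]
        ring
      rw [hrep x]
      have : ∫ t, f t * (Real.cos (2 * π * x * t) - 1)
          = (∫ t, f t * Real.cos (2 * π * x * t)) - ∫ t, f t := by
        rw [← integral_sub h2 hint]
        congr 1; ext t; ring
      rw [this, hzero, sub_zero]
    rw [h1]
    exact integral_mono hlhs_int hφ_int hpt
  -- compute ∫ φ
  have hdisj : Disjoint (Set.Icc (-A) (-B)) (Set.Ioc B A) := by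
    apply Set.disjoint_left.2
    rintro t ⟨_, h2⟩ ⟨h3, _⟩
    linarith
  have hw_intOn1 : IntegrableOn w (Set.Icc (-A) (-B)) :=
    (integrable_indicator_iff hE_meas).1 hw_int |>.mono_set (hE_def ▸ Set.subset_union_left)
  have hw_intOn2 : IntegrableOn w (Set.Ioc B A) :=
    (integrable_indicator_iff hE_meas).1 hw_int |>.mono_set (hE_def ▸ Set.subset_union_right)
  have key : ∀ a b : ℝ, a ≤ b → ∫ t in Set.Ioc a b, w t
      = (b - a) - (Real.sin (2*π*x*b) - Real.sin (2*π*x*a)) / (2*π*x) := by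
    intro a b hab
    rw [← intervalIntegral.integral_of_le hab]
    simp only [hw_def]
    rw [intervalIntegral.integral_sub intervalIntegrable_const
        (hcont_cos.intervalIntegrable a b),
      intervalIntegral.integral_const,
      intervalIntegral.integral_comp_mul_left (fun s => Real.cos s) (ne_of_gt hcx),
      integral_cos]
    rw [smul_eq_mul, smul_eq_mul, mul_one, inv_mul_eq_div]
  have hIcc : ∫ t in Set.Icc (-A) (-B), w t
      = 1/4 - (Real.sin (2 * π * x * A) - Real.sin (2 * π * x * B)) / (2 * π * x) := by
    rw [integral_Icc_eq_integral_Ioc, key (-A) (-B) (by linarith)]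
    simp only [mul_neg, Real.sin_neg]
    rw [hB_def]
    ring
  have hIoc : ∫ t in Set.Ioc B A, w t
      = 1/4 - (Real.sin (2 * π * x * A) - Real.sin (2 * π * x * B)) / (2 * π * x) := by
    rw [key B A (by linarith [hB_def]), hB_def]
    ring
  have hφ_val : ∫ t, φ t
      = 1/2 - (Real.sin (2 * π * x * A) - Real.sin (2 * π * x * B)) / (π * x) := by
    have hiw : ∫ t, E.indicator w t
        = (∫ t in Set.Icc (-A) (-B), w t) + ∫ t in Set.Ioc B A, w t := by
      rw [integral_indicator hE_meas, hE_def,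
        setIntegral_union hdisj measurableSet_Ioc hw_intOn1 hw_intOn2]
    have hvolE' : volume E = ENNReal.ofReal (1/2) := by
      rw [hE_def, measure_union hdisj measurableSet_Ioc, Real.volume_Icc, Real.volume_Ioc]
      rw [← ENNReal.ofReal_add (p := -B - -A) (q := A - B) (by linarith) (by linarith)]
      congr 1
      rw [hB_def]; ring
    have hione : ∫ t, E.indicator (fun _ => (1:ℝ)) t = 1/2 := by
      rw [integral_indicator hE_meas, setIntegral_const, measureReal_def, hvolE',
        ENNReal.toReal_ofReal (by norm_num), smul_eq_mul, mul_one]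
    have hg_int : Integrable (fun t => m * (fm t - E.indicator (fun _ => (1:ℝ)) t)) := by
      apply ((hfm_int.sub hone_int).const_mul m).congr
      filter_upwards with t
      simp [Pi.sub_apply]
    have h2 : ∫ t, φ t = (∫ t, E.indicator w t)
        + m * ((∫ t, fm t) - ∫ t, E.indicator (fun _ => (1:ℝ)) t) := by
      rw [hφ_def, integral_add hw_int hg_int,
        integral_const_mul, integral_sub hfm_int hone_int]
    rw [h2, hfm_half, hione, hiw, hIcc, hIoc]
    field_simp
    ring
  have hfinal : (1:ℝ)/2 - (Real.sin (2 * π * x * A) - Real.sin (2 * π * x * B)) / (π * x)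
      = 1 / 2 + (Real.sin (2 * π * (A - 1 / 4) * x) - Real.sin (2 * π * A * x)) / (π * x) := by
    rw [hB_def]
    have e1 : 2 * π * x * A = 2 * π * A * x := by ring
    have e2 : 2 * π * x * (A - 1/4) = 2 * π * (A - 1/4) * x := by ring
    rw [e1, e2]
    ring
  rw [hφ_val, hfinal] at hmain
  rw [hB_def]
  exact hmain
end

section
/- Let f: ℝ → ℝ be admissible, i.e. f ∈ L¹(ℝ) ∩ L²(ℝ), ‖f‖_{L¹} = 1, f is even and real-valued, f(0) = 0, and f = f̂. Set A = A(f) and suppose A ≤ 1/2. Then ∫₀^A f⁺(x) dx ≤ ∫_{1/4}^{A} [ 1/2 + ( sin(2π(A − 1/4)x) − sin(2πAx) )/(πx) ] dx, where f⁺ = max{f, 0} denotes the positive part of f. -/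
open MeasureTheory Real
open scoped FourierTransform

section Helpers

open Set

/-- Continuity of a parametrized cosine integral over a finite-measure set. -/
lemma stmt15_cont_cosInt (S : Set ℝ) (hfin : volume S ≠ ⊤) :
    Continuous fun t : ℝ => ∫ x in S, Real.cos (2*π*(x*t)) := by
  apply continuous_of_dominated (bound := fun _ => (1:ℝ))
  · exact fun t => (Continuous.aestronglyMeasurable (by fun_prop))
  · intro t
    filter_upwards with x
    rw [Real.norm_eq_abs]
    exact Real.abs_cos_le_one _
  · rw [integrable_const_iff]
    right
    exact ⟨by simpa [Measure.restrict_apply_univ] using hfin.lt_top⟩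
  · filter_upwards with x
    fun_prop

/-- Integral of an even function. -/
lemma stmt15_even_integral {g : ℝ → ℝ} (hg : ∀ x, g (-x) = g x) :
    ∫ x, g x = 2 * ∫ x in Ioi (0:ℝ), g x := by
  calc ∫ x, g x = ∫ x, g |x| := by
        congr 1
        funext x
        rcases abs_cases x with ⟨h, _⟩ | ⟨h, _⟩
        · rw [h]
        · rw [h, hg]
    _ = 2 * ∫ x in Ioi (0:ℝ), g x := integral_comp_abs

/-- Bathtub principle: if `0 ≤ g ≤ 1` has total mass `c` on `(0, A]` and `k` is
nonincreasing on `[0, A]`, then `∫ g k` is at least the integral of `k` over the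
rightmost interval of length `c`. -/
lemma stmt15_bathtub {A c : ℝ} (hc0 : 0 ≤ c) (hcA : c ≤ A) {g k : ℝ → ℝ}
    (hgm : AEStronglyMeasurable g (volume.restrict (Ioc 0 A)))
    (hg0 : ∀ᵐ x ∂(volume.restrict (Ioc 0 A)), 0 ≤ g x)
    (hg1 : ∀ᵐ x ∂(volume.restrict (Ioc 0 A)), g x ≤ 1)
    (hgint : ∫ x in Ioc 0 A, g x = c)
    (hk : Continuous k)
    (hmono : ∀ ⦃x⦄, x ∈ Icc 0 A → ∀ ⦃y⦄, y ∈ Icc 0 A → x ≤ y → k y ≤ k x) :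
    ∫ x in Ioc (A - c) A, k x ≤ ∫ x in Ioc 0 A, g x * k x := by
  set θ := A - c with hθ
  have hθ0 : 0 ≤ θ := by simp [hθ]; linarith
  have hθA : θ ≤ A := by simp [hθ]; linarith
  have hsub1 : Ioc 0 θ ⊆ Ioc 0 A := Ioc_subset_Ioc le_rfl hθA
  have hsub2 : Ioc θ A ⊆ Ioc 0 A := Ioc_subset_Ioc hθ0 le_rfl
  have hgI : IntegrableOn g (Ioc 0 A) := by
    refine Integrable.mono' (integrable_const 1) hgm ?_
    filter_upwards [hg0, hg1] with x h0 h1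
    rw [Real.norm_eq_abs, abs_of_nonneg h0]; exact h1
  obtain ⟨C, hC⟩ := (isCompact_Icc (a := (0:ℝ)) (b := A)).exists_bound_of_continuousOn
    hk.continuousOn
  have hgkI : IntegrableOn (fun x => g x * k x) (Ioc 0 A) := by
    refine Integrable.mono' (integrable_const C) (hgm.mul hk.aestronglyMeasurable.restrict) ?_
    filter_upwards [hg0, hg1, ae_restrict_mem measurableSet_Ioc] with x h0 h1 hx
    have : ‖k x‖ ≤ C := hC x (Ioc_subset_Icc_self hx)
    calc ‖g x * k x‖ = g x * ‖k x‖ := by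
          rw [norm_mul, Real.norm_eq_abs, abs_of_nonneg h0]
      _ ≤ 1 * C := by
          apply mul_le_mul h1 this (norm_nonneg _) zero_le_one
      _ = C := one_mul C
  have hkI : IntegrableOn k (Ioc 0 A) := hk.integrableOn_Ioc
  have hunion : Ioc (0:ℝ) θ ∪ Ioc θ A = Ioc 0 A := Ioc_union_Ioc_eq_Ioc hθ0 hθA
  have hdisj : Disjoint (Ioc (0:ℝ) θ) (Ioc θ A) := Ioc_disjoint_Ioc_of_le le_rfl
  have hsplit : ∀ (u : ℝ → ℝ), IntegrableOn u (Ioc 0 A) →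
      ∫ x in Ioc 0 A, u x = (∫ x in Ioc 0 θ, u x) + ∫ x in Ioc θ A, u x := by
    intro u hu
    rw [← hunion, setIntegral_union hdisj measurableSet_Ioc (hu.mono_set (hunion ▸ hsub1))
      (hu.mono_set (hunion ▸ hsub2))]
  have h1 : k θ * (∫ x in Ioc 0 θ, g x) ≤ ∫ x in Ioc 0 θ, g x * k x := by
    rw [show k θ * (∫ x in Ioc 0 θ, g x) = ∫ x in Ioc 0 θ, g x * k θ by
      rw [integral_mul_const]; ring]
    refine setIntegral_mono_ae_restrict ((hgI.mono_set hsub1).mul_const _)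
      (hgkI.mono_set hsub1) ?_
    filter_upwards [ae_restrict_of_ae_restrict_of_subset hsub1 hg0,
      ae_restrict_mem measurableSet_Ioc] with x h0 hx
    have hkx : k θ ≤ k x :=
      hmono ⟨hx.1.le, hx.2.trans hθA⟩ ⟨hθ0, hθA⟩ hx.2
    exact mul_le_mul_of_nonneg_left hkx h0
  have h2 : ∫ x in Ioc θ A, (1 - g x) * k x ≤ k θ * ∫ x in Ioc θ A, (1 - g x) := by
    rw [show k θ * (∫ x in Ioc θ A, (1 - g x)) = ∫ x in Ioc θ A, (1 - g x) * k θ by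
      rw [integral_mul_const]; ring]
    have hI1 : IntegrableOn (fun x => (1 - g x) * k x) (Ioc θ A) := by
      refine ((hkI.mono_set hsub2).sub (hgkI.mono_set hsub2)).congr ?_
      filter_upwards with x
      simp only [Pi.sub_apply]
      ring
    refine setIntegral_mono_ae_restrict hI1
      (((integrable_const 1).sub (hgI.mono_set hsub2)).mul_const _) ?_
    filter_upwards [ae_restrict_of_ae_restrict_of_subset hsub2 hg1,
      ae_restrict_mem measurableSet_Ioc] with x h1x hx
    have hkx : k x ≤ k θ := hmono ⟨hθ0, hθA⟩ ⟨hθ0.trans hx.1.le, hx.2⟩ hx.1.le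
    exact mul_le_mul_of_nonneg_left hkx (by linarith)
  have hgsplit := hsplit g hgI
  have hgksplit := hsplit (fun x => g x * k x) hgkI
  have hvol : ∫ x in Ioc θ A, (1:ℝ) = A - θ := by
    simp [Real.volume_Ioc, ENNReal.toReal_ofReal (by linarith : (0:ℝ) ≤ A - θ)]; exact hθA
  have h3 : ∫ x in Ioc θ A, (1 - g x) = (∫ x in Ioc 0 θ, g x) := by
    rw [integral_sub (integrable_const 1) (hgI.mono_set hsub2), hvol]
    have : (c:ℝ) = (∫ x in Ioc 0 θ, g x) + ∫ x in Ioc θ A, g x := by rw [← hgint, hgsplit]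
    simp [hθ] at this ⊢
    linarith
  have h4 : ∫ x in Ioc θ A, k x
      = (∫ x in Ioc θ A, g x * k x) + ∫ x in Ioc θ A, (1 - g x) * k x := by
    rw [← integral_add (hgkI.mono_set hsub2) ?_]
    · congr 1; funext x; ring
    · refine ((hkI.mono_set hsub2).sub (hgkI.mono_set hsub2)).congr ?_
      filter_upwards with x
      simp only [Pi.sub_apply]
      ring
  calc ∫ x in Ioc θ A, k x
      = (∫ x in Ioc θ A, g x * k x) + ∫ x in Ioc θ A, (1 - g x) * k x := h4
    _ ≤ (∫ x in Ioc θ A, g x * k x) + k θ * ∫ x in Ioc θ A, (1 - g x) := by linarith [h2]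
    _ = (∫ x in Ioc θ A, g x * k x) + k θ * (∫ x in Ioc 0 θ, g x) := by rw [h3]
    _ ≤ (∫ x in Ioc θ A, g x * k x) + ∫ x in Ioc 0 θ, g x * k x := by linarith [h1]
    _ = ∫ x in Ioc 0 A, g x * k x := by rw [hgksplit]; ring

end Helpers

set_option maxHeartbeats 1000000 in
theorem stmt15 (f : ℝ → ℝ) (hint : Integrable f) (hL2 : MemLp f 2 volume)
    (hnorm : ∫ x : ℝ, |f x| = 1) (heven : ∀ x, f (-x) = f x) (hf0 : f 0 = 0)
    (hself : ∀ x : ℝ, 𝓕 (fun t : ℝ => (f t : ℂ)) x = (f x : ℂ))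
    (A : ℝ) (hA0 : 0 ≤ A) (hA : sgnRadius f = ENNReal.ofReal A) (hA2 : A ≤ 1 / 2) :
    (∫ x in (0:ℝ)..A, max (f x) 0) ≤
      ∫ x in (1/4 : ℝ)..A,
        (1 / 2 + (Real.sin (2 * π * (A - 1 / 4) * x) - Real.sin (2 * π * A * x)) / (π * x)) := by
  classical
  open Set in
  open scoped RealInnerProductSpace in
  have hFint : Integrable (fun t : ℝ => (f t : ℂ)) := hint.ofReal
  -- f is nonnegative beyond A
  have hsign : ∀ x : ℝ, A < |x| → 0 ≤ f x := by
    intro x hx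
    have hxpos : 0 < |x| := lt_of_le_of_lt hA0 hx
    have h1 : sgnRadius f < ENNReal.ofReal |x| := by
      rw [hA]
      exact (ENNReal.ofReal_lt_ofReal_iff hxpos).2 hx
    obtain ⟨a, ha, halt⟩ := sInf_lt_iff.1 h1
    obtain ⟨r, ⟨hr0, hrsign⟩, rfl⟩ := ha
    exact hrsign x ((ENNReal.ofReal_lt_ofReal_iff hxpos).1 halt)
  -- integral representation of f through its Fourier transform
  have hrep : ∀ x : ℝ, f x = ∫ t : ℝ, f t * Real.cos (2*π*(t*x)) := by
    intro x
    have h1 := hself x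
    rw [Real.fourier_eq'] at h1
    simp only [RCLike.inner_apply, starRingEnd_apply, star_trivial, smul_eq_mul] at h1
    simp only [mul_comm x] at h1
    have hexpc : Continuous (fun t : ℝ =>
        Complex.exp (↑(-2 * π * (t * x)) * Complex.I)) := by
      apply Complex.continuous_exp.comp
      exact (Complex.continuous_ofReal.comp (by fun_prop)).mul continuous_const
    have hIexp : Integrable (fun t : ℝ =>
        Complex.exp (↑(-2 * π * (t * x)) * Complex.I) * (f t : ℂ)) := by
      refine hFint.bdd_mul (c := 1) hexpc.aestronglyMeasurable (Filter.Eventually.of_forall fun t => ?_)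
      rw [Complex.norm_exp_ofReal_mul_I]
    have h2 := integral_re hIexp
    simp only [RCLike.re_to_complex] at h2
    calc f x = (∫ t : ℝ, Complex.exp (↑(-2 * π * (t * x)) * Complex.I) * (f t : ℂ)).re := by
          rw [h1, Complex.ofReal_re]
      _ = ∫ t : ℝ, (Complex.exp (↑(-2 * π * (t * x)) * Complex.I) * (f t : ℂ)).re := h2.symm
      _ = ∫ t : ℝ, f t * Real.cos (2*π*(t*x)) := by
          congr 1
          funext t
          rw [Complex.mul_re, Complex.ofReal_re, Complex.ofReal_im, mul_zero, sub_zero,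
            Complex.exp_ofReal_mul_I_re,
            show -2 * π * (t * x) = -(2*π*(t*x)) by ring, Real.cos_neg, mul_comm]
  -- continuity of f
  have hcont : Continuous f := by
    have h1 : Continuous (𝓕 (fun t : ℝ => (f t : ℂ))) :=
      VectorFourier.fourierIntegral_continuous Real.continuous_fourierChar
        continuous_inner hFint
    have : f = fun x => (𝓕 (fun t : ℝ => (f t : ℂ)) x).re := by
      funext x; rw [hself x, Complex.ofReal_re]
    rw [this]
    exact Complex.continuous_re.comp h1
  -- uniform bound on f
  have hbd : ∀ x, |f x| ≤ 1 := by
    intro x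
    have h1 : ‖𝓕 (fun t : ℝ => (f t : ℂ)) x‖ ≤ ∫ t : ℝ, ‖(f t : ℂ)‖ :=
      VectorFourier.norm_fourierIntegral_le_integral_norm _ _ _ _ _
    rw [hself x] at h1
    simpa [hnorm, Complex.norm_real] using h1
  -- positive and negative parts
  set fp : ℝ → ℝ := fun x => max (f x) 0 with hfp
  set fm : ℝ → ℝ := fun x => max (-f x) 0 with hfm
  have hfpc : Continuous fp := hcont.max continuous_const
  have hfmc : Continuous fm := hcont.neg.max continuous_const
  have hfp_int : Integrable fp := hint.pos_part
  have hfm_int : Integrable fm := hint.neg.pos_part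
  have hfp0 : ∀ x, 0 ≤ fp x := fun x => le_max_right _ _
  have hfm0 : ∀ x, 0 ≤ fm x := fun x => le_max_right _ _
  have hfm1 : ∀ x, fm x ≤ 1 := by
    intro x
    rcases le_total (f x) 0 with h | h
    · simp only [hfm, max_le_iff]
      constructor
      · have := hbd x; rw [abs_of_nonpos h] at this; linarith
      · norm_num
    · simp only [hfm, max_le_iff]
      constructor <;> [linarith; norm_num]
  have hsum : ∀ x, fp x + fm x = |f x| := by
    intro x
    rcases le_total 0 (f x) with h | h
    · rw [abs_of_nonneg h]; simp [hfp, hfm, max_eq_left h, max_eq_right (neg_nonpos.2 h)]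
    · rw [abs_of_nonpos h]; simp [hfp, hfm, max_eq_right h, max_eq_left (neg_nonneg.2 h)]
  have hdiff : ∀ x, fp x - fm x = f x := by
    intro x
    rcases le_total 0 (f x) with h | h
    · simp [hfp, hfm, max_eq_left h, max_eq_right (neg_nonpos.2 h)]
    · simp [hfp, hfm, max_eq_right h, max_eq_left (neg_nonneg.2 h)]
  have hftotal : ∫ t : ℝ, f t = 0 := by
    have h := hrep 0
    rw [hf0] at h
    simp at h
    linarith [h]
  have hintfp : ∫ x, fp x = 1/2 := by
    have h1 : (∫ x, fp x) + ∫ x, fm x = 1 := by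
      rw [← integral_add hfp_int hfm_int]
      simp_rw [hsum]
      exact hnorm
    have h2 : (∫ x, fp x) - ∫ x, fm x = 0 := by
      rw [← integral_sub hfp_int hfm_int]
      simp_rw [hdiff]
      exact hftotal
    linarith
  have hintfm : ∫ x, fm x = 1/2 := by
    have h1 : (∫ x, fp x) + ∫ x, fm x = 1 := by
      rw [← integral_add hfp_int hfm_int]
      simp_rw [hsum]
      exact hnorm
    linarith
  have hfmeven : ∀ x, fm (-x) = fm x := fun x => by simp [hfm, heven x]
  have hfm_supp : ∀ x : ℝ, A < |x| → fm x = 0 := fun x hx =>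
    max_eq_right (neg_nonpos.2 (hsign x hx))
  have hfmA : ∫ x in Ioc 0 A, fm x = 1/4 := by
    have e1 : ∫ x, fm x = 2 * ∫ x in Ioi (0:ℝ), fm x := stmt15_even_integral hfmeven
    have e2 : ∫ x in Ioi (0:ℝ), fm x = (∫ x in Ioc 0 A, fm x) + ∫ x in Ioi A, fm x := by
      rw [← Ioc_union_Ioi_eq_Ioi hA0,
        setIntegral_union Ioc_disjoint_Ioi_same measurableSet_Ioi
          hfm_int.integrableOn hfm_int.integrableOn]
    have e3 : ∫ x in Ioi A, fm x = 0 := by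
      rw [setIntegral_congr_fun measurableSet_Ioi (g := fun _ => (0:ℝ))
        (fun x hx => hfm_supp x (by rw [abs_of_pos (lt_of_le_of_lt hA0 hx)]; exact hx))]
      simp
    rw [hintfm, e2, e3] at e1
    linarith
  -- the sets where f is positive / negative inside (0, A]
  set E : Set ℝ := Ioc 0 A ∩ f ⁻¹' (Ioi 0) with hE
  set N : Set ℝ := Ioc 0 A ∩ f ⁻¹' (Iio 0) with hN
  have hEmeas : MeasurableSet E := measurableSet_Ioc.inter (hcont.measurable measurableSet_Ioi)
  have hNmeas : MeasurableSet N := measurableSet_Ioc.inter (hcont.measurable measurableSet_Iio)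
  have hEsub : E ⊆ Ioc 0 A := inter_subset_left
  have hNsub : N ⊆ Ioc 0 A := inter_subset_left
  have hIocvol : volume (Ioc (0:ℝ) A) = ENNReal.ofReal A := by
    rw [Real.volume_Ioc, sub_zero]
  have hEfin : volume E ≠ ⊤ := by
    refine ne_top_of_le_ne_top ?_ (measure_mono hEsub)
    simp [hIocvol]
  have hNfin : volume N ≠ ⊤ := by
    refine ne_top_of_le_ne_top ?_ (measure_mono hNsub)
    simp [hIocvol]
  set m : ℝ := (volume E).toReal with hm
  have hm0 : 0 ≤ m := ENNReal.toReal_nonneg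
  have hNq : 1/4 ≤ (volume N).toReal := by
    have s1 : (∫ x in Ioc 0 A ∩ N, fm x) + ∫ x in Ioc 0 A \ N, fm x = ∫ x in Ioc 0 A, fm x :=
      integral_inter_add_diff hNmeas hfm_int.integrableOn
    have s2 : Ioc 0 A ∩ N = N := inter_eq_self_of_subset_right hNsub
    have s3 : ∫ x in Ioc 0 A \ N, fm x = 0 := by
      rw [setIntegral_congr_fun (measurableSet_Ioc.diff hNmeas) (g := fun _ => (0:ℝ))]
      · simp
      · intro x hx
        have hfx : 0 ≤ f x := by
          by_contra hc
          exact hx.2 ⟨hx.1, by simpa using lt_of_not_ge hc⟩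
        exact max_eq_right (neg_nonpos.2 hfx)
    have s4 : ∫ x in N, fm x ≤ ∫ x in N, (1:ℝ) := by
      refine setIntegral_mono_on hfm_int.integrableOn
        (integrableOn_const hNfin) hNmeas (fun x _ => hfm1 x)
    rw [s2, s3, add_zero, hfmA] at s1
    rw [setIntegral_const, smul_eq_mul, mul_one, measureReal_def] at s4
    linarith [s1 ▸ s4]
  have hmA : m + 1/4 ≤ A := by
    have h1 : volume E + volume N = volume (E ∪ N) := by
      rw [measure_union _ hNmeas]
      refine Set.disjoint_left.2 fun x hxE hxN => ?_
      simp only [hE, hN, mem_inter_iff, mem_preimage, mem_Ioi, mem_Iio] at hxE hxN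
      linarith [hxE.2, hxN.2]
    have h2 : volume (E ∪ N) ≤ volume (Ioc 0 A) :=
      measure_mono (union_subset hEsub hNsub)
    have h3 : (volume E + volume N).toReal ≤ A := by
      calc (volume E + volume N).toReal ≤ (volume (Ioc (0:ℝ) A)).toReal :=
            ENNReal.toReal_mono (by simp [hIocvol]) (h1 ▸ h2)
        _ = A := by rw [hIocvol]; exact ENNReal.toReal_ofReal hA0
    rw [ENNReal.toReal_add hEfin hNfin] at h3
    linarith [hNq, h3]
  have hAq : (1:ℝ)/4 ≤ A := by linarith
  -- key cosine monotonicity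
  have hcoskey : ∀ {u v u' v' : ℝ}, 0 ≤ u → 0 ≤ v → u ≤ u' → v ≤ v' →
      u' ≤ 1/2 → v' ≤ 1/2 → Real.cos (2*π*(u'*v')) ≤ Real.cos (2*π*(u*v)) := by
    intro u v u' v' hu hv huu hvv hu2 hv2
    have h1 : u' * v' ≤ 1/4 := by nlinarith
    have h2 : u * v ≤ u' * v' := by nlinarith
    apply Real.cos_le_cos_of_nonneg_of_le_pi
    · exact mul_nonneg (by positivity) (mul_nonneg hu hv)
    · nlinarith [Real.pi_pos, mul_le_mul_of_nonneg_left h1 Real.pi_pos.le]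
    · nlinarith [Real.pi_pos, mul_le_mul_of_nonneg_left h2 Real.pi_pos.le]
  -- the kernel K
  set K : ℝ → ℝ := fun t => ∫ x in E, Real.cos (2*π*(x*t)) with hK
  have hKcont : Continuous K := stmt15_cont_cosInt E hEfin
  have hcosI : ∀ (S : Set ℝ), volume S ≠ ⊤ → ∀ c : ℝ,
      IntegrableOn (fun x : ℝ => Real.cos (2*π*(x*c))) S := by
    intro S hS c
    refine Integrable.mono' (g := fun _ => (1:ℝ)) (integrableOn_const hS)
      (Continuous.aestronglyMeasurable (by fun_prop)).restrict ?_
    filter_upwards with x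
    rw [Real.norm_eq_abs]
    exact Real.abs_cos_le_one _
  have hKle : ∀ t : ℝ, K t ≤ m := by
    intro t
    calc K t ≤ ∫ x in E, (1:ℝ) :=
          setIntegral_mono_on (hcosI E hEfin t)
            (integrableOn_const hEfin) hEmeas
            (fun x _ => Real.cos_le_one _)
      _ = m := by rw [setIntegral_const, smul_eq_mul, mul_one, measureReal_def]
  have hKabs : ∀ t : ℝ, ‖K t‖ ≤ m := by
    intro t
    have := norm_setIntegral_le_of_norm_le_const (C := 1) hEfin.lt_top
      (f := fun x : ℝ => Real.cos (2*π*(x*t)))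
      (fun x _ => by rw [Real.norm_eq_abs]; exact Real.abs_cos_le_one _)
    simpa [hm, measureReal_def] using this
  have hKmono : ∀ ⦃t1⦄, t1 ∈ Icc (0:ℝ) A → ∀ ⦃t2⦄, t2 ∈ Icc (0:ℝ) A → t1 ≤ t2 → K t2 ≤ K t1 := by
    intro t1 ht1 t2 ht2 h12
    refine setIntegral_mono_on (hcosI E hEfin t2) (hcosI E hEfin t1) hEmeas (fun x hx => ?_)
    have hxA := hEsub hx
    exact hcoskey (le_of_lt hxA.1) ht1.1 le_rfl h12 (hxA.2.trans hA2) (ht2.2.trans hA2)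
  have hKeven : ∀ t, K (-t) = K t := by
    intro t
    refine setIntegral_congr_fun hEmeas (fun x _ => ?_)
    rw [show 2*π*(x*(-t)) = -(2*π*(x*t)) by ring, Real.cos_neg]
  -- main Fubini identity
  have hmainInt : Integrable (fun p : ℝ × ℝ => f p.2 * Real.cos (2*π*(p.2*p.1)))
      ((volume.restrict E).prod volume) := by
    have hAESM : AEStronglyMeasurable (fun p : ℝ × ℝ => f p.2 * Real.cos (2*π*(p.2*p.1)))
        ((volume.restrict E).prod volume) := by
      apply Continuous.aestronglyMeasurable
      exact (hcont.comp continuous_snd).mul (by fun_prop)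
    refine (integrable_prod_iff hAESM).2 ⟨?_, ?_⟩
    · filter_upwards with x
      have h1 : Integrable (fun t : ℝ => Real.cos (2*π*(t*x)) * f t) :=
        hint.bdd_mul (Continuous.aestronglyMeasurable
          (show Continuous fun t : ℝ => Real.cos (2*π*(t*x)) by fun_prop))
          (Filter.Eventually.of_forall fun t => by rw [Real.norm_eq_abs]; exact Real.abs_cos_le_one _)
      exact h1.congr (Filter.Eventually.of_forall fun t => mul_comm _ _)
    · refine Integrable.mono' (g := fun _ : ℝ => (1:ℝ))
        (integrableOn_const hEfin) hAESM.norm.integral_prod_right' ?_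
      filter_upwards with x
      have hnn : 0 ≤ ∫ t : ℝ, ‖f t * Real.cos (2*π*(t*x))‖ :=
        integral_nonneg fun t => norm_nonneg _
      rw [Real.norm_eq_abs, abs_of_nonneg hnn]
      calc ∫ t : ℝ, ‖f t * Real.cos (2*π*(t*x))‖ ≤ ∫ t : ℝ, |f t| := by
            refine integral_mono_of_nonneg (Filter.Eventually.of_forall fun t => norm_nonneg _)
              hint.abs (Filter.Eventually.of_forall fun t => ?_)
            have h2 : |f t * Real.cos (2*π*(t*x))| ≤ |f t| := by
              rw [abs_mul]
              calc |f t| * |Real.cos (2*π*(t*x))| ≤ |f t| * 1 :=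
                    mul_le_mul_of_nonneg_left (Real.abs_cos_le_one _) (abs_nonneg _)
                _ = |f t| := mul_one _
            simpa [Real.norm_eq_abs, abs_mul] using h2
        _ = 1 := hnorm
  have hmain : ∫ x in E, f x = ∫ t : ℝ, f t * K t := by
    calc ∫ x in E, f x = ∫ x in E, ∫ t : ℝ, f t * Real.cos (2*π*(t*x)) :=
          setIntegral_congr_fun hEmeas fun x _ => hrep x
      _ = ∫ t : ℝ, ∫ x in E, f t * Real.cos (2*π*(t*x)) :=
          integral_integral_swap hmainInt
      _ = ∫ t : ℝ, f t * K t := by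
          congr 1
          funext t
          rw [integral_const_mul]
          congr 1
          refine setIntegral_congr_fun hEmeas fun x _ => by rw [mul_comm t x]
  -- split into positive and negative parts
  have hKfp_int : Integrable (fun t : ℝ => fp t * K t) := by
    have := hfp_int.bdd_mul hKcont.aestronglyMeasurable (Filter.Eventually.of_forall hKabs)
    refine this.congr (Filter.Eventually.of_forall fun t => mul_comm _ _)
  have hKfm_int : Integrable (fun t : ℝ => fm t * K t) := by
    have := hfm_int.bdd_mul hKcont.aestronglyMeasurable (Filter.Eventually.of_forall hKabs)
    refine this.congr (Filter.Eventually.of_forall fun t => mul_comm _ _)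
  have hsplit2 : ∫ t : ℝ, f t * K t = (∫ t : ℝ, fp t * K t) - ∫ t : ℝ, fm t * K t := by
    rw [← integral_sub hKfp_int hKfm_int]
    congr 1
    funext t
    rw [← hdiff t]
    ring
  have hfpK : ∫ t : ℝ, fp t * K t ≤ 1/2 * m := by
    calc ∫ t : ℝ, fp t * K t ≤ ∫ t : ℝ, fp t * m := by
          refine integral_mono hKfp_int (hfp_int.mul_const m) (fun t => ?_)
          exact mul_le_mul_of_nonneg_left (hKle t) (hfp0 t)
      _ = 1/2 * m := by rw [integral_mul_const, hintfp]
  -- negative part: reduce to (0, A]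
  have hfmK_Ioc : ∫ t : ℝ, fm t * K t = 2 * ∫ t in Ioc 0 A, fm t * K t := by
    have e1 : ∫ t : ℝ, fm t * K t = 2 * ∫ t in Ioi (0:ℝ), fm t * K t :=
      stmt15_even_integral (fun t => by rw [hfmeven t, hKeven t])
    have e2 : ∫ t in Ioi (0:ℝ), fm t * K t
        = (∫ t in Ioc 0 A, fm t * K t) + ∫ t in Ioi A, fm t * K t := by
      rw [← Ioc_union_Ioi_eq_Ioi hA0,
        setIntegral_union Ioc_disjoint_Ioi_same measurableSet_Ioi
          hKfm_int.integrableOn hKfm_int.integrableOn]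
    have e3 : ∫ t in Ioi A, fm t * K t = 0 := by
      rw [setIntegral_congr_fun measurableSet_Ioi (g := fun _ => (0:ℝ))
        (fun t ht => by
          rw [hfm_supp t (by rw [abs_of_pos (lt_of_le_of_lt hA0 ht)]; exact ht), zero_mul])]
      simp
    rw [e1, e2, e3, add_zero]
  -- first bathtub: lower bound for ∫ fm K on (0,A]
  have hbt1 : ∫ t in Ioc (A - 1/4) A, K t ≤ ∫ t in Ioc 0 A, fm t * K t := by
    refine stmt15_bathtub (by norm_num) hAq hfmc.aestronglyMeasurable.restrict
      (Filter.Eventually.of_forall hfm0) (Filter.Eventually.of_forall hfm1) hfmA hKcont ?_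
    exact hKmono
  -- second bathtub: lower bound for K pointwise
  set L : ℝ → ℝ := fun t => ∫ x in Ioc (A - m) A, Real.cos (2*π*(x*t)) with hL
  have hIocfin : ∀ a b : ℝ, volume (Ioc a b) ≠ ⊤ := by
    intro a b; simp [Real.volume_Ioc]
  have hLcont : Continuous L := stmt15_cont_cosInt _ (hIocfin _ _)
  have hLK : ∀ t ∈ Icc (0:ℝ) A, L t ≤ K t := by
    intro t ht
    have hind : ∫ x in Ioc 0 A, (E.indicator (fun _ => (1:ℝ)) x) = m := by
      rw [setIntegral_indicator hEmeas, inter_eq_self_of_subset_right hEsub,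
        setIntegral_const, smul_eq_mul, mul_one, measureReal_def]
    have hbt := stmt15_bathtub (A := A) (c := m) hm0 (by linarith)
      (g := E.indicator (fun _ => (1:ℝ))) (k := fun x => Real.cos (2*π*(x*t)))
      ((measurable_const.indicator hEmeas).aestronglyMeasurable).restrict
      (Filter.Eventually.of_forall fun x => indicator_nonneg (fun _ _ => zero_le_one) x)
      (Filter.Eventually.of_forall fun x => by
        by_cases hx : x ∈ E <;> simp [Set.indicator, hx])
      hind (by fun_prop) ?_
    · calc L t = ∫ x in Ioc (A - m) A, Real.cos (2*π*(x*t)) := rfl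
        _ ≤ ∫ x in Ioc 0 A, (E.indicator (fun _ => (1:ℝ)) x) * Real.cos (2*π*(x*t)) := hbt
        _ = ∫ x in Ioc 0 A, E.indicator (fun x => Real.cos (2*π*(x*t))) x := by
            refine setIntegral_congr_fun measurableSet_Ioc fun x _ => ?_
            by_cases hx : x ∈ E <;> simp [indicator, hx]
        _ = K t := by
            rw [setIntegral_indicator hEmeas, inter_eq_self_of_subset_right hEsub]
    · intro x hx y hy hxy
      exact hcoskey hx.1 ht.1 hxy le_rfl (hy.2.trans hA2) (ht.2.trans hA2)
  have hKL : ∫ t in Ioc (A - 1/4) A, L t ≤ ∫ t in Ioc (A - 1/4) A, K t := by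
    refine setIntegral_mono_on (hLcont.integrableOn_Ioc) (hKcont.integrableOn_Ioc)
      measurableSet_Ioc (fun t ht => hLK t ⟨le_of_lt (lt_of_le_of_lt (by linarith) ht.1), ht.2⟩)
  -- upper bound for the left-hand side
  have hLHSbound : ∫ x in E, f x ≤ 1/2 * m - 2 * ∫ t in Ioc (A - 1/4) A, L t := by
    rw [hmain, hsplit2]
    have := hfmK_Ioc
    nlinarith [hbt1, hKL, hfpK]
  -- left-hand side as integral over E
  have hLHS : ∫ x in (0:ℝ)..A, max (f x) 0 = ∫ x in E, f x := by
    rw [intervalIntegral.integral_of_le hA0]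
    have s1 : (∫ x in Ioc 0 A ∩ E, fp x) + ∫ x in Ioc 0 A \ E, fp x = ∫ x in Ioc 0 A, fp x :=
      integral_inter_add_diff hEmeas hfp_int.integrableOn
    have s2 : Ioc 0 A ∩ E = E := inter_eq_self_of_subset_right hEsub
    have s3 : ∫ x in Ioc 0 A \ E, fp x = 0 := by
      rw [setIntegral_congr_fun (measurableSet_Ioc.diff hEmeas) (g := fun _ => (0:ℝ))]
      · simp
      · intro x hx
        have hfx : f x ≤ 0 := by
          by_contra hc
          exact hx.2 ⟨hx.1, by simpa using lt_of_not_ge hc⟩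
        exact max_eq_right hfx
    have s4 : ∫ x in E, fp x = ∫ x in E, f x :=
      setIntegral_congr_fun hEmeas fun x hx => max_eq_left (le_of_lt hx.2)
    rw [s2, s4] at s1
    rw [← s1, s3, add_zero]
  -- right-hand side manipulation
  set θ : ℝ := A - 1/4 with hθdef
  have hθ0 : 0 ≤ θ := by simp [hθdef]; linarith
  set G : ℝ → ℝ := fun x => ∫ t in Ioc θ A, Real.cos (2*π*(x*t)) with hG
  have hGcont : Continuous G := by
    have h1 := stmt15_cont_cosInt (Ioc θ A) (hIocfin _ _)
    have : (fun t : ℝ => ∫ x in Ioc θ A, Real.cos (2*π*(x*t))) = G := by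
      funext y
      refine setIntegral_congr_fun measurableSet_Ioc fun u _ => by rw [mul_comm u y]
    rwa [this] at h1
  have hwG : ∀ x ∈ Ioc (1/4:ℝ) A,
      1 / 2 + (Real.sin (2 * π * (A - 1 / 4) * x) - Real.sin (2 * π * A * x)) / (π * x)
        = 1/2 - 2 * G x := by
    intro x hx
    have hxpos : 0 < x := lt_of_lt_of_le (by norm_num) (le_of_lt hx.1)
    have hc : (2*π*x) ≠ 0 := by positivity
    have hGx : G x = (2*π*x)⁻¹ * (Real.sin (2*π*x*A) - Real.sin (2*π*x*θ)) := by
      have e0 : G x = ∫ t in θ..A, Real.cos ((2*π*x) * t) := by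
        rw [intervalIntegral.integral_of_le (by rw [hθdef]; linarith [hAq] : θ ≤ A)]
        refine setIntegral_congr_fun measurableSet_Ioc fun t _ => by ring_nf
      rw [e0, _root_.intervalIntegral.integral_comp_mul_left Real.cos hc, integral_cos]
      simp [smul_eq_mul]
    rw [hGx, hθdef]
    have hπ : π ≠ 0 := Real.pi_ne_zero
    field_simp
    ring_nf
  have hRHS1 : (∫ x in (1/4:ℝ)..A,
      (1 / 2 + (Real.sin (2 * π * (A - 1 / 4) * x) - Real.sin (2 * π * A * x)) / (π * x)))
      = (A - 1/4)/2 - 2 * ∫ x in Ioc (1/4:ℝ) A, G x := by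
    rw [intervalIntegral.integral_of_le hAq]
    rw [setIntegral_congr_fun measurableSet_Ioc hwG]
    rw [integral_sub (integrableOn_const (C := (1/2:ℝ)) (hIocfin _ _))
      ((hGcont.integrableOn_Ioc).const_mul 2), integral_const_mul, setIntegral_const, smul_eq_mul]
    rw [measureReal_def, Real.volume_Ioc, ENNReal.toReal_ofReal (by linarith : (0:ℝ) ≤ A - 1/4)]
    ring
  -- Fubini on the rectangle
  set M : ℝ → ℝ := fun t => ∫ x in Ioc (1/4:ℝ) A, Real.cos (2*π*(x*t)) with hM
  have hMcont : Continuous M := stmt15_cont_cosInt _ (hIocfin _ _)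
  haveI i1 : IsFiniteMeasure (volume.restrict (Ioc (1/4:ℝ) A)) :=
    ⟨by rw [Measure.restrict_apply_univ]; exact (hIocfin _ _).lt_top⟩
  haveI i2 : IsFiniteMeasure (volume.restrict (Ioc θ A)) :=
    ⟨by rw [Measure.restrict_apply_univ]; exact (hIocfin _ _).lt_top⟩
  have hswap2 : ∫ x in Ioc (1/4:ℝ) A, G x = ∫ t in Ioc θ A, M t := by
    have hprodInt : Integrable (fun p : ℝ × ℝ => Real.cos (2*π*(p.1*p.2)))
        ((volume.restrict (Ioc (1/4:ℝ) A)).prod (volume.restrict (Ioc θ A))) := by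
      refine Integrable.mono' (integrable_const 1)
        (Continuous.aestronglyMeasurable (by fun_prop)) ?_
      filter_upwards with p
      rw [Real.norm_eq_abs]
      exact Real.abs_cos_le_one _
    exact integral_integral_swap hprodInt
  -- pointwise comparison of M and L
  have hAm14 : (1:ℝ)/4 ≤ A - m := by linarith
  have hML : ∀ t ∈ Ioc θ A, M t - L t ≤ (A - m) - 1/4 := by
    intro t ht
    have hsplitM : M t = (∫ x in Ioc (1/4:ℝ) (A-m), Real.cos (2*π*(x*t))) + L t := by
      rw [hM, hL]
      rw [← setIntegral_union (Ioc_disjoint_Ioc_of_le le_rfl) measurableSet_Ioc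
        (hcosI _ (hIocfin _ _) t) (hcosI _ (hIocfin _ _) t),
        Ioc_union_Ioc_eq_Ioc hAm14 (by linarith)]
    have hb : ∫ x in Ioc (1/4:ℝ) (A-m), Real.cos (2*π*(x*t)) ≤ (A - m) - 1/4 := by
      calc ∫ x in Ioc (1/4:ℝ) (A-m), Real.cos (2*π*(x*t))
          ≤ ∫ x in Ioc (1/4:ℝ) (A-m), (1:ℝ) :=
            setIntegral_mono_on (hcosI _ (hIocfin _ _) t)
              (integrableOn_const (hIocfin _ _)) measurableSet_Ioc
              (fun x _ => Real.cos_le_one _)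
        _ = (A - m) - 1/4 := by
            rw [setIntegral_const, smul_eq_mul, mul_one, measureReal_def, Real.volume_Ioc,
              ENNReal.toReal_ofReal (by linarith : (0:ℝ) ≤ A - m - 1/4)]
    linarith [hsplitM, hb]
  have hMLint : ∫ t in Ioc θ A, (M t - L t) ≤ 1/4 * ((A - m) - 1/4) := by
    calc ∫ t in Ioc θ A, (M t - L t) ≤ ∫ t in Ioc θ A, ((A - m) - 1/4) :=
          setIntegral_mono_on ((hMcont.sub hLcont).integrableOn_Ioc)
            (integrableOn_const (hIocfin _ _)) measurableSet_Ioc hML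
      _ = 1/4 * ((A - m) - 1/4) := by
          rw [setIntegral_const, smul_eq_mul, measureReal_def, Real.volume_Ioc,
            show A - θ = 1/4 by rw [hθdef]; ring, ENNReal.toReal_ofReal (by norm_num)]
  have hMLsub : ∫ t in Ioc θ A, (M t - L t)
      = (∫ t in Ioc θ A, M t) - ∫ t in Ioc θ A, L t :=
    integral_sub (hMcont.integrableOn_Ioc) (hLcont.integrableOn_Ioc)
  -- final assembly
  rw [hLHS, hRHS1, hswap2]
  have hθeq : Ioc (A - 1/4) A = Ioc θ A := by rw [hθdef]
  rw [hθeq] at hLHSbound hKL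
  linarith [hLHSbound, hMLint, hMLsub]
end

section
/- Let f: ℝ → ℝ be admissible, i.e. f ∈ L¹(ℝ) ∩ L²(ℝ), ‖f‖_{L¹} = 1, f is even and real-valued, f(0) = 0, and f = f̂. Then for every A > 0, ∫₀^A f(x) dx = ∫_{−∞}^{∞} f(y)·( sin(2πAy)/(2πy) + (13/400)·(8πy² − 2)·e^{−πy²} ) dy. -/
open MeasureTheory Real
open scoped FourierTransform

open Complex in
private lemma mult_formula16 {u g : ℝ → ℂ} (hu : Integrable u) (hg : Integrable g) :
    ∫ ξ : ℝ, 𝓕 u ξ * g ξ = ∫ x : ℝ, u x * 𝓕 g x := by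
  have hflip : (innerₗ ℝ).flip = innerₗ ℝ := by
    apply LinearMap.ext; intro x; apply LinearMap.ext; intro y
    simp [real_inner_comm]
  have := VectorFourier.integral_fourierIntegral_smul_eq_flip (L := innerₗ ℝ)
    (μ := volume) (ν := volume) Real.continuous_fourierChar continuous_inner hu hg
  rw [hflip] at this
  simp only [smul_eq_mul] at this
  exact this

open Complex in
private noncomputable def h16 : ℝ → ℂ := fun x => Complex.exp (-(π:ℂ) * x ^ 2)

open Complex in
private noncomputable def w16 : ℝ → ℂ := fun x => ((-2*π*I*x)^2 : ℂ) • h16 x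

open Complex in
private lemma habs16 (x : ℝ) : ‖h16 x‖ = Real.exp (-π * x ^ 2) := by
  unfold h16
  rw [show -(π:ℂ) * (x:ℂ) ^ 2 = ((-π * x ^ 2 : ℝ) : ℂ) by push_cast; ring,
    ← Complex.ofReal_exp, Complex.norm_real, Real.norm_eq_abs, abs_of_pos (Real.exp_pos _)]

private lemma pow_le_aux16 (x : ℝ) {n : ℕ} (hn : n ≤ 2) : |x| ^ n ≤ 1 + x ^ 2 := by
  rcases le_total |x| 1 with hx | hx
  · calc |x| ^ n ≤ 1 ^ n := pow_le_pow_left₀ (abs_nonneg x) hx n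
      _ = 1 := one_pow n
      _ ≤ 1 + x ^ 2 := by nlinarith [sq_nonneg x]
  · calc |x| ^ n ≤ |x| ^ 2 := pow_le_pow_right₀ hx hn
      _ = x ^ 2 := sq_abs x
      _ ≤ 1 + x ^ 2 := by linarith

private lemma exp_bound16 (x : ℝ) : (1 + x ^ 2) * Real.exp (-π * x ^ 2) ≤
    (1 + 2 / π) * Real.exp (-(π / 2) * x ^ 2) := by
  have hπ := Real.pi_pos
  have h1 : Real.exp (-π * x ^ 2) = Real.exp (-(π/2) * x^2) * Real.exp (-(π/2) * x^2) := by
    rw [← Real.exp_add]; ring_nf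
  have e1 : Real.exp (-(π/2) * x ^ 2) ≤ 1 := Real.exp_le_one_iff.2 (by nlinarith [sq_nonneg x])
  have h3 : (π/2) * x ^ 2 ≤ Real.exp ((π/2) * x ^ 2) := by
    nlinarith [Real.add_one_le_exp ((π/2) * x ^ 2)]
  have h2 : x ^ 2 * Real.exp (-(π/2) * x ^ 2) ≤ 2 / π := by
    rw [show -(π/2) * x ^ 2 = -((π/2) * x ^ 2) by ring, Real.exp_neg]
    rw [mul_inv_le_iff₀ (Real.exp_pos _), div_mul_eq_mul_div, le_div_iff₀ hπ]
    nlinarith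
  have ep := (Real.exp_pos (-(π/2) * x ^ 2)).le
  rw [h1]
  nlinarith [mul_le_mul_of_nonneg_right h2 ep, mul_le_mul_of_nonneg_right e1 ep]

private lemma hn_int16 {n : ℕ} (hn : n ≤ 2) : Integrable (fun x : ℝ => x ^ n • h16 x) := by
  refine Integrable.mono' ((integrable_exp_neg_mul_sq (by positivity : (0:ℝ) < π/2)).const_mul
    (1 + 2/π)) ?_ ?_
  · exact ((continuous_pow n).smul (by unfold h16; continuity)).aestronglyMeasurable
  · filter_upwards with x
    rw [norm_smul, habs16]
    calc ‖x ^ n‖ * Real.exp (-π * x ^ 2) = |x| ^ n * Real.exp (-π * x ^ 2) := by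
          rw [Real.norm_eq_abs, _root_.abs_pow]
      _ ≤ (1 + x ^ 2) * Real.exp (-π * x ^ 2) :=
          mul_le_mul_of_nonneg_right (pow_le_aux16 x hn) (Real.exp_pos _).le
      _ ≤ (1 + 2 / π) * Real.exp (-(π / 2) * x ^ 2) := exp_bound16 x

open Complex in
private lemma fourier_h16 : 𝓕 h16 = h16 := by
  have H := fourier_gaussian_pi (b := 1) (by norm_num)
  have e1 : (fun x : ℝ => Complex.exp (-(π:ℂ) * 1 * x ^ 2)) = h16 := by
    unfold h16; funext x; ring_nf
  rw [e1] at H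
  rw [H]
  unfold h16; funext t
  norm_num

open Complex in
private lemma hasDerivAt_h16 (x : ℝ) : HasDerivAt h16 ((-(2*π*x) : ℂ) * h16 x) x := by
  have hc : HasDerivAt (fun z : ℂ => Complex.exp (-(π:ℂ) * z ^ 2))
      ((-(π:ℂ) * (2 * x)) * Complex.exp (-(π:ℂ) * (x:ℂ) ^ 2)) (x:ℂ) := by
    have : HasDerivAt (fun z : ℂ => -(π:ℂ) * z ^ 2) (-(π:ℂ) * (2 * x)) (x:ℂ) := by
      simpa using ((hasDerivAt_pow 2 (x:ℂ)).const_mul (-(π:ℂ)))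
    simpa [mul_comm] using this.cexp
  have := hc.comp_ofReal
  unfold h16
  convert this using 1
  push_cast; ring

open Complex in
private lemma deriv2_h16 : deriv (deriv h16) =
    fun x : ℝ => ((4*π^2*x^2 - 2*π : ℂ)) * h16 x := by
  have hd : deriv h16 = fun x : ℝ => (-(2*π*x) : ℂ) * h16 x := by
    funext x; exact (hasDerivAt_h16 x).deriv
  rw [hd]
  funext x
  have h1 : HasDerivAt (fun x : ℝ => (-(2*π*x) : ℂ) * h16 x)
      ((-(2*π) : ℂ) * h16 x + (-(2*π*x) : ℂ) * ((-(2*π*x) : ℂ) * h16 x)) x := by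
    have ha : HasDerivAt (fun x : ℝ => (-(2*π*x) : ℂ)) (-(2*π) : ℂ) x := by
      have : HasDerivAt (fun x : ℝ => (-(2*π*x) : ℝ)) (-(2*π) : ℝ) x := by
        simpa using ((hasDerivAt_id x).const_mul (-(2*π))).congr_deriv (by ring)
      exact this.ofReal_comp.congr_deriv (by push_cast; ring)
        |>.congr_of_eventuallyEq (by filter_upwards with y; push_cast; ring)
    exact ha.mul (hasDerivAt_h16 x)
  rw [h1.deriv]
  unfold h16; ring

open Complex in
private lemma iteratedDeriv2_h16 :
    iteratedDeriv 2 h16 = fun x : ℝ => ((4*π^2*x^2 - 2*π : ℂ)) * h16 x := by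
  rw [iteratedDeriv_succ, iteratedDeriv_one, deriv2_h16]

open Complex in
private lemma w_eq16 : w16 = fun x : ℝ => ((-2*π*I)^2 : ℂ) * (x ^ 2 • h16 x) := by
  funext x; unfold w16
  rw [smul_eq_mul, Complex.real_smul]
  push_cast; ring

private lemma w_int16 : Integrable w16 := by
  rw [w_eq16]; exact (hn_int16 le_rfl).const_mul _

open Complex in
private lemma fourier_w16 : 𝓕 w16 = fun x : ℝ => ((4*π^2*x^2 - 2*π : ℂ)) * h16 x := by
  have E := Real.iteratedDeriv_fourier (f := h16) (N := 2) (n := 2)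
    (fun n hn => hn_int16 (by exact_mod_cast hn)) le_rfl
  rw [fourier_h16, iteratedDeriv2_h16] at E
  unfold w16
  exact E.symm

open Complex in
private lemma int_char_mul16 {u : ℝ → ℂ} (hu : Integrable u) (ξ : ℝ) :
    Integrable fun x : ℝ => Complex.exp (↑(-2*π*x*ξ) * I) * u x :=
  hu.bdd_mul (Continuous.aestronglyMeasurable (by fun_prop))
    (Filter.Eventually.of_forall (fun x => (by simp [Complex.norm_exp] : ‖_‖ ≤ (1:ℝ))))

open Complex in
private lemma fourier_add_mul16 (a b : ℂ) {u v : ℝ → ℂ} (hu : Integrable u)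
    (hv : Integrable v) (ξ : ℝ) :
    𝓕 (fun x => a * u x + b * v x) ξ = a * 𝓕 u ξ + b * 𝓕 v ξ := by
  simp only [Real.fourier_real_eq_integral_exp_smul, smul_eq_mul]
  rw [← integral_const_mul, ← integral_const_mul,
    ← integral_add ((int_char_mul16 hu ξ).const_mul a) ((int_char_mul16 hv ξ).const_mul b)]
  congr 1; funext x; ring

open Complex in
private noncomputable def gc16 : ℝ → ℂ := fun x => ((8*π*x^2 - 2 : ℂ)) * h16 x

open Complex in
private lemma gc_eq16 : gc16 = fun x => (-2/π : ℂ) * w16 x + (-2 : ℂ) * h16 x := by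
  funext x; unfold gc16 w16
  rw [smul_eq_mul]
  have hπ : (π:ℂ) ≠ 0 := by exact_mod_cast Real.pi_ne_zero
  field_simp
  ring_nf
  rw [Complex.I_sq]
  ring

private lemma h_int16 : Integrable h16 := by simpa using hn_int16 (Nat.zero_le 2)

private lemma gc_int16 : Integrable gc16 := by
  rw [gc_eq16]
  exact (w_int16.const_mul _).add (h_int16.const_mul _)

open Complex in
private lemma fourier_gc16 (ξ : ℝ) : 𝓕 gc16 ξ = -gc16 ξ := by
  conv_lhs => rw [gc_eq16]
  rw [fourier_add_mul16 _ _ w_int16 h_int16, fourier_w16, fourier_h16]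
  unfold gc16
  have hπ : (π:ℂ) ≠ 0 := by exact_mod_cast Real.pi_ne_zero
  field_simp
  ring

open Complex in
private lemma cexp_antideriv16 {c : ℂ} (hc : c ≠ 0) (a b : ℝ) :
    ∫ v in a..b, Complex.exp (c * v) = (Complex.exp (c * b) - Complex.exp (c * a)) / c := by
  have H : ∀ v : ℝ, HasDerivAt (fun y : ℝ => Complex.exp (c * y) / c) (Complex.exp (c * v)) v := by
    intro v
    have h1 : HasDerivAt (fun y : ℝ => c * (y:ℂ)) c v := by
      simpa using (hasDerivAt_id (v:ℂ)).const_mul c |>.comp_ofReal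
    have := h1.cexp.div_const c
    simpa [mul_comm, mul_div_assoc, mul_div_cancel_left₀ _ hc] using this
  rw [intervalIntegral.integral_eq_sub_of_hasDerivAt (fun v _ => H v) ?_]
  · field_simp
  · apply Continuous.intervalIntegrable; fun_prop

open Complex in
private lemma kernel_re16 {x : ℝ} (hx : x ≠ 0) (A : ℝ) :
    (∫ v in (0:ℝ)..A, Complex.exp (↑(-2 * π * v * x) * I)).re =
      Real.sin (2 * π * A * x) / (2 * π * x) := by
  have hc : ((-2 * π * x : ℝ) : ℂ) * I ≠ 0 := by
    simp [Complex.ext_iff, Real.pi_ne_zero, hx]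
  have e1 : (fun v : ℝ => Complex.exp (↑(-2 * π * v * x) * I)) =
      fun v : ℝ => Complex.exp ((((-2 * π * x : ℝ) : ℂ) * I) * v) := by
    funext v; congr 1; push_cast; ring
  rw [e1, cexp_antideriv16 hc]
  simp only [Complex.ofReal_zero, mul_zero, Complex.exp_zero]
  rw [div_eq_mul_inv, mul_inv, Complex.inv_I,
    show ((((-2 * π * x : ℝ)) : ℂ))⁻¹ = ((((-2 * π * x)⁻¹ : ℝ)) : ℂ) by push_cast; ring]
  simp [Complex.sub_re, Complex.sub_im, Complex.mul_re, Complex.mul_im,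
    Complex.exp_ofReal_mul_I_re, Complex.exp_ofReal_mul_I_im]
  rw [show -(2 * (π:ℂ) * x * I * A) = ((-(2*π*x*A) : ℝ):ℂ) * I by push_cast; ring,
    Complex.exp_ofReal_mul_I_im, Real.sin_neg,
    show 2*π*A*x = 2*π*x*A by ring]
  have hπ := Real.pi_ne_zero
  field_simp

theorem stmt16 (f : ℝ → ℝ) (hint : Integrable f) (hL2 : MemLp f 2 volume)
    (hnorm : ∫ x : ℝ, |f x| = 1) (heven : ∀ x, f (-x) = f x) (hf0 : f 0 = 0)
    (hself : ∀ x : ℝ, 𝓕 (fun t : ℝ => (f t : ℂ)) x = (f x : ℂ)) :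
    ∀ A : ℝ, 0 < A →
      (∫ x in (0:ℝ)..A, f x) =
        ∫ y : ℝ, f y * (Real.sin (2 * π * A * y) / (2 * π * y) +
          13 / 400 * (8 * π * y ^ 2 - 2) * Real.exp (-π * y ^ 2)) := by
  intro A hA
  have hπ := Real.pi_pos
  have hfc : Integrable (fun t : ℝ => (f t : ℂ)) := hint.ofReal
  -- gc16 is the complexification of the real Gaussian factor
  have gc_real : ∀ y : ℝ, gc16 y = (((8*π*y^2 - 2) * Real.exp (-π*y^2) : ℝ) : ℂ) := by
    intro y
    unfold gc16 h16
    rw [show -(π:ℂ) * (y:ℂ) ^ 2 = ((-π * y ^ 2 : ℝ) : ℂ) by push_cast; ring,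
      ← Complex.ofReal_exp]
    push_cast; ring
  -- Part 2 : the Gaussian term integrates to zero
  have part2 : ∫ y : ℝ, f y * ((8*π*y^2 - 2) * Real.exp (-π*y^2)) = 0 := by
    have M := mult_formula16 hfc gc_int16
    have l1 : (∫ ξ : ℝ, 𝓕 (fun t : ℝ => (f t : ℂ)) ξ * gc16 ξ)
        = ∫ ξ : ℝ, (f ξ : ℂ) * gc16 ξ := by
      congr 1; funext ξ; rw [hself ξ]
    have l2 : (∫ x : ℝ, (f x : ℂ) * 𝓕 gc16 x) = -∫ x : ℝ, (f x : ℂ) * gc16 x := by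
      rw [← integral_neg]
      congr 1; funext x; rw [fourier_gc16 x]; ring
    rw [l1, l2] at M
    have hz : (∫ x : ℝ, (f x : ℂ) * gc16 x) = 0 := by linear_combination (M : _) / 2
    have : (∫ x : ℝ, (((f x * ((8*π*x^2 - 2) * Real.exp (-π*x^2))) : ℝ) : ℂ)) = 0 := by
      rw [← hz]; congr 1; funext x; rw [gc_real x]; push_cast; ring
    rw [show (fun x : ℝ => (((f x * ((8*π*x^2 - 2) * Real.exp (-π*x^2))) : ℝ) : ℂ)) =
        (fun x : ℝ => ((RCLike.ofReal (K := ℂ)) (f x * ((8*π*x^2 - 2) * Real.exp (-π*x^2)))))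
      from rfl, integral_ofReal] at this
    exact RCLike.ofReal_eq_zero.mp this
  -- the indicator function of (0, A]
  set g1 : ℝ → ℂ := Set.indicator (Set.Ioc (0:ℝ) A) (fun _ => (1:ℂ)) with hg1
  have g1int : Integrable g1 := by
    rw [hg1, integrable_indicator_iff measurableSet_Ioc]
    exact integrableOn_const measure_Ioc_lt_top.ne
  -- Fourier transform of g1
  have Fg1 : ∀ x : ℝ, 𝓕 g1 x = ∫ v in (0:ℝ)..A, Complex.exp (↑(-2 * π * v * x) * Complex.I) := by
    intro x
    rw [Real.fourier_real_eq_integral_exp_smul]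
    simp only [smul_eq_mul]
    have : (fun v : ℝ => Complex.exp (↑(-2*π*v*x) * Complex.I) * g1 v) =
        Set.indicator (Set.Ioc (0:ℝ) A) (fun v => Complex.exp (↑(-2*π*v*x) * Complex.I)) := by
      funext v
      by_cases hv : v ∈ Set.Ioc (0:ℝ) A <;>
        simp [hg1, hv, Set.indicator_of_mem, Set.indicator_of_notMem]
    rw [this, integral_indicator measurableSet_Ioc, ← intervalIntegral.integral_of_le hA.le]
  -- multiplication formula with the indicator
  have M := mult_formula16 hfc g1int
  have l1 : (∫ ξ : ℝ, 𝓕 (fun t : ℝ => (f t : ℂ)) ξ * g1 ξ) = ((∫ x in (0:ℝ)..A, f x : ℝ) : ℂ) := by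
    have e1 : (fun ξ : ℝ => 𝓕 (fun t : ℝ => (f t : ℂ)) ξ * g1 ξ) =
        Set.indicator (Set.Ioc (0:ℝ) A) (fun ξ => ((f ξ : ℂ))) := by
      funext ξ
      rw [hself ξ]
      by_cases hξ : ξ ∈ Set.Ioc (0:ℝ) A <;>
        simp [hg1, hξ, Set.indicator_of_mem, Set.indicator_of_notMem]
    rw [e1, integral_indicator measurableSet_Ioc, ← intervalIntegral.integral_of_le hA.le,
      intervalIntegral.integral_ofReal]
  rw [l1] at M
  -- integrability of the RHS of the multiplication formula
  have contF : Continuous (𝓕 g1) :=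
    VectorFourier.fourierIntegral_continuous Real.continuous_fourierChar continuous_inner g1int
  have bddF : ∃ C, ∀ x : ℝ, ‖𝓕 g1 x‖ ≤ C :=
    ⟨∫ v : ℝ, ‖g1 v‖, fun x =>
      VectorFourier.norm_fourierIntegral_le_integral_norm _ _ _ _ _⟩
  have hR : Integrable (fun x : ℝ => (f x : ℂ) * 𝓕 g1 x) := by
    have := hfc.bdd_mul contF.aestronglyMeasurable (Filter.Eventually.of_forall bddF.choose_spec)
    exact this.congr (Filter.Eventually.of_forall fun x => mul_comm _ _)
  -- take real parts
  have hre : (∫ x in (0:ℝ)..A, f x) = ∫ x : ℝ, ((f x : ℂ) * 𝓕 g1 x).re := by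
    have hRe := integral_re hR
    simp only [RCLike.re_to_complex] at hRe
    rw [hRe, ← M, Complex.ofReal_re]
  -- identify the real part with the sine kernel a.e.
  have hae : ∀ᵐ x : ℝ, ((f x : ℂ) * 𝓕 g1 x).re =
      f x * (Real.sin (2 * π * A * x) / (2 * π * x)) := by
    have h0 : ∀ᵐ x : ℝ, x ≠ 0 := by
      rw [MeasureTheory.ae_iff]
      convert measure_singleton (μ := (volume : Measure ℝ)) 0 using 2
      ext x; simp
    filter_upwards [h0] with x hx
    rw [Fg1 x, Complex.re_ofReal_mul, kernel_re16 hx A]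
  have part1 : (∫ x in (0:ℝ)..A, f x) =
      ∫ x : ℝ, f x * (Real.sin (2 * π * A * x) / (2 * π * x)) := by
    rw [hre]
    exact integral_congr_ae hae
  -- integrability of the two summands
  have I1 : Integrable (fun y : ℝ => f y * (Real.sin (2 * π * A * y) / (2 * π * y))) := by
    have hb : ∃ C, ∀ y : ℝ, ‖Real.sin (2 * π * A * y) / (2 * π * y)‖ ≤ C := by
      refine ⟨A, fun y => ?_⟩
      rw [Real.norm_eq_abs, abs_div]
      rcases eq_or_ne y 0 with hy | hy
      · simp [hy, hA.le]
      · rw [div_le_iff₀ (by positivity : (0:ℝ) < |2 * π * y|)]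
        calc |Real.sin (2 * π * A * y)| ≤ |2 * π * A * y| := Real.abs_sin_le_abs
          _ = A * |2 * π * y| := by
              rw [show 2*π*A*y = A*(2*π*y) by ring, abs_mul, abs_of_pos hA]
    have := hint.bdd_mul (f := fun y : ℝ => Real.sin (2 * π * A * y) / (2 * π * y))
      (Measurable.aestronglyMeasurable
        ((Real.measurable_sin.comp (measurable_id'.const_mul (2*π*A))).div
          (measurable_id'.const_mul (2*π)))) (Filter.Eventually.of_forall hb.choose_spec)
    exact this.congr (Filter.Eventually.of_forall fun y => mul_comm _ _)
  have I2 : Integrable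
      (fun y : ℝ => f y * (13 / 400 * (8 * π * y ^ 2 - 2) * Real.exp (-π * y ^ 2))) := by
    have hb : ∃ C, ∀ y : ℝ, ‖13 / 400 * (8 * π * y ^ 2 - 2) * Real.exp (-π * y ^ 2)‖ ≤ C := by
      refine ⟨10, fun y => ?_⟩
      have e1 : Real.exp (-π * y ^ 2) ≤ 1 :=
        Real.exp_le_one_iff.2 (by nlinarith [sq_nonneg y])
      have h3 : π * y ^ 2 ≤ Real.exp (π * y ^ 2) := by
        nlinarith [Real.add_one_le_exp (π * y ^ 2)]
      have h2 : y ^ 2 * Real.exp (-π * y ^ 2) ≤ 1 / π := by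
        rw [show -π * y ^ 2 = -(π * y ^ 2) by ring, Real.exp_neg]
        rw [mul_inv_le_iff₀ (Real.exp_pos _), div_mul_eq_mul_div, le_div_iff₀ hπ]
        nlinarith
      have ep := (Real.exp_pos (-π * y ^ 2)).le
      rw [Real.norm_eq_abs, abs_mul, abs_mul]
      have habs2 : |8 * π * y ^ 2 - 2| ≤ 8 * π * y ^ 2 + 2 :=
        abs_le.2 ⟨by nlinarith [sq_nonneg y], by nlinarith [sq_nonneg y]⟩
      rw [abs_of_pos (Real.exp_pos _), show |((13:ℝ)/400)| = 13/400 by norm_num]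
      have hcanc : (8*π)*(1/π) = 8 := by field_simp
      nlinarith [mul_le_mul_of_nonneg_right habs2 ep,
        mul_le_mul_of_nonneg_left h2 (by positivity : (0:ℝ) ≤ 8*π), e1, ep]
    have := hint.bdd_mul
      (f := fun y : ℝ => 13 / 400 * (8 * π * y ^ 2 - 2) * Real.exp (-π * y ^ 2))
      (Continuous.aestronglyMeasurable
        ((continuous_const.mul ((continuous_const.mul (continuous_pow 2)).sub
          continuous_const)).mul
          (Real.continuous_exp.comp (continuous_const.mul (continuous_pow 2))))) (Filter.Eventually.of_forall hb.choose_spec)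
    exact this.congr (Filter.Eventually.of_forall fun y => mul_comm _ _)
  -- put everything together
  have split : (∫ y : ℝ, f y * (Real.sin (2 * π * A * y) / (2 * π * y) +
        13 / 400 * (8 * π * y ^ 2 - 2) * Real.exp (-π * y ^ 2))) =
      (∫ y : ℝ, f y * (Real.sin (2 * π * A * y) / (2 * π * y))) +
      ∫ y : ℝ, f y * (13 / 400 * (8 * π * y ^ 2 - 2) * Real.exp (-π * y ^ 2)) := by
    rw [← integral_add I1 I2]
    congr 1; funext y; ring
  have second : (∫ y : ℝ, f y * (13 / 400 * (8 * π * y ^ 2 - 2) * Real.exp (-π * y ^ 2))) = 0 := by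
    have : (fun y : ℝ => f y * (13 / 400 * (8 * π * y ^ 2 - 2) * Real.exp (-π * y ^ 2))) =
        fun y : ℝ => (13 / 400) * (f y * ((8*π*y^2 - 2) * Real.exp (-π*y^2))) := by
      funext y; ring
    rw [this, integral_const_mul, part2, mul_zero]
  rw [split, second, add_zero, ← part1]
end
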